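/- arXiv:1705.02172 — 7 statements merged into one kernel-verified Lean document; each statement's English description precedes it below -/
import Mathlib

section
/- Let h be a real number with 0 < h < π/2 and let v_1, v_2, v_3 be unit vectors in ℝ³. Suppose that the three congruent zones Z(v_1,h), Z(v_2,h), Z(v_3,h) cover the unit sphere S², i.e. S² = Z(v_1,h) ∪ Z(v_2,h) ∪ Z(v_3,h), and that every point of S² belongs to the interior of at most two of these zones. Then the three zones are pairwise orthogonal, i.e. ⟨v_i, v_j⟩ = 0 for all i ≠ j. -/
open Metric Real FiniteDimensional
open scoped RealInnerProductSpace

local notation "E" => EuclideanSpace ℝ (Fin 3)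

lemma exists_unit_orth (w1 w2 : E) : ∃ x : E, ‖x‖ = 1 ∧ ⟪x, w1⟫ = 0 ∧ ⟪x, w2⟫ = 0 := by
  classical
  set K : Submodule ℝ E := Submodule.span ℝ ({w1, w2} : Set E) with hK
  have hcard : Module.finrank ℝ K ≤ 2 := by
    refine le_trans (finrank_span_le_card _) ?_
    simp [Set.toFinset_insert]
    exact le_trans (Finset.card_insert_le _ _) (by simp)
  have hsum : Module.finrank ℝ K + Module.finrank ℝ Kᗮ = 3 := by
    rw [Submodule.finrank_add_finrank_orthogonal]
    simp
  have hpos : 0 < Module.finrank ℝ Kᗮ := by omega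
  have hne : Kᗮ ≠ ⊥ := by
    intro hbot
    rw [hbot] at hpos
    simp at hpos
  obtain ⟨x, hxK, hx0⟩ := Submodule.exists_mem_ne_zero_of_ne_bot hne
  refine ⟨‖x‖⁻¹ • x, ?_, ?_, ?_⟩
  · rw [norm_smul]
    simp [norm_ne_zero_iff.2 hx0]
  · rw [real_inner_smul_left, real_inner_comm]
    rw [Submodule.mem_orthogonal] at hxK
    rw [hxK w1 (Submodule.subset_span (by simp))]
    ring
  · rw [real_inner_smul_left, real_inner_comm]
    rw [Submodule.mem_orthogonal] at hxK
    rw [hxK w2 (Submodule.subset_span (by simp))]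
    ring

lemma bessel2 (x y z : E) (hx : ‖x‖ = 1) (hy : ‖y‖ = 1) (hz : ‖z‖ = 1)
    (hxy : ⟪x, y⟫ = 0) : ⟪x, z⟫ ^ 2 + ⟪y, z⟫ ^ 2 ≤ 1 := by
  have h0 : (0:ℝ) ≤ ⟪z - ⟪x,z⟫ • x - ⟪y,z⟫ • y, z - ⟪x,z⟫ • x - ⟪y,z⟫ • y⟫ :=
    real_inner_self_nonneg
  have hxx : ⟪x, x⟫ = 1 := by rw [real_inner_self_eq_norm_sq, hx]; norm_num
  have hyy : ⟪y, y⟫ = 1 := by rw [real_inner_self_eq_norm_sq, hy]; norm_num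
  have hzz : ⟪z, z⟫ = 1 := by rw [real_inner_self_eq_norm_sq, hz]; norm_num
  have hyx : ⟪y, x⟫ = 0 := by rw [real_inner_comm]; exact hxy
  have hzx : ⟪z, x⟫ = ⟪x, z⟫ := real_inner_comm _ _
  have hzy : ⟪z, y⟫ = ⟪y, z⟫ := real_inner_comm _ _
  simp only [inner_sub_left, inner_sub_right, real_inner_smul_left, real_inner_smul_right,
    hxx, hyy, hzz, hxy, hyx, hzx, hzy] at h0
  nlinarith [h0]

set_option maxHeartbeats 1000000 in
/-- If three congruent zones of half-width `h` cover `S²` and every point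
of `S²` lies in the interior of at most two of them, then the zones are pairwise orthogonal. -/
theorem three_zones_cover_S2_pairwise_orthogonal (h : ℝ) (hh0 : 0 < h) (hhπ : h < π / 2)
    (v : Fin 3 → EuclideanSpace ℝ (Fin 3)) (hv : ∀ i, ‖v i‖ = 1)
    (hcover : sphere (0 : EuclideanSpace ℝ (Fin 3)) 1 =
      ⋃ i, {x ∈ sphere (0 : EuclideanSpace ℝ (Fin 3)) 1 |
        |(inner ℝ x (v i) : ℝ)| ≤ Real.sin h})
    (hmult : ∀ x ∈ sphere (0 : EuclideanSpace ℝ (Fin 3)) 1,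
      {i : Fin 3 | |(inner ℝ x (v i) : ℝ)| < Real.sin h}.ncard ≤ 2) :
    ∀ i j, i ≠ j → (inner ℝ (v i) (v j) : ℝ) = 0 := by
  have hs : 0 < Real.sin h := Real.sin_pos_of_pos_of_lt_pi hh0 (by linarith [pi_pos])
  set s := Real.sin h with hsdef
  have hmem : ∀ x : E, ‖x‖ = 1 → x ∈ sphere (0:E) 1 := by
    intro x hx
    rwa [mem_sphere_zero_iff_norm]
  have hmult' : ∀ x : E, ‖x‖ = 1 → ¬ (∀ i, |⟪x, v i⟫| < s) := by
    intro x hx hall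
    have h2 := hmult x (hmem x hx)
    have huniv : {i : Fin 3 | |⟪x, v i⟫| < s} = Set.univ := Set.eq_univ_of_forall hall
    rw [huniv] at h2
    rw [Set.ncard_univ] at h2
    simp at h2
  have hcov' : ∀ x : E, ‖x‖ = 1 → ∃ i, |⟪x, v i⟫| ≤ s := by
    intro x hx
    have hx' := hmem x hx
    rw [hcover, Set.mem_iUnion] at hx'
    obtain ⟨i, hi⟩ := hx'
    exact ⟨i, hi.2⟩
  have step1 : ∀ (i j k : Fin 3), i ≠ j → i ≠ k → j ≠ k →
      ∀ x : E, ‖x‖ = 1 → ⟪x, v i⟫ = 0 → ⟪x, v j⟫ = 0 → s ≤ |⟪x, v k⟫| := by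
    intro i j k hij hik hjk x hx hxi hxj
    by_contra hlt
    push_neg at hlt
    apply hmult' x hx
    intro l
    have hij' : (i:ℕ) ≠ (j:ℕ) := fun hh => hij (Fin.ext hh)
    have hik' : (i:ℕ) ≠ (k:ℕ) := fun hh => hik (Fin.ext hh)
    have hjk' : (j:ℕ) ≠ (k:ℕ) := fun hh => hjk (Fin.ext hh)
    have hl : l = i ∨ l = j ∨ l = k := by
      have h1 := l.isLt; have h2 := i.isLt; have h3 := j.isLt; have h4 := k.isLt
      have : (l:ℕ) = (i:ℕ) ∨ (l:ℕ) = (j:ℕ) ∨ (l:ℕ) = (k:ℕ) := by omega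
      rcases this with hh | hh | hh
      · exact Or.inl (Fin.ext hh)
      · exact Or.inr (Or.inl (Fin.ext hh))
      · exact Or.inr (Or.inr (Fin.ext hh))
    rcases hl with rfl | rfl | rfl
    · rw [hxi]; simpa using hs
    · rw [hxj]; simpa using hs
    · exact hlt
  -- inner product abbreviations
  set a := ⟪v 0, v 1⟫ with hadef
  set b := ⟪v 0, v 2⟫ with hbdef
  set c := ⟪v 1, v 2⟫ with hcdef
  have e00 : ⟪v 0, v 0⟫ = 1 := by rw [real_inner_self_eq_norm_sq, hv 0]; norm_num
  have e11 : ⟪v 1, v 1⟫ = 1 := by rw [real_inner_self_eq_norm_sq, hv 1]; norm_num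
  have e22 : ⟪v 2, v 2⟫ = 1 := by rw [real_inner_self_eq_norm_sq, hv 2]; norm_num
  have e10 : ⟪v 1, v 0⟫ = a := real_inner_comm _ _
  have e20 : ⟪v 2, v 0⟫ = b := real_inner_comm _ _
  have e21 : ⟪v 2, v 1⟫ = c := real_inner_comm _ _
  -- strict bounds on a, b, c
  have ha2 : a ^ 2 ≤ 1 - s ^ 2 := by
    obtain ⟨x, hx, hx0, hx2⟩ := exists_unit_orth (v 0) (v 2)
    have h1 := step1 0 2 1 (by decide) (by decide) (by decide) x hx hx0 hx2
    have h2 := bessel2 x (v 0) (v 1) hx (hv 0) (hv 1) hx0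
    nlinarith [sq_abs ⟪x, v 1⟫, abs_nonneg ⟪x, v 1⟫]
  obtain ⟨x01, hx01, hx010, hx011⟩ := exists_unit_orth (v 0) (v 1)
  have hx012 : s ≤ |⟪x01, v 2⟫| := step1 0 1 2 (by decide) (by decide) (by decide) x01 hx01 hx010 hx011
  have hb2 : b ^ 2 ≤ 1 - s ^ 2 := by
    have h2 := bessel2 x01 (v 0) (v 2) hx01 (hv 0) (hv 2) hx010
    nlinarith [sq_abs ⟪x01, v 2⟫, abs_nonneg ⟪x01, v 2⟫]
  have hc2 : c ^ 2 ≤ 1 - s ^ 2 := by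
    have h2 := bessel2 x01 (v 1) (v 2) hx01 (hv 1) (hv 2) hx011
    nlinarith [sq_abs ⟪x01, v 2⟫, abs_nonneg ⟪x01, v 2⟫]
  have hs2 : 0 < s^2 := pow_pos hs 2
  have h1a : 0 < 1 - a^2 := by linarith
  have h1b : 0 < 1 - b^2 := by linarith
  have h1c : 0 < 1 - c^2 := by linarith
  -- dual vectors
  set g := 1 - a^2 - b^2 - c^2 + 2*a*b*c with hgdef
  set u0 : E := (1-c^2) • v 0 - (a-b*c) • v 1 - (b-a*c) • v 2 with hu0
  set u1 : E := (1-b^2) • v 1 - (a-b*c) • v 0 - (c-a*b) • v 2 with hu1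
  set u2 : E := (1-a^2) • v 2 - (b-a*c) • v 0 - (c-a*b) • v 1 with hu2
  have f00 : ⟪u0, v 0⟫ = g := by
    simp only [hu0, inner_sub_left, real_inner_smul_left, e00, e10, e20]; ring
  have f01 : ⟪u0, v 1⟫ = 0 := by
    simp only [hu0, inner_sub_left, real_inner_smul_left, e11, e21]; ring
  have f02 : ⟪u0, v 2⟫ = 0 := by
    simp only [hu0, inner_sub_left, real_inner_smul_left, e22]; ring
  have f10 : ⟪u1, v 0⟫ = 0 := by
    simp only [hu1, inner_sub_left, real_inner_smul_left, e00, e10, e20]; ring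
  have f11 : ⟪u1, v 1⟫ = g := by
    simp only [hu1, inner_sub_left, real_inner_smul_left, e11, e21]; ring
  have f12 : ⟪u1, v 2⟫ = 0 := by
    simp only [hu1, inner_sub_left, real_inner_smul_left, e22]; ring
  have f20 : ⟪u2, v 0⟫ = 0 := by
    simp only [hu2, inner_sub_left, real_inner_smul_left, e00, e10, e20]; ring
  have f21 : ⟪u2, v 1⟫ = 0 := by
    simp only [hu2, inner_sub_left, real_inner_smul_left, e11, e21]; ring
  have f22 : ⟪u2, v 2⟫ = g := by
    simp only [hu2, inner_sub_left, real_inner_smul_left, e22]; ring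
  have g00 : ⟪u0, u0⟫ = (1-c^2) * g := by
    show ⟪u0, (1-c^2) • v 0 - (a-b*c) • v 1 - (b-a*c) • v 2⟫ = _
    simp only [inner_sub_right, real_inner_smul_right, f00, f01, f02]; ring
  have g01 : ⟪u0, u1⟫ = -(a-b*c) * g := by
    simp only [hu1, inner_sub_right, real_inner_smul_right, f00, f01, f02]; ring
  have g02 : ⟪u0, u2⟫ = -(b-a*c) * g := by
    simp only [hu2, inner_sub_right, real_inner_smul_right, f00, f01, f02]; ring
  have g11 : ⟪u1, u1⟫ = (1-b^2) * g := by
    show ⟪u1, (1-b^2) • v 1 - (a-b*c) • v 0 - (c-a*b) • v 2⟫ = _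
    simp only [inner_sub_right, real_inner_smul_right, f10, f11, f12]; ring
  have g12 : ⟪u1, u2⟫ = -(c-a*b) * g := by
    simp only [hu2, inner_sub_right, real_inner_smul_right, f10, f11, f12]; ring
  have g22 : ⟪u2, u2⟫ = (1-a^2) * g := by
    show ⟪u2, (1-a^2) • v 2 - (b-a*c) • v 0 - (c-a*b) • v 1⟫ = _
    simp only [inner_sub_right, real_inner_smul_right, f20, f21, f22]; ring
  have g10 : ⟪u1, u0⟫ = -(a-b*c) * g := by rw [real_inner_comm]; exact g01
  have g20 : ⟪u2, u0⟫ = -(b-a*c) * g := by rw [real_inner_comm]; exact g02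
  have g21 : ⟪u2, u1⟫ = -(c-a*b) * g := by rw [real_inner_comm]; exact g12
  -- g > 0
  have hgpos : 0 < g := by
    have hiu2 : ⟪x01, u2⟫ = (1-a^2) * ⟪x01, v 2⟫ := by
      have c20 : ⟪x01, v 0⟫ = 0 := hx010
      have c21 : ⟪x01, v 1⟫ = 0 := hx011
      simp only [hu2, inner_sub_right, real_inner_smul_right, c20, c21]; ring
    have hu2ne : u2 ≠ 0 := by
      intro h0
      rw [h0, inner_zero_right] at hiu2
      have : ⟪x01, v 2⟫ = 0 := by
        rcases mul_eq_zero.mp hiu2.symm with hh | hh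
        · linarith
        · exact hh
      rw [this] at hx012
      simp at hx012
      linarith
    have hnz : ⟪u2, u2⟫ ≠ 0 := fun hh => hu2ne (inner_self_eq_zero.mp hh)
    have hnn : (0:ℝ) ≤ ⟪u2, u2⟫ := real_inner_self_nonneg
    rw [g22] at hnz hnn
    rcases lt_or_eq_of_le hnn with hlt | heq
    · rcases mul_pos_iff.mp hlt with ⟨_, hg⟩ | ⟨hneg, _⟩
      · exact hg
      · linarith
    · exact absurd heq.symm hnz
  -- balanced points
  have pattern : ∀ e1 e2 e3 : ℝ, |e1| = 1 → |e2| = 1 → |e3| = 1 →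
      s^2 * (g * ((3 - a^2 - b^2 - c^2)
        - 2*(e1*e2*(a-b*c) + e1*e3*(b-a*c) + e2*e3*(c-a*b)))) = g^2 := by
    intro e1 e2 e3 he1 he2 he3
    have he1s : e1^2 = 1 := by rw [← sq_abs, he1]; norm_num
    have he2s : e2^2 = 1 := by rw [← sq_abs, he2]; norm_num
    have he3s : e3^2 = 1 := by rw [← sq_abs, he3]; norm_num
    set w : E := e1 • u0 + e2 • u1 + e3 • u2 with hw
    have hwv0 : ⟪w, v 0⟫ = e1 * g := by
      simp only [hw, inner_add_left, real_inner_smul_left, f00, f10, f20]; ring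
    have hwv1 : ⟪w, v 1⟫ = e2 * g := by
      simp only [hw, inner_add_left, real_inner_smul_left, f01, f11, f21]; ring
    have hwv2 : ⟪w, v 2⟫ = e3 * g := by
      simp only [hw, inner_add_left, real_inner_smul_left, f02, f12, f22]; ring
    have hwn : ⟪w, w⟫ = g * ((3 - a^2 - b^2 - c^2)
        - 2*(e1*e2*(a-b*c) + e1*e3*(b-a*c) + e2*e3*(c-a*b))) := by
      simp only [hw, inner_add_left, inner_add_right, real_inner_smul_left,
        real_inner_smul_right, g00, g01, g02, g10, g11, g12, g20, g21, g22]
      linear_combination ((1-c^2)*g)*he1s + ((1-b^2)*g)*he2s + ((1-a^2)*g)*he3s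
    have hwne : w ≠ 0 := by
      intro h0
      rw [h0, inner_zero_left] at hwv0
      rcases mul_eq_zero.mp hwv0.symm with hh | hh
      · rw [hh] at he1; simp at he1
      · linarith
    have hwpos : 0 < ‖w‖ := norm_pos_iff.2 hwne
    have hwnorm2 : ‖w‖^2 = ⟪w, w⟫ := (real_inner_self_eq_norm_sq w).symm
    set x := ‖w‖⁻¹ • w with hxdef
    have hxn : ‖x‖ = 1 := by
      rw [hxdef, norm_smul, norm_inv, norm_norm]
      field_simp
    have hxv0 : |⟪x, v 0⟫| = ‖w‖⁻¹ * g := by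
      rw [hxdef, real_inner_smul_left, hwv0, abs_mul, abs_mul, abs_inv, abs_norm, he1,
        abs_of_pos hgpos]
      ring
    have hxv1 : |⟪x, v 1⟫| = ‖w‖⁻¹ * g := by
      rw [hxdef, real_inner_smul_left, hwv1, abs_mul, abs_mul, abs_inv, abs_norm, he2,
        abs_of_pos hgpos]
      ring
    have hxv2 : |⟪x, v 2⟫| = ‖w‖⁻¹ * g := by
      rw [hxdef, real_inner_smul_left, hwv2, abs_mul, abs_mul, abs_inv, abs_norm, he3,
        abs_of_pos hgpos]
      ring
    have trich : ∀ i : Fin 3, i = 0 ∨ i = 1 ∨ i = 2 := by decide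
    have hup : ‖w‖⁻¹ * g ≤ s := by
      obtain ⟨i, hi⟩ := hcov' x hxn
      rcases trich i with rfl | rfl | rfl
      · rwa [hxv0] at hi
      · rwa [hxv1] at hi
      · rwa [hxv2] at hi
    have hlow : s ≤ ‖w‖⁻¹ * g := by
      by_contra hcon
      push_neg at hcon
      apply hmult' x hxn
      intro l
      rcases trich l with rfl | rfl | rfl
      · rwa [hxv0]
      · rwa [hxv1]
      · rwa [hxv2]
    have heq : ‖w‖⁻¹ * g = s := le_antisymm hup hlow
    have hgs : g = s * ‖w‖ := by
      rw [← heq]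
      field_simp
    have hsq : g^2 = s^2 * ‖w‖^2 := by rw [hgs]; ring
    rw [hwnorm2, hwn] at hsq
    linarith
  have habs1 : |(1:ℝ)| = 1 := by norm_num
  have habsm : |(-1:ℝ)| = 1 := by norm_num
  have P1 := pattern 1 1 1 habs1 habs1 habs1
  have P2 := pattern 1 1 (-1) habs1 habs1 habsm
  have P3 := pattern 1 (-1) 1 habs1 habsm habs1
  have P4 := pattern (-1) 1 1 habsm habs1 habs1
  have hsg : (0:ℝ) < s^2*g := mul_pos hs2 hgpos
  have hq12 : (s^2*g) * ((b-a*c) + (c-a*b)) = 0 := by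
    linear_combination (1/4 : ℝ) * P2 - (1/4 : ℝ) * P1
  have hq13 : (s^2*g) * ((a-b*c) + (c-a*b)) = 0 := by
    linear_combination (1/4 : ℝ) * P3 - (1/4 : ℝ) * P1
  have hq14 : (s^2*g) * ((a-b*c) + (b-a*c)) = 0 := by
    linear_combination (1/4 : ℝ) * P4 - (1/4 : ℝ) * P1
  have hsum1 : (b-a*c) + (c-a*b) = 0 := by
    rcases mul_eq_zero.mp hq12 with hh | hh
    · exact absurd hh (ne_of_gt hsg)
    · exact hh
  have hsum2 : (a-b*c) + (c-a*b) = 0 := by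
    rcases mul_eq_zero.mp hq13 with hh | hh
    · exact absurd hh (ne_of_gt hsg)
    · exact hh
  have hsum3 : (a-b*c) + (b-a*c) = 0 := by
    rcases mul_eq_zero.mp hq14 with hh | hh
    · exact absurd hh (ne_of_gt hsg)
    · exact hh
  have hp : a - b*c = 0 := by linarith
  have hqq : b - a*c = 0 := by linarith
  have hr : c - a*b = 0 := by linarith
  have ha0 : a = 0 := by
    have hcube : a * (1 - a^2) = 0 := by
      linear_combination (1-a^2)*hp + c*hqq + (a*c)*hr
    rcases mul_eq_zero.mp hcube with hh | hh
    · exact hh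
    · linarith
  have hb0 : b = 0 := by linear_combination hqq + c*ha0
  have hc0 : c = 0 := by linear_combination hr + b*ha0
  intro i j hij
  have trich : ∀ i : Fin 3, i = 0 ∨ i = 1 ∨ i = 2 := by decide
  rcases trich i with rfl | rfl | rfl <;> rcases trich j with rfl | rfl | rfl
  · exact absurd rfl hij
  · rw [← hadef]; exact ha0
  · rw [← hbdef]; exact hb0
  · rw [real_inner_comm, ← hadef]; exact ha0
  · exact absurd rfl hij
  · rw [← hcdef]; exact hc0
  · rw [real_inner_comm, ← hbdef]; exact hb0
  · rw [real_inner_comm, ← hcdef]; exact hc0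
  · exact absurd rfl hij
end

section
/- Let d ≥ 3 be an integer and let δ > d − 1 be a real number. Then for all sufficiently large n the following holds: m_d·n^{-(1+δ)} < π/2 and there exist unit vectors v_1, …, v_n ∈ ℝ^d such that every point of S^{d-1} belongs to at most d of the zones Z(v_1, m_d·n^{-(1+δ)}), …, Z(v_n, m_d·n^{-(1+δ)}). -/
open Metric Real

/-- `m_d = √(2πd) + 1`. -/
noncomputable def mConst (d : ℕ) : ℝ := Real.sqrt (2 * π * d) + 1

section
open Matrix

lemma det_abs_le {m : ℕ} (B : Matrix (Fin m) (Fin m) ℝ) (C : Fin m → ℝ)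
    (h : ∀ j k, |B j k| ≤ C j) : |B.det| ≤ (m.factorial : ℝ) * ∏ j, C j := by
  have hC : ∀ j, 0 ≤ C j := fun j => le_trans (abs_nonneg _) (h j j)
  rw [Matrix.det_apply]
  calc |∑ σ : Equiv.Perm (Fin m), Equiv.Perm.sign σ • ∏ i, B (σ i) i|
      ≤ ∑ σ : Equiv.Perm (Fin m), |Equiv.Perm.sign σ • ∏ i, B (σ i) i| :=
        Finset.abs_sum_le_sum_abs _ _
    _ ≤ ∑ σ : Equiv.Perm (Fin m), ∏ j, C j := by
        apply Finset.sum_le_sum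
        intro σ _
        have : |Equiv.Perm.sign σ • ∏ i, B (σ i) i| = |∏ i, B (σ i) i| := by
          rcases Int.units_eq_one_or (Equiv.Perm.sign σ) with hs | hs <;>
            simp [hs, abs_neg]
        rw [this, Finset.abs_prod]
        calc ∏ i, |B (σ i) i| ≤ ∏ i, C (σ i) :=
              Finset.prod_le_prod (fun i _ => abs_nonneg _) (fun i _ => h (σ i) i)
          _ = ∏ j, C j := Equiv.prod_comp σ C
    _ = (m.factorial : ℝ) * ∏ j, C j := by
        rw [Finset.sum_const, Finset.card_univ, Fintype.card_perm]
        simp [nsmul_eq_mul]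

lemma aux_det (p : ℕ) (hp : p.Prime) (d : ℕ) (hd : d ≠ 0) (t : Fin d → ℕ)
    (ht : ∀ j, t j < p) (hinj : Function.Injective t) :
    (p : ℝ) ≤ |(Matrix.of fun j k : Fin d =>
      if (k : ℕ) = d - 1 then ((p : ℤ) : ℝ) else (((t j ^ ((k : ℕ) + 1) % p : ℕ) : ℤ) : ℝ)).det| := by
  haveI : Fact p.Prime := ⟨hp⟩
  obtain ⟨m, rfl⟩ : ∃ m, d = m + 1 := ⟨d - 1, (Nat.succ_pred_eq_of_pos (Nat.pos_of_ne_zero hd)).symm⟩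
  set M : Matrix (Fin (m+1)) (Fin (m+1)) ℤ := Matrix.of fun j k =>
    if (k : ℕ) = m then (p : ℤ) else ((t j ^ ((k : ℕ) + 1) % p : ℕ) : ℤ) with hM
  set M₁ : Matrix (Fin (m+1)) (Fin (m+1)) ℤ := Matrix.of fun j k =>
    if (k : ℕ) = m then 1 else ((t j ^ ((k : ℕ) + 1) % p : ℕ) : ℤ) with hM₁def
  have hMeq : M = M₁.updateCol (Fin.last m) ((p : ℤ) • fun _ => (1 : ℤ)) := by
    ext j k
    by_cases hk : k = Fin.last m
    · subst hk; simp [M, M₁, Matrix.updateCol_apply, Fin.val_last]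
    · have hkm : (k : ℕ) ≠ m := fun h => hk (Fin.ext (by simp [h, Fin.val_last]))
      simp [M, M₁, Matrix.updateCol_apply, hk, hkm]
  have h1 : M₁.updateCol (Fin.last m) (fun _ => (1 : ℤ)) = M₁ := by
    ext j k
    by_cases hk : k = Fin.last m
    · subst hk; simp [M₁, Matrix.updateCol_apply, Fin.val_last]
    · simp [Matrix.updateCol_apply, hk]
  have hdet : M.det = (p : ℤ) * M₁.det := by
    rw [hMeq, Matrix.det_updateCol_smul, h1]
  set u : Fin (m+1) → ZMod p := fun j => ((t j : ℕ) : ZMod p) with hu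
  have huinj : Function.Injective u := by
    intro a b hab
    apply hinj
    have := congrArg ZMod.val hab
    rwa [hu, ZMod.val_cast_of_lt (ht a), ZMod.val_cast_of_lt (ht b)] at this
  have hA : M₁.map (Int.cast : ℤ → ZMod p) = (vandermonde u).submatrix id (finRotate (m+1)) := by
    ext j k
    by_cases hk : k = Fin.last m
    · subst hk
      have h0 : finRotate (m+1) (Fin.last m) = 0 := by
        rw [finRotate_succ_apply]; simp
      simp [M₁, Matrix.map_apply, Fin.val_last, vandermonde, h0]
    · have hkm : (k : ℕ) ≠ m := fun h => hk (Fin.ext (by simp [h, Fin.val_last]))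
      have hv : ((finRotate (m+1) k : Fin (m+1)) : ℕ) = (k : ℕ) + 1 := by
        rw [finRotate_succ_apply, Fin.val_add_one]
        simp [hk]
      simp only [Matrix.map_apply, Matrix.submatrix_apply, id, vandermonde, M₁, Matrix.of_apply,
        hkm, if_false, hv]
      rw [Int.cast_natCast, ZMod.natCast_mod, Nat.cast_pow]
  have hZ : ((M₁.det : ℤ) : ZMod p) ≠ 0 := by
    have hmap : ((M₁.det : ℤ) : ZMod p) = (M₁.map (Int.cast : ℤ → ZMod p)).det :=
      RingHom.map_det (Int.castRingHom (ZMod p)) M₁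
    rw [hmap, hA, Matrix.det_permute' (finRotate (m+1)) (vandermonde u),
      Matrix.det_vandermonde]
    apply mul_ne_zero
    · rcases Int.units_eq_one_or (Equiv.Perm.sign (finRotate (m+1))) with hs | hs <;>
        · rw [hs]
          simp
    · apply Finset.prod_ne_zero_iff.mpr
      intro i _
      apply Finset.prod_ne_zero_iff.mpr
      intro j hj
      have hij : i ≠ j := fun h => by simp [h] at hj
      exact sub_ne_zero.mpr fun h => hij (huinj h.symm)
  have hM₁ : M₁.det ≠ 0 := fun h => hZ (by simp [h])
  have h1le : (1 : ℤ) ≤ |M₁.det| := Int.one_le_abs hM₁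
  have hfin : (p : ℤ) ≤ |M.det| := by
    rw [hdet, abs_mul]
    have hp0 : (0:ℤ) ≤ (p:ℤ) := by positivity
    calc (p : ℤ) = |(p:ℤ)| * 1 := by rw [abs_of_nonneg hp0, mul_one]
      _ ≤ |(p:ℤ)| * |M₁.det| := mul_le_mul_of_nonneg_left h1le (abs_nonneg _)
  have hmapR : ((M.det : ℤ) : ℝ) = (M.map (Int.cast : ℤ → ℝ)).det :=
    RingHom.map_det (Int.castRingHom ℝ) M
  have hcast : (Matrix.of fun j k : Fin (m+1) =>
      if (k : ℕ) = m + 1 - 1 then ((p : ℤ) : ℝ) else (((t j ^ ((k : ℕ) + 1) % p : ℕ) : ℤ) : ℝ))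
      = M.map (Int.cast : ℤ → ℝ) := by
    ext j k
    simp [M, Matrix.map_apply, apply_ite (Int.cast : ℤ → ℝ)]
  rw [hcast, ← hmapR]
  calc (p : ℝ) = ((p : ℤ) : ℝ) := by push_cast; ring
    _ ≤ |((M.det : ℤ) : ℝ)| := by rw [← Int.cast_abs]; exact_mod_cast hfin

end

lemma exists_coord_large (d : ℕ) (hd : 3 ≤ d) (x : EuclideanSpace ℝ (Fin d))
    (hxnorm : ‖x‖ = 1) : ∃ k : Fin d, (Real.sqrt d)⁻¹ ≤ |x k| := by
  haveI : Nonempty (Fin d) := ⟨⟨0, by omega⟩⟩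
  by_contra hno
  push_neg at hno
  have hsum : ∑ k, ‖x k‖^2 = 1 := by
    have := EuclideanSpace.norm_eq x
    rw [hxnorm] at this
    have h2 := congrArg (fun z : ℝ => z^2) this
    simp only [one_pow] at h2
    rw [Real.sq_sqrt (by positivity)] at h2
    exact h2.symm
  have hlt : ∑ k, ‖x k‖^2 < ∑ _k : Fin d, (1:ℝ)/d := by
    apply Finset.sum_lt_sum_of_nonempty
    · exact Finset.univ_nonempty
    · intro k _
      have h1 := hno k
      rw [Real.norm_eq_abs]
      have h2 : ((Real.sqrt d)⁻¹)^2 = 1/d := by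
        rw [← Real.sqrt_inv]
        rw [Real.sq_sqrt (by positivity)]
        rw [one_div]
      nlinarith [abs_nonneg (x k)]
  rw [hsum] at hlt
  simp only [Finset.sum_const, Finset.card_univ, Fintype.card_fin, nsmul_eq_mul] at hlt
  rw [mul_one_div, div_self (by exact_mod_cast (by omega : d ≠ 0) : (d:ℝ) ≠ 0)] at hlt
  exact lt_irrefl 1 hlt

set_option maxHeartbeats 1000000 in
/-- (Corollary 1 i), second part). For `d ≥ 3` and `δ > d - 1`, for all
sufficiently large `n` there are `n` zones of half-width `m_d n^{-(1+δ)}` on `S^{d-1}`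
with multiplicity at most `d`. -/
theorem zones_multiplicity_d (d : ℕ) (hd : 3 ≤ d) (δ : ℝ) (hδ : (d : ℝ) - 1 < δ) :
    ∃ N : ℕ, ∀ n : ℕ, N ≤ n →
      mConst d * (n : ℝ) ^ (-(1 + δ)) < π / 2 ∧
      ∃ v : Fin n → EuclideanSpace ℝ (Fin d), (∀ i, ‖v i‖ = 1) ∧
        ∀ x ∈ sphere (0 : EuclideanSpace ℝ (Fin d)) 1,
          {i : Fin n | |(inner ℝ x (v i) : ℝ)| ≤
            Real.sin (mConst d * (n : ℝ) ^ (-(1 + δ)))}.ncard ≤ d := by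
  have hm0 : 0 < mConst d := by
    have := Real.sqrt_nonneg (2 * π * d)
    unfold mConst; linarith
  set C : ℝ := (d : ℝ)^2 * (d.factorial : ℝ) * 2^(d-1) with hC
  have hC0 : 0 < C := by positivity
  set A : ℝ := C * mConst d + mConst d with hA
  refine ⟨⌈A⌉₊ + 1, fun n hn => ?_⟩
  have hnA : A < (n : ℝ) := by
    calc A ≤ (⌈A⌉₊ : ℝ) := Nat.le_ceil A
      _ < (⌈A⌉₊ : ℝ) + 1 := by linarith
      _ ≤ (n : ℝ) := by exact_mod_cast hn
  have hmA : mConst d < A := by nlinarith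
  have hn0 : n ≠ 0 := by
    rintro rfl
    simp only [Nat.cast_zero] at hnA
    nlinarith
  have hn1 : (1 : ℝ) ≤ (n : ℝ) := by
    have : 1 ≤ n := Nat.one_le_iff_ne_zero.mpr hn0
    exact_mod_cast this
  -- rpow bounds
  have hexp1 : (n : ℝ) ^ (-(1 + δ)) ≤ (n : ℝ)⁻¹ := by
    have h1 : (n : ℝ) ^ (-(1 + δ)) ≤ (n : ℝ) ^ (-1 : ℝ) := by
      apply Real.rpow_le_rpow_of_exponent_le hn1
      have : (2:ℝ) ≤ (d:ℝ) := by exact_mod_cast (by omega : 2 ≤ d)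
      linarith
    rwa [Real.rpow_neg_one] at h1
  have hexpd : (n : ℝ) ^ (-(1 + δ)) ≤ ((n : ℝ)^d)⁻¹ := by
    have h1 : (n : ℝ) ^ (-(1 + δ)) ≤ (n : ℝ) ^ (-(d:ℝ)) := by
      apply Real.rpow_le_rpow_of_exponent_le hn1
      linarith
    have h2 : (n : ℝ) ^ (-(d:ℝ)) = ((n:ℝ)^d)⁻¹ := by
      rw [Real.rpow_neg (by positivity), Real.rpow_natCast]
    rwa [h2] at h1
  have hrpow_pos : 0 < (n : ℝ) ^ (-(1 + δ)) :=
    Real.rpow_pos_of_pos (by linarith) _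
  have harg0 : 0 ≤ mConst d * (n : ℝ) ^ (-(1 + δ)) := by positivity
  constructor
  · -- first conjunct
    have : mConst d * (n : ℝ) ^ (-(1 + δ)) ≤ mConst d * (n:ℝ)⁻¹ :=
      mul_le_mul_of_nonneg_left hexp1 (le_of_lt hm0)
    have hπ : (3:ℝ) < π := Real.pi_gt_three
    have hninv : mConst d * (n:ℝ)⁻¹ < π / 2 := by
      rw [mul_inv_lt_iff₀ (by linarith)]
      nlinarith
    linarith
  -- construction
  obtain ⟨p, hp, hnp, hp2n⟩ := Nat.exists_prime_lt_and_le_two_mul n hn0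
  have hp0 : (0:ℝ) < p := by exact_mod_cast hp.pos
  set s : ℝ := Real.sin (mConst d * (n : ℝ) ^ (-(1 + δ))) with hs
  have hsle : s ≤ mConst d * (n : ℝ) ^ (-(1 + δ)) := Real.sin_le harg0
  -- the integer-grid vectors
  set Wr : Fin n → Fin d → ℝ := fun i k =>
    if (k : ℕ) = d - 1 then ((p : ℤ) : ℝ) else ((((i : ℕ) ^ ((k : ℕ) + 1) % p : ℕ) : ℤ) : ℝ)
    with hWr
  set wv : Fin n → EuclideanSpace ℝ (Fin d) := fun i => (WithLp.equiv 2 (Fin d → ℝ)).symm (Wr i)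
    with hwv
  have hwv_apply : ∀ i k, wv i k = Wr i k := fun i k => rfl
  have hWr_abs : ∀ i k, |Wr i k| ≤ (p : ℝ) := by
    intro i k
    rw [hWr]
    by_cases hk : (k : ℕ) = d - 1
    · simp [hk, abs_of_nonneg, hp0.le]
    · simp only [hk, if_false]
      rw [abs_of_nonneg (by positivity)]
      have : ((i : ℕ) ^ ((k : ℕ) + 1) % p) < p := Nat.mod_lt _ hp.pos
      exact_mod_cast this.le
  have hwv_norm : ∀ i, ‖wv i‖ ≤ Real.sqrt d * p := by
    intro i
    rw [EuclideanSpace.norm_eq]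
    have h1 : ∑ k, ‖wv i k‖^2 ≤ (d : ℝ) * (p:ℝ)^2 := by
      calc ∑ k, ‖wv i k‖^2 ≤ ∑ _k : Fin d, (p:ℝ)^2 := by
            apply Finset.sum_le_sum
            intro k _
            rw [Real.norm_eq_abs, hwv_apply]
            have := hWr_abs i k
            nlinarith [abs_nonneg (Wr i k)]
        _ = (d : ℝ) * (p:ℝ)^2 := by simp [Finset.sum_const, Finset.card_univ, mul_comm]
    calc Real.sqrt (∑ k, ‖wv i k‖^2) ≤ Real.sqrt ((d:ℝ) * (p:ℝ)^2) := Real.sqrt_le_sqrt h1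
      _ = Real.sqrt d * p := by
          rw [Real.sqrt_mul (by positivity), Real.sqrt_sq hp0.le]
  have hwv_pos : ∀ i, 0 < ‖wv i‖ := by
    intro i
    rw [norm_pos_iff]
    intro h0
    have h1 : Wr i ⟨d - 1, by omega⟩ = 0 := by
      rw [← hwv_apply, h0]
      rfl
    have h2 : Wr i ⟨d - 1, by omega⟩ = ((p:ℤ):ℝ) := by
      simp [hWr]
    rw [h2] at h1
    have : (p : ℝ) = 0 := by exact_mod_cast h1
    exact hp0.ne' this
  set v : Fin n → EuclideanSpace ℝ (Fin d) := fun i => ‖wv i‖⁻¹ • wv i with hv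
  refine ⟨v, fun i => ?_, ?_⟩
  · rw [hv, norm_smul, norm_inv, norm_norm, inv_mul_cancel₀ (hwv_pos i).ne']
  intro x hx
  have hxnorm : ‖x‖ = 1 := by simpa using hx
  by_contra hcon
  push_neg at hcon
  -- extract d indices in the set
  set S : Set (Fin n) := {i : Fin n | |(inner ℝ x (v i) : ℝ)| ≤ s} with hS
  have hfin : S.Finite := Set.toFinite S
  have hdle : d ≤ hfin.toFinset.card := by
    rw [← Set.ncard_eq_toFinset_card S hfin]
    omega
  obtain ⟨t, hts, htcard⟩ := Finset.exists_subset_card_eq hdle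
  set σ : Fin d → Fin n := fun j => ((t.orderIsoOfFin htcard) j : Fin n) with hσ
  have hσinj : Function.Injective σ := by
    intro a b hab
    have := (t.orderIsoOfFin htcard).injective (Subtype.ext hab)
    exact this
  have hσS : ∀ j, σ j ∈ S := by
    intro j
    have : σ j ∈ t := ((t.orderIsoOfFin htcard) j).2
    exact hfin.mem_toFinset.mp (hts this)
  have hs0 : 0 ≤ s := le_trans (abs_nonneg _) (hσS ⟨0, by omega⟩)
  -- the matrix
  set T : Fin d → ℕ := fun j => ((σ j : Fin n) : ℕ) with hT
  have hTinj : Function.Injective T := fun a b hab => hσinj (Fin.ext hab)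
  have hTlt : ∀ j, T j < p := fun j => lt_trans (σ j).isLt hnp
  set R : Matrix (Fin d) (Fin d) ℝ := Matrix.of fun j k =>
    if (k : ℕ) = d - 1 then ((p : ℤ) : ℝ) else (((T j ^ ((k : ℕ) + 1) % p : ℕ) : ℤ) : ℝ) with hR
  have hRW : ∀ j k, R j k = Wr (σ j) k := fun j k => rfl
  have hdetR : (p : ℝ) ≤ |R.det| := aux_det p hp d (by omega) T hTlt hTinj
  -- inner products small
  set x' : Fin d → ℝ := fun k => x k with hx'
  set y : Fin d → ℝ := R.mulVec x' with hy
  have hinner : ∀ i, (inner ℝ x (v i) : ℝ) = ‖wv i‖⁻¹ * (inner ℝ x (wv i) : ℝ) := by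
    intro i
    rw [hv]
    exact real_inner_smul_right _ _ _
  have hyle : ∀ j, |y j| ≤ Real.sqrt d * p * s := by
    intro j
    have h1 : y j = (inner ℝ x (wv (σ j)) : ℝ) := by
      rw [hy, PiLp.inner_apply]
      simp only [Matrix.mulVec, dotProduct]
      apply Finset.sum_congr rfl
      intro k _
      simp only [RCLike.inner_apply, conj_trivial]
      rw [hRW j k, hwv_apply (σ j) k]
    have hmem : |(inner ℝ x (v (σ j)) : ℝ)| ≤ s := hσS j
    rw [hinner (σ j), abs_mul, abs_inv, abs_of_nonneg (norm_nonneg _)] at hmem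
    have h3 : |(inner ℝ x (wv (σ j)) : ℝ)| ≤ ‖wv (σ j)‖ * s := by
      have hpos := hwv_pos (σ j)
      rw [inv_mul_le_iff₀ hpos] at hmem
      exact hmem
    rw [h1]
    calc |(inner ℝ x (wv (σ j)) : ℝ)| ≤ ‖wv (σ j)‖ * s := h3
      _ ≤ (Real.sqrt d * p) * s := mul_le_mul_of_nonneg_right (hwv_norm (σ j)) hs0
  -- adjugate entries bound
  have hadj : ∀ k j, |R.adjugate k j| ≤ (d.factorial : ℝ) * (p:ℝ)^(d-1) := by
    intro k j
    rw [Matrix.adjugate_apply]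
    have hb : ∀ j' k', |(R.updateRow j (Pi.single k 1)) j' k'| ≤
        (fun j'' => if j'' = j then 1 else (p:ℝ)) j' := by
      intro j' k'
      show |(R.updateRow j (Pi.single k 1)) j' k'| ≤ if j' = j then 1 else (p:ℝ)
      by_cases hj' : j' = j
      · subst hj'
        rw [if_pos rfl, Matrix.updateRow_self, Pi.single_apply]
        split_ifs <;> simp
      · rw [if_neg hj', Matrix.updateRow_ne hj', hRW]
        exact hWr_abs _ _
    have := det_abs_le (R.updateRow j (Pi.single k 1))
      (fun j'' => if j'' = j then 1 else (p:ℝ)) hb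
    calc |(R.updateRow j (Pi.single k 1)).det|
        ≤ (d.factorial : ℝ) * ∏ j', (if j' = j then 1 else (p:ℝ)) := this
      _ = (d.factorial : ℝ) * (p:ℝ)^(d-1) := by
          congr 1
          rw [← Finset.mul_prod_erase Finset.univ _ (Finset.mem_univ j)]
          rw [if_pos rfl, one_mul]
          rw [Finset.prod_congr rfl (fun x hx => if_neg (Finset.ne_of_mem_erase hx))]
          rw [Finset.prod_const, Finset.card_erase_of_mem (Finset.mem_univ j),
            Finset.card_univ, Fintype.card_fin]
  -- coordinate of x with large absolute value
  have hd0 : (0:ℝ) < Real.sqrt d := Real.sqrt_pos.mpr (by exact_mod_cast (by omega : 0 < d))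
  obtain ⟨k₀, hk₀⟩ := exists_coord_large d hd x hxnorm
  -- Cramer identity
  have hidentity : R.det • x' = R.adjugate.mulVec y := by
    rw [hy, Matrix.mulVec_mulVec, Matrix.adjugate_mul, Matrix.smul_mulVec,
      Matrix.one_mulVec]
  -- main chain
  have hchain : (p:ℝ) * (Real.sqrt d)⁻¹ ≤
      (d:ℝ) * ((d.factorial : ℝ) * (p:ℝ)^(d-1) * (Real.sqrt d * p * s)) := by
    calc (p:ℝ) * (Real.sqrt d)⁻¹ ≤ |R.det| * |x' k₀| := by
          apply mul_le_mul hdetR hk₀ (by positivity) (abs_nonneg _)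
      _ = |(R.det • x') k₀| := by rw [Pi.smul_apply, smul_eq_mul, abs_mul]
      _ = |(R.adjugate.mulVec y) k₀| := by rw [hidentity]
      _ = |∑ j, R.adjugate k₀ j * y j| := by
          simp [Matrix.mulVec, dotProduct]
      _ ≤ ∑ j, |R.adjugate k₀ j * y j| := Finset.abs_sum_le_sum_abs _ _
      _ ≤ ∑ _j : Fin d, (d.factorial : ℝ) * (p:ℝ)^(d-1) * (Real.sqrt d * p * s) := by
          apply Finset.sum_le_sum
          intro j _
          rw [abs_mul]
          apply mul_le_mul (hadj k₀ j) (hyle j) (abs_nonneg _) (by positivity)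
      _ = (d:ℝ) * ((d.factorial : ℝ) * (p:ℝ)^(d-1) * (Real.sqrt d * p * s)) := by
          simp [Finset.sum_const, Finset.card_univ]
  -- simplify chain to 1 ≤ d^2 * d! * p^(d-1) * s
  have hkey : 1 ≤ (d:ℝ)^2 * (d.factorial : ℝ) * (p:ℝ)^(d-1) * s := by
    have hsq : Real.sqrt d * Real.sqrt d = (d:ℝ) := Real.mul_self_sqrt (by positivity)
    have hppow : (p:ℝ)^(d-1) * (p:ℝ) = (p:ℝ)^d := by
      rw [← pow_succ]
      congr 1
      omega
    have h1 : (p:ℝ) ≤ (d:ℝ)^2 * (d.factorial : ℝ) * (p:ℝ)^(d-1) * s * (p:ℝ) := by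
      have := mul_le_mul_of_nonneg_left hchain hd0.le
      calc (p:ℝ) = Real.sqrt d * ((p:ℝ) * (Real.sqrt d)⁻¹) := by
            field_simp
          _ ≤ Real.sqrt d * ((d:ℝ) * ((d.factorial : ℝ) * (p:ℝ)^(d-1) * (Real.sqrt d * p * s))) := this
          _ = (d:ℝ)^2 * (d.factorial : ℝ) * (p:ℝ)^(d-1) * s * (p:ℝ) := by
            linear_combination ((d:ℝ) * (d.factorial:ℝ) * (p:ℝ)^(d-1) * (p:ℝ) * s) * hsq
    have h1' : 1 * (p:ℝ) ≤ (d:ℝ)^2 * (d.factorial : ℝ) * (p:ℝ)^(d-1) * s * (p:ℝ) := by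
      rw [one_mul]; exact h1
    exact le_of_mul_le_mul_right h1' hp0
  -- upper bound on s and p
  have hple : (p:ℝ) ≤ 2 * n := by exact_mod_cast hp2n
  have hpowle : (p:ℝ)^(d-1) ≤ 2^(d-1) * (n:ℝ)^(d-1) := by
    calc (p:ℝ)^(d-1) ≤ (2*(n:ℝ))^(d-1) := pow_le_pow_left₀ hp0.le hple _
      _ = 2^(d-1) * (n:ℝ)^(d-1) := mul_pow _ _ _
  have hsle2 : s ≤ mConst d * ((n:ℝ)^d)⁻¹ := by
    calc s ≤ mConst d * (n : ℝ) ^ (-(1 + δ)) := hsle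
      _ ≤ mConst d * ((n:ℝ)^d)⁻¹ := mul_le_mul_of_nonneg_left hexpd hm0.le
  have hfinal : 1 ≤ C * mConst d / n := by
    have hnd : (n:ℝ)^d = (n:ℝ)^(d-1) * n := by
      rw [← pow_succ]
      congr 1
      omega
    have h2 : 1 ≤ (d:ℝ)^2 * (d.factorial : ℝ) * (2^(d-1) * (n:ℝ)^(d-1)) * (mConst d * ((n:ℝ)^d)⁻¹) := by
      calc (1:ℝ) ≤ (d:ℝ)^2 * (d.factorial : ℝ) * (p:ℝ)^(d-1) * s := hkey
        _ ≤ (d:ℝ)^2 * (d.factorial : ℝ) * (2^(d-1) * (n:ℝ)^(d-1)) * (mConst d * ((n:ℝ)^d)⁻¹) := by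
            apply mul_le_mul
            · exact mul_le_mul_of_nonneg_left hpowle (by positivity)
            · exact hsle2
            · exact hs0
            · positivity
    have hne : (n:ℝ)^(d-1) ≠ 0 := by positivity
    calc (1:ℝ) ≤ (d:ℝ)^2 * (d.factorial : ℝ) * (2^(d-1) * (n:ℝ)^(d-1)) * (mConst d * ((n:ℝ)^d)⁻¹) := h2
      _ = C * mConst d / n := by
          rw [hnd, hC]
          field_simp
  have : (n:ℝ) ≤ C * mConst d := by
    rw [le_div_iff₀ (by linarith : (0:ℝ) < (n:ℝ))] at hfinal
    linarith
  nlinarith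
end

section
/- Let d ≥ 3 be an integer and let 0 < ε < 1. Then there exists ω₀ with 0 < ω₀ ≤ π/2 (depending on ε and d) with the following property: for every ω with 0 < ω < ω₀ and every finite set {P_1, …, P_m} ⊆ S^{d-1} that is saturated for ω — i.e. arccos⟨P_i, P_j⟩ ≥ ω for all i ≠ j, and there is no point Q ∈ S^{d-1} with arccos⟨Q, P_i⟩ ≥ ω for all i — one has (1/(1+ε)) · (d·κ_d/κ_{d-1}) · ω^{-(d-1)} ≤ m ≤ (1+ε) · 8^{(d-1)/2} · (d·κ_d/κ_{d-1}) · ω^{-(d-1)}. -/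
open Metric Real MeasureTheory

/-- `κ_d`, the Lebesgue measure of the unit ball of `ℝ^d`. -/
noncomputable def unitBallVolume (d : ℕ) : ℝ :=
  (volume (Metric.ball (0 : EuclideanSpace ℝ (Fin d)) 1)).toReal

open Filter Topology


theorem volSlab (n : ℕ) (hn : 0 < n) (t c : ℝ) (ht : 0 < t) (hc : 0 < c) (strict : Bool) :
    volume {p : ℝ × EuclideanSpace ℝ (Fin n) | p.1 ∈ Set.Ioc 0 c ∧
        (if strict then ‖p.2‖ < p.1 * t else ‖p.2‖ ≤ p.1 * t)}
      = ENNReal.ofReal (t ^ n * c ^ (n+1) / (n+1)) *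
        volume (ball (0 : EuclideanSpace ℝ (Fin n)) 1) := by
  haveI : Nontrivial (EuclideanSpace ℝ (Fin n)) := by
    apply Module.nontrivial_of_finrank_pos (R := ℝ)
    rw [finrank_euclideanSpace_fin]; exact hn
  have hmeas : MeasurableSet {p : ℝ × EuclideanSpace ℝ (Fin n) | p.1 ∈ Set.Ioc 0 c ∧
      (if strict then ‖p.2‖ < p.1 * t else ‖p.2‖ ≤ p.1 * t)} := by
    apply MeasurableSet.inter
    · exact (measurable_fst (measurableSet_Ioc))
    · cases strict <;> simp only [if_true, if_false, Bool.false_eq_true] <;>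
      [exact measurableSet_le (measurable_snd.norm) (measurable_fst.mul_const t);
       exact measurableSet_lt (measurable_snd.norm) (measurable_fst.mul_const t)]
  rw [MeasureTheory.Measure.volume_eq_prod, Measure.prod_apply hmeas]
  have hslice : ∀ a : ℝ,
      volume (Prod.mk a ⁻¹' {p : ℝ × EuclideanSpace ℝ (Fin n) | p.1 ∈ Set.Ioc 0 c ∧
        (if strict then ‖p.2‖ < p.1 * t else ‖p.2‖ ≤ p.1 * t)})
      = Set.indicator (Set.Ioc 0 c)
          (fun a => ENNReal.ofReal ((a*t) ^ n) * volume (ball (0 : EuclideanSpace ℝ (Fin n)) 1)) a := by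
    intro a
    by_cases ha : a ∈ Set.Ioc 0 c
    · rw [Set.indicator_of_mem ha]
      have hat : 0 ≤ a * t := le_of_lt (mul_pos ha.1 ht)
      have : Prod.mk a ⁻¹' {p : ℝ × EuclideanSpace ℝ (Fin n) | p.1 ∈ Set.Ioc 0 c ∧
          (if strict then ‖p.2‖ < p.1 * t else ‖p.2‖ ≤ p.1 * t)} =
          (if strict then ball (0 : EuclideanSpace ℝ (Fin n)) (a*t)
           else closedBall (0 : EuclideanSpace ℝ (Fin n)) (a*t)) := by
        cases strict <;> ext y <;>
          simp [Metric.mem_ball, Metric.mem_closedBall, dist_zero_right, ha.1, ha.2]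
      rw [this]
      cases strict
      · simp only [if_false, Bool.false_eq_true]
        rw [Measure.addHaar_closedBall _ _ hat, finrank_euclideanSpace_fin]
      · simp only [if_true]
        rw [Measure.addHaar_ball _ _ hat, finrank_euclideanSpace_fin]
    · rw [Set.indicator_of_notMem ha]
      have : Prod.mk a ⁻¹' {p : ℝ × EuclideanSpace ℝ (Fin n) | p.1 ∈ Set.Ioc 0 c ∧
          (if strict then ‖p.2‖ < p.1 * t else ‖p.2‖ ≤ p.1 * t)} = ∅ := by
        ext y
        simp only [Set.mem_preimage, Set.mem_setOf_eq, Set.mem_empty_iff_false, iff_false,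
          not_and]
        exact fun h _ => absurd h ha
      rw [this]; simp
  simp only [hslice]
  rw [lintegral_indicator]
  rotate_left
  · exact measurableSet_Ioc
  rw [lintegral_mul_const _ (by fun_prop)]
  congr 1
  rw [← MeasureTheory.ofReal_integral_eq_lintegral_ofReal]
  · congr 1
    have h : ∀ a : ℝ, (a*t)^n = t^n * a^n := fun a => by ring
    simp_rw [h]
    rw [MeasureTheory.integral_const_mul, ← intervalIntegral.integral_of_le hc.le,
      integral_pow]
    push_cast
    ring
  · exact (continuous_pow n |>.comp (continuous_id.mul continuous_const)).integrableOn_Ioc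
  · filter_upwards [ae_restrict_mem measurableSet_Ioc] with a ha
    exact pow_nonneg (le_of_lt (mul_pos ha.1 ht)) n

noncomputable def coordMap (n : ℕ) : EuclideanSpace ℝ (Fin (n+1)) ≃ᵐ ℝ × EuclideanSpace ℝ (Fin n) :=
  (MeasurableEquiv.toLp 2 (Fin (n+1) → ℝ)).symm.trans
    ((MeasurableEquiv.piFinSuccAbove (fun _ : Fin (n+1) => ℝ) 0).trans
      ((MeasurableEquiv.refl ℝ).prodCongr (MeasurableEquiv.toLp 2 (Fin n → ℝ)).symm.symm))

theorem coordMap_mp (n : ℕ) : MeasurePreserving (coordMap n) volume volume := by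
  have h1 := EuclideanSpace.volume_preserving_symm_measurableEquiv_toLp (Fin (n+1))
  have h2 := volume_preserving_piFinSuccAbove (fun _ : Fin (n+1) => ℝ) 0
  have h3 : MeasurePreserving
      ((MeasurableEquiv.refl ℝ).prodCongr (MeasurableEquiv.toLp 2 (Fin n → ℝ)).symm.symm)
      volume volume := by
    have : MeasurePreserving
        (Prod.map (id : ℝ → ℝ) ((MeasurableEquiv.toLp 2 (Fin n → ℝ)).symm.symm)) volume volume := by
      rw [MeasureTheory.Measure.volume_eq_prod (α := ℝ) (β := EuclideanSpace ℝ (Fin n)),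
        MeasureTheory.Measure.volume_eq_prod (α := ℝ) (β := (Fin n → ℝ))]
      exact (MeasurePreserving.id volume).prod
        (EuclideanSpace.volume_preserving_symm_measurableEquiv_toLp (Fin n)).symm
    exact this
  exact (h3.comp h2).comp h1

theorem coordMap_fst (n : ℕ) (x : EuclideanSpace ℝ (Fin (n+1))) :
    (coordMap n x).1 = x 0 := rfl

theorem coordMap_snd (n : ℕ) (x : EuclideanSpace ℝ (Fin (n+1))) (j : Fin n) :
    (coordMap n x).2 j = x j.succ := rfl

theorem coordMap_norm (n : ℕ) (x : EuclideanSpace ℝ (Fin (n+1))) :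
    ‖(coordMap n x).2‖ ^ 2 = ‖x‖ ^ 2 - x 0 ^ 2 := by
  rw [EuclideanSpace.norm_eq, EuclideanSpace.norm_eq,
    Real.sq_sqrt (by positivity), Real.sq_sqrt (by positivity)]
  rw [Fin.sum_univ_succ]
  simp [coordMap_snd, Real.norm_eq_abs, sq_abs]

example (n : ℕ) (x : EuclideanSpace ℝ (Fin (n+1))) :
    (inner ℝ x (EuclideanSpace.single (0 : Fin (n+1)) (1:ℝ)) : ℝ) = x 0 := by
  rw [EuclideanSpace.inner_single_right]
  simp

example (n : ℕ) : ‖EuclideanSpace.single (0 : Fin (n+1)) (1:ℝ)‖ = 1 := by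
  rw [EuclideanSpace.norm_single]; norm_num

example (n : ℕ) (f : EuclideanSpace ℝ (Fin (n+1)) ≃ₗᵢ[ℝ] EuclideanSpace ℝ (Fin (n+1)))
    (x y : EuclideanSpace ℝ (Fin (n+1))) : (inner ℝ (f x) (f y) : ℝ) = inner ℝ x y :=
  f.inner_map_map x y

section Sector
variable (n : ℕ)

local notation "E" => EuclideanSpace ℝ (Fin (n+1))

theorem sector_vol_upper (hn : 0 < n) (P : E) (hP : ‖P‖ = 1)
    (θ : ℝ) (hθ0 : 0 < θ) (hθ1 : θ < π/2) :
    volume {x : E | ‖x‖ ≤ 1 ∧ Real.cos θ * ‖x‖ ≤ (inner ℝ x P : ℝ)} ≤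
      ENNReal.ofReal (Real.tan θ ^ n / (n+1)) *
        volume (ball (0 : EuclideanSpace ℝ (Fin n)) 1) := by
  have hcos : 0 < Real.cos θ := Real.cos_pos_of_mem_Ioo ⟨by linarith [Real.pi_pos], hθ1⟩
  have htan : 0 < Real.tan θ := Real.tan_pos_of_pos_of_lt_pi_div_two hθ0 hθ1
  set e₀ : E := EuclideanSpace.single (0 : Fin (n+1)) (1:ℝ) with he₀
  have he₀n : ‖e₀‖ = 1 := by rw [he₀, EuclideanSpace.norm_single]; norm_num
  set f : E ≃ₗᵢ[ℝ] E := Submodule.reflection (ℝ ∙ (P - e₀))ᗮ with hf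
  have hfP : f P = e₀ := Submodule.reflection_sub (by rw [hP, he₀n])
  have hset : {x : E | ‖x‖ ≤ 1 ∧ Real.cos θ * ‖x‖ ≤ (inner ℝ x P : ℝ)} =
      f ⁻¹' {y : E | ‖y‖ ≤ 1 ∧ Real.cos θ * ‖y‖ ≤ (inner ℝ y e₀ : ℝ)} := by
    ext x
    simp only [Set.mem_setOf_eq, Set.mem_preimage, f.norm_map]
    rw [← hfP, f.inner_map_map]
  have hmeas0 : MeasurableSet {y : E | ‖y‖ ≤ 1 ∧ Real.cos θ * ‖y‖ ≤ (inner ℝ y e₀ : ℝ)} := by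
    apply MeasurableSet.inter
    · exact measurableSet_le measurable_norm measurable_const
    · exact measurableSet_le (measurable_norm.const_mul _)
        (Continuous.measurable (continuous_id.inner continuous_const))
  rw [hset, f.measurePreserving.measure_preimage hmeas0.nullMeasurableSet]
  -- now bound the e₀-sector
  have hsub : {y : E | ‖y‖ ≤ 1 ∧ Real.cos θ * ‖y‖ ≤ (inner ℝ y e₀ : ℝ)} ⊆
      (coordMap n) ⁻¹' {p : ℝ × EuclideanSpace ℝ (Fin n) | p.1 ∈ Set.Ioc 0 1 ∧
        (if false then ‖p.2‖ < p.1 * Real.tan θ else ‖p.2‖ ≤ p.1 * Real.tan θ)} ∪ {0} := by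
    intro y hy
    obtain ⟨hy1, hy2⟩ := hy
    have hinner : (inner ℝ y e₀ : ℝ) = y 0 := by
      rw [he₀, EuclideanSpace.inner_single_right]; simp
    rw [hinner] at hy2
    by_cases hy0 : y = 0
    · exact Or.inr (by simp [hy0])
    left
    have hny : 0 < ‖y‖ := norm_pos_iff.mpr hy0
    have hy0pos : 0 < y 0 := lt_of_lt_of_le (mul_pos hcos hny) hy2
    have hyle : y 0 ≤ ‖y‖ := by
      calc y 0 = (inner ℝ y e₀ : ℝ) := by rw [hinner]
      _ ≤ ‖y‖ * ‖e₀‖ := real_inner_le_norm y e₀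
      _ = ‖y‖ := by rw [he₀n, mul_one]
    simp only [Set.mem_preimage, Set.mem_setOf_eq, if_false, Bool.false_eq_true, coordMap_fst]
    refine ⟨⟨hy0pos, le_trans hyle hy1⟩, ?_⟩
    have hnsq := coordMap_norm n y
    have hkey : ‖(coordMap n y).2‖ ^ 2 ≤ (y 0 * Real.tan θ) ^ 2 := by
      rw [hnsq, Real.tan_eq_sin_div_cos]
      have h2c : (Real.cos θ * ‖y‖) ^ 2 ≤ (y 0) ^ 2 :=
        pow_le_pow_left₀ (mul_nonneg hcos.le hny.le) hy2 2
      have hs := Real.sin_sq_add_cos_sq θ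
      have hcne : Real.cos θ ≠ 0 := ne_of_gt hcos
      have e : (y 0 * (Real.sin θ / Real.cos θ)) ^ 2 * Real.cos θ ^ 2
          = y 0 ^ 2 * Real.sin θ ^ 2 := by
        field_simp
      have hc2 : (0:ℝ) < Real.cos θ ^ 2 := by positivity
      rw [← mul_le_mul_iff_of_pos_right hc2, e]
      nlinarith [h2c, hs, sq_nonneg (y 0)]
    have := le_of_pow_le_pow_left₀ two_ne_zero
      (mul_nonneg (le_of_lt hy0pos) (le_of_lt htan)) hkey
    exact this
  calc volume {y : E | ‖y‖ ≤ 1 ∧ Real.cos θ * ‖y‖ ≤ (inner ℝ y e₀ : ℝ)}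
      ≤ volume ((coordMap n) ⁻¹' {p : ℝ × EuclideanSpace ℝ (Fin n) | p.1 ∈ Set.Ioc 0 1 ∧
        (if false then ‖p.2‖ < p.1 * Real.tan θ else ‖p.2‖ ≤ p.1 * Real.tan θ)} ∪ {0}) :=
        measure_mono hsub
    _ ≤ volume ((coordMap n) ⁻¹' {p : ℝ × EuclideanSpace ℝ (Fin n) | p.1 ∈ Set.Ioc 0 1 ∧
        (if false then ‖p.2‖ < p.1 * Real.tan θ else ‖p.2‖ ≤ p.1 * Real.tan θ)}) + volume ({0} : Set E) :=
        measure_union_le _ _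
    _ = volume ((coordMap n) ⁻¹' {p : ℝ × EuclideanSpace ℝ (Fin n) | p.1 ∈ Set.Ioc 0 1 ∧
        (if false then ‖p.2‖ < p.1 * Real.tan θ else ‖p.2‖ ≤ p.1 * Real.tan θ)}) := by
        rw [measure_singleton, add_zero]
    _ = volume {p : ℝ × EuclideanSpace ℝ (Fin n) | p.1 ∈ Set.Ioc 0 1 ∧
        (if false then ‖p.2‖ < p.1 * Real.tan θ else ‖p.2‖ ≤ p.1 * Real.tan θ)} := by
        apply (coordMap_mp n).measure_preimage
        apply MeasurableSet.nullMeasurableSet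
        apply MeasurableSet.inter
        · exact measurable_fst measurableSet_Ioc
        · exact measurableSet_le measurable_snd.norm (measurable_fst.mul_const _)
    _ = ENNReal.ofReal (Real.tan θ ^ n * 1 ^ (n+1) / (n+1)) *
        volume (ball (0 : EuclideanSpace ℝ (Fin n)) 1) := volSlab n hn _ _ htan one_pos false
    _ = ENNReal.ofReal (Real.tan θ ^ n / (n+1)) *
        volume (ball (0 : EuclideanSpace ℝ (Fin n)) 1) := by rw [one_pow, mul_one]


theorem sector_vol_lower (hn : 0 < n) (P : E) (hP : ‖P‖ = 1)
    (θ : ℝ) (hθ0 : 0 < θ) (hθ1 : θ < π/2) :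
    ENNReal.ofReal (Real.sin θ ^ n * Real.cos θ / (n+1)) *
        volume (ball (0 : EuclideanSpace ℝ (Fin n)) 1)
      ≤ volume {x : E | ‖x‖ ≤ 1 ∧ Real.cos θ * ‖x‖ < (inner ℝ x P : ℝ)} := by
  have hcos : 0 < Real.cos θ := Real.cos_pos_of_mem_Ioo ⟨by linarith [Real.pi_pos], hθ1⟩
  have htan : 0 < Real.tan θ := Real.tan_pos_of_pos_of_lt_pi_div_two hθ0 hθ1
  have hcne : Real.cos θ ≠ 0 := ne_of_gt hcos
  set e₀ : E := EuclideanSpace.single (0 : Fin (n+1)) (1:ℝ) with he₀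
  have he₀n : ‖e₀‖ = 1 := by rw [he₀, EuclideanSpace.norm_single]; norm_num
  set f : E ≃ₗᵢ[ℝ] E := Submodule.reflection (ℝ ∙ (P - e₀))ᗮ with hf
  have hfP : f P = e₀ := Submodule.reflection_sub (by rw [hP, he₀n])
  have hset : {x : E | ‖x‖ ≤ 1 ∧ Real.cos θ * ‖x‖ < (inner ℝ x P : ℝ)} =
      f ⁻¹' {y : E | ‖y‖ ≤ 1 ∧ Real.cos θ * ‖y‖ < (inner ℝ y e₀ : ℝ)} := by
    ext x
    simp only [Set.mem_setOf_eq, Set.mem_preimage, f.norm_map]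
    rw [← hfP, f.inner_map_map]
  have hmeas0 : MeasurableSet {y : E | ‖y‖ ≤ 1 ∧ Real.cos θ * ‖y‖ < (inner ℝ y e₀ : ℝ)} := by
    apply MeasurableSet.inter
    · exact measurableSet_le measurable_norm measurable_const
    · exact measurableSet_lt (measurable_norm.const_mul _)
        (Continuous.measurable (continuous_id.inner continuous_const))
  rw [hset, f.measurePreserving.measure_preimage hmeas0.nullMeasurableSet]
  have hsub : (coordMap n) ⁻¹' {p : ℝ × EuclideanSpace ℝ (Fin n) | p.1 ∈ Set.Ioc 0 (Real.cos θ) ∧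
      (if true then ‖p.2‖ < p.1 * Real.tan θ else ‖p.2‖ ≤ p.1 * Real.tan θ)} ⊆
      {y : E | ‖y‖ ≤ 1 ∧ Real.cos θ * ‖y‖ < (inner ℝ y e₀ : ℝ)} := by
    intro y hy
    simp only [Set.mem_preimage, Set.mem_setOf_eq, if_true, coordMap_fst] at hy
    obtain ⟨⟨hy0pos, hy0le⟩, hylt⟩ := hy
    have hinner : (inner ℝ y e₀ : ℝ) = y 0 := by
      rw [he₀, EuclideanSpace.inner_single_right]; simp
    have hnsq := coordMap_norm n y
    have hklt : ‖y‖ ^ 2 < (y 0 / Real.cos θ) ^ 2 := by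
      have h1 : ‖(coordMap n y).2‖ ^ 2 < (y 0 * Real.tan θ) ^ 2 := by
        apply pow_lt_pow_left₀ hylt (norm_nonneg _) two_ne_zero
      rw [hnsq] at h1
      have hs := Real.sin_sq_add_cos_sq θ
      rw [Real.tan_eq_sin_div_cos] at h1
      have e1 : (y 0 * (Real.sin θ / Real.cos θ)) ^ 2 * Real.cos θ ^ 2
          = y 0 ^ 2 * Real.sin θ ^ 2 := by field_simp
      have e2 : (y 0 / Real.cos θ) ^ 2 * Real.cos θ ^ 2 = y 0 ^ 2 := by field_simp
      have hc2 : (0:ℝ) < Real.cos θ ^ 2 := by positivity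
      rw [← mul_lt_mul_iff_of_pos_right hc2, e2]
      nlinarith [h1, hs, sq_nonneg (y 0)]
    have hlt : ‖y‖ < y 0 / Real.cos θ := by
      apply lt_of_pow_lt_pow_left₀ 2 (by positivity) hklt
    constructor
    · calc ‖y‖ ≤ y 0 / Real.cos θ := hlt.le
        _ ≤ Real.cos θ / Real.cos θ := by
            gcongr
        _ = 1 := div_self hcne
    · rw [hinner]
      calc Real.cos θ * ‖y‖ < Real.cos θ * (y 0 / Real.cos θ) := by
            exact mul_lt_mul_of_pos_left hlt hcos
        _ = y 0 := by field_simp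
  calc ENNReal.ofReal (Real.sin θ ^ n * Real.cos θ / (n+1)) *
        volume (ball (0 : EuclideanSpace ℝ (Fin n)) 1)
      = ENNReal.ofReal (Real.tan θ ^ n * Real.cos θ ^ (n+1) / (n+1)) *
        volume (ball (0 : EuclideanSpace ℝ (Fin n)) 1) := by
        congr 2
        rw [Real.tan_eq_sin_div_cos, div_pow, pow_succ]
        field_simp
    _ = volume {p : ℝ × EuclideanSpace ℝ (Fin n) | p.1 ∈ Set.Ioc 0 (Real.cos θ) ∧
        (if true then ‖p.2‖ < p.1 * Real.tan θ else ‖p.2‖ ≤ p.1 * Real.tan θ)} :=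
        (volSlab n hn _ _ htan hcos true).symm
    _ = volume ((coordMap n) ⁻¹' {p : ℝ × EuclideanSpace ℝ (Fin n) | p.1 ∈ Set.Ioc 0 (Real.cos θ) ∧
        (if true then ‖p.2‖ < p.1 * Real.tan θ else ‖p.2‖ ≤ p.1 * Real.tan θ)}) := by
        refine ((coordMap_mp n).measure_preimage ?_).symm
        apply MeasurableSet.nullMeasurableSet
        apply MeasurableSet.inter
        · exact measurable_fst measurableSet_Ioc
        · exact measurableSet_lt measurable_snd.norm (measurable_fst.mul_const _)
    _ ≤ volume {y : E | ‖y‖ ≤ 1 ∧ Real.cos θ * ‖y‖ < (inner ℝ y e₀ : ℝ)} := measure_mono hsub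

end Sector

theorem inner_gt_of_close {E : Type*} [NormedAddCommGroup E] [InnerProductSpace ℝ E]
    (u P Q : E) (hu : ‖u‖ = 1) (hP : ‖P‖ = 1) (hQ : ‖Q‖ = 1) (c : ℝ) (hc : 0 ≤ c)
    (ha : c < (inner ℝ u P : ℝ)) (hb : c < (inner ℝ u Q : ℝ)) :
    2 * c ^ 2 - 1 < (inner ℝ P Q : ℝ) := by
  set a : ℝ := inner ℝ u P with haa
  set b : ℝ := inner ℝ u Q with hbb
  have hPu : (inner ℝ P u : ℝ) = a := real_inner_comm u P ▸ rfl
  have hQu : (inner ℝ Q u : ℝ) = b := real_inner_comm u Q ▸ rfl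
  have huu : (inner ℝ u u : ℝ) = 1 := by
    rw [real_inner_self_eq_norm_mul_norm, hu]; norm_num
  have ha1 : a ≤ 1 := by
    have := real_inner_le_norm u P; rw [hu, hP] at this; simpa using this
  have hb1 : b ≤ 1 := by
    have := real_inner_le_norm u Q; rw [hu, hQ] at this; simpa using this
  have hexp : (inner ℝ (P - a • u) (Q - b • u) : ℝ) = (inner ℝ P Q : ℝ) - a * b := by
    simp only [inner_sub_left, inner_sub_right, real_inner_smul_left, real_inner_smul_right,
      hPu, hQu, huu, ← haa, ← hbb]
    ring
  have hnP : ‖P - a • u‖ ^ 2 = 1 - a ^ 2 := by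
    rw [norm_sub_sq_real, real_inner_smul_right, hPu, norm_smul, hu, hP]
    simp [Real.norm_eq_abs]
    ring
  have hnQ : ‖Q - b • u‖ ^ 2 = 1 - b ^ 2 := by
    rw [norm_sub_sq_real, real_inner_smul_right, hQu, norm_smul, hu, hQ]
    simp [Real.norm_eq_abs]
    ring
  have habs : |(inner ℝ (P - a • u) (Q - b • u) : ℝ)| ≤ ‖P - a • u‖ * ‖Q - b • u‖ :=
    abs_real_inner_le_norm _ _
  have hprod : ‖P - a • u‖ * ‖Q - b • u‖ ≤ 1 - c ^ 2 := by
    nlinarith [norm_nonneg (P - a • u), norm_nonneg (Q - b • u),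
      sq_nonneg (‖P - a • u‖ - ‖Q - b • u‖), ha, hb, hc]
  have h6 : c ^ 2 < a * b := by nlinarith
  have := abs_le.mp habs
  nlinarith [this.1, hexp, hprod, h6]

theorem tendsto_tan_div : Tendsto (fun ω => Real.tan ω / ω) (𝓝[>] (0:ℝ)) (𝓝 1) := by
  have h : HasDerivAt Real.tan 1 0 := by
    have := Real.hasDerivAt_tan (by simp : Real.cos 0 ≠ 0)
    simpa using this
  have := hasDerivAt_iff_tendsto_slope.mp h
  have h2 : Tendsto (slope Real.tan 0) (𝓝[>] 0) (𝓝 1) :=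
    this.mono_left (nhdsWithin_mono _ (fun x hx => ne_of_gt hx))
  refine h2.congr' ?_
  filter_upwards [self_mem_nhdsWithin] with x hx
  simp [slope_def_field, Real.tan_zero, div_eq_div_iff]

theorem tendsto_sin_div : Tendsto (fun ω => Real.sin ω / ω) (𝓝[>] (0:ℝ)) (𝓝 1) := by
  have h : HasDerivAt Real.sin 1 0 := by simpa using Real.hasDerivAt_sin 0
  have := hasDerivAt_iff_tendsto_slope.mp h
  have h2 : Tendsto (slope Real.sin 0) (𝓝[>] 0) (𝓝 1) :=
    this.mono_left (nhdsWithin_mono _ (fun x hx => ne_of_gt hx))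
  refine h2.congr' ?_
  filter_upwards [self_mem_nhdsWithin] with x hx
  simp [slope_def_field]

theorem exists_omega0 (n : ℕ) (ε : ℝ) (hε : 0 < ε) :
    ∃ ω₀ : ℝ, 0 < ω₀ ∧ ω₀ ≤ π/2 ∧ ∀ ω : ℝ, 0 < ω → ω < ω₀ →
      ω < π/2 ∧ Real.tan ω ^ n ≤ (1+ε) * ω ^ n ∧
        (ω/2) ^ n / 2 ≤ Real.sin (ω/2) ^ n * Real.cos (ω/2) := by
  have ht : Tendsto (fun ω => (Real.tan ω / ω) ^ n) (𝓝[>] (0:ℝ)) (𝓝 1) := by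
    simpa using tendsto_tan_div.pow n
  have hev1 : ∀ᶠ ω in 𝓝[>] (0:ℝ), (Real.tan ω / ω) ^ n < 1 + ε :=
    ht.eventually_lt_const (by linarith)
  have htt : Tendsto (fun ω : ℝ => ω / 2) (𝓝[>] (0:ℝ)) (𝓝[>] (0:ℝ)) := by
    apply tendsto_nhdsWithin_of_tendsto_nhds_of_eventually_within
    · have : Tendsto (fun ω : ℝ => ω / 2) (𝓝 0) (𝓝 (0/2)) :=
        ((continuous_id : Continuous (id : ℝ → ℝ)).div_const 2).tendsto 0
      simpa using this.mono_left nhdsWithin_le_nhds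
    · filter_upwards [self_mem_nhdsWithin] with x hx
      exact div_pos hx (two_pos (α := ℝ))
  have hs : Tendsto (fun t : ℝ => (Real.sin t / t) ^ n * Real.cos t) (𝓝[>] (0:ℝ)) (𝓝 1) := by
    have h1 : Tendsto (fun t : ℝ => (Real.sin t / t) ^ n) (𝓝[>] (0:ℝ)) (𝓝 1) := by
      simpa using tendsto_sin_div.pow n
    have h2 : Tendsto Real.cos (𝓝[>] (0:ℝ)) (𝓝 1) := by
      simpa using (Real.continuous_cos.tendsto 0).mono_left nhdsWithin_le_nhds
    simpa using h1.mul h2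
  have hev2 : ∀ᶠ ω in 𝓝[>] (0:ℝ),
      (1:ℝ)/2 < (Real.sin (ω/2) / (ω/2)) ^ n * Real.cos (ω/2) :=
    (hs.comp htt).eventually_const_lt (by norm_num)
  have hev3 : ∀ᶠ ω in 𝓝[>] (0:ℝ), ω ∈ Set.Ioo 0 (π/2) :=
    Ioo_mem_nhdsGT_of_mem ⟨le_refl 0, pi_div_two_pos⟩
  obtain ⟨u, hu, hsub⟩ :=
    mem_nhdsGT_iff_exists_Ioo_subset.mp (hev1.and (hev2.and hev3))
  refine ⟨min u (π/2), lt_min hu pi_div_two_pos, min_le_right _ _, ?_⟩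
  intro ω hω0 hωlt
  have hωu : ω ∈ Set.Ioo 0 u := ⟨hω0, lt_of_lt_of_le hωlt (min_le_left _ _)⟩
  obtain ⟨p1, p2, p3⟩ := hsub hωu
  have hωpi : ω < π/2 := p3.2
  refine ⟨hωpi, ?_, ?_⟩
  · have hpow : Real.tan ω ^ n / ω ^ n < 1 + ε := by
      rw [← div_pow]; exact p1
    have hωn : (0:ℝ) < ω ^ n := by positivity
    calc Real.tan ω ^ n = Real.tan ω ^ n / ω ^ n * ω ^ n := by field_simp
      _ ≤ (1+ε) * ω ^ n := by apply mul_le_mul_of_nonneg_right hpow.le hωn.le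
  · have ht2 : (0:ℝ) < (ω/2) ^ n := by positivity
    have : (1:ℝ)/2 < Real.sin (ω/2) ^ n / (ω/2) ^ n * Real.cos (ω/2) := by
      rw [← div_pow]; exact p2
    calc (ω/2) ^ n / 2 = (1/2) * (ω/2) ^ n := by ring
      _ ≤ (Real.sin (ω/2) ^ n / (ω/2) ^ n * Real.cos (ω/2)) * (ω/2) ^ n :=
          mul_le_mul_of_nonneg_right this.le ht2.le
      _ = Real.sin (ω/2) ^ n * Real.cos (ω/2) := by field_simp


/-- Lemma 2. For `0 < ε < 1` there is `0 < ω₀ ≤ π/2` such that for any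
`0 < ω < ω₀`, any saturated point set on `S^{d-1}` for `ω` has cardinality `m` with
`(1/(1+ε)) (dκ_d/κ_{d-1}) ω^{-(d-1)} ≤ m ≤ (1+ε) 8^{(d-1)/2} (dκ_d/κ_{d-1}) ω^{-(d-1)}`. -/
theorem saturated_set_card_bounds (d : ℕ) (hd : 3 ≤ d) (ε : ℝ) (hε0 : 0 < ε) (hε1 : ε < 1) :
    ∃ ω₀ : ℝ, 0 < ω₀ ∧ ω₀ ≤ π / 2 ∧
      ∀ ω : ℝ, 0 < ω → ω < ω₀ →
        ∀ S : Finset (EuclideanSpace ℝ (Fin d)),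
          (∀ P ∈ S, P ∈ sphere (0 : EuclideanSpace ℝ (Fin d)) 1) →
          -- pairwise spherical distances are at least `ω`
          (∀ P ∈ S, ∀ Q ∈ S, P ≠ Q → ω ≤ Real.arccos (inner ℝ P Q : ℝ)) →
          -- no further point can be added, i.e. the set is saturated
          (¬ ∃ Q ∈ sphere (0 : EuclideanSpace ℝ (Fin d)) 1,
            ∀ P ∈ S, ω ≤ Real.arccos (inner ℝ Q P : ℝ)) →
          (1 / (1 + ε)) * ((d : ℝ) * unitBallVolume d / unitBallVolume (d - 1)) *
              ω ^ (-((d : ℤ) - 1)) ≤ (S.card : ℝ) ∧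
            (S.card : ℝ) ≤ (1 + ε) * (8 : ℝ) ^ (((d : ℝ) - 1) / 2) *
              ((d : ℝ) * unitBallVolume d / unitBallVolume (d - 1)) *
              ω ^ (-((d : ℤ) - 1)) := by
  obtain ⟨n, rfl⟩ : ∃ n, d = n + 1 := ⟨d - 1, by omega⟩
  have hn2 : 2 ≤ n := by omega
  have hn : 0 < n := by omega
  obtain ⟨ω₀, hω₀pos, hω₀le, hprops⟩ := exists_omega0 n ε hε0
  refine ⟨ω₀, hω₀pos, hω₀le, ?_⟩
  intro ω hω0 hωlt S hsphere hsep hsat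
  obtain ⟨hωpi, htann, hsinn⟩ := hprops ω hω0 hωlt
  have hθ0 : 0 < ω/2 := by linarith
  have hθpi : ω/2 < π/2 := by linarith
  haveI : Nontrivial (EuclideanSpace ℝ (Fin (n+1))) := by
    apply Module.nontrivial_of_finrank_pos (R := ℝ)
    rw [finrank_euclideanSpace_fin]; omega
  set m := S.card with hm
  set Bn := volume (ball (0 : EuclideanSpace ℝ (Fin n)) 1) with hBn
  set Bd := volume (ball (0 : EuclideanSpace ℝ (Fin (n+1))) 1) with hBd
  have hBd_pos : 0 < Bd := measure_ball_pos _ _ one_pos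
  have hBn_pos : 0 < Bn := measure_ball_pos _ _ one_pos
  have hBd_ne : Bd ≠ ⊤ := measure_ball_lt_top.ne
  have hBn_ne : Bn ≠ ⊤ := measure_ball_lt_top.ne
  set κd := Bd.toReal with hκd
  set κn := Bn.toReal with hκn
  have hκd_pos : 0 < κd := ENNReal.toReal_pos hBd_pos.ne' hBd_ne
  have hκn_pos : 0 < κn := ENNReal.toReal_pos hBn_pos.ne' hBn_ne
  have hκd_eq : unitBallVolume (n+1) = κd := rfl
  have hκn_eq : unitBallVolume (n+1-1) = κn := rfl
  have hnormP : ∀ P ∈ S, ‖P‖ = 1 := fun P hP => by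
    have := hsphere P hP; rwa [mem_sphere_zero_iff_norm] at this
  have hωn_pos : (0:ℝ) < ω ^ n := by positivity
  -- ### Covering bound ###
  have hcover : closedBall (0 : EuclideanSpace ℝ (Fin (n+1))) 1 \ {0} ⊆
      ⋃ P ∈ S, {x : EuclideanSpace ℝ (Fin (n+1)) | ‖x‖ ≤ 1 ∧ Real.cos ω * ‖x‖ ≤ (inner ℝ x P : ℝ)} := by
    rintro x ⟨hx1, hx2⟩
    rw [mem_closedBall_zero_iff] at hx1
    have hx0 : x ≠ 0 := by simpa using hx2
    have hnx : 0 < ‖x‖ := norm_pos_iff.mpr hx0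
    set Qx : EuclideanSpace ℝ (Fin (n+1)) := ‖x‖⁻¹ • x with hQxdef
    have hQx : ‖Qx‖ = 1 := by
      rw [hQxdef, norm_smul, Real.norm_eq_abs, abs_of_pos (inv_pos.mpr hnx)]
      field_simp
    push_neg at hsat
    obtain ⟨P, hPS, hPlt⟩ := hsat Qx (by rwa [mem_sphere_zero_iff_norm])
    have hPn : ‖P‖ = 1 := hnormP P hPS
    have hz1 : |(inner ℝ Qx P : ℝ)| ≤ 1 := by
      have := abs_real_inner_le_norm Qx P; rwa [hQx, hPn, mul_one] at this
    have hgt : Real.cos ω < (inner ℝ Qx P : ℝ) := by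
      have h1 : Real.cos ω < Real.cos (Real.arccos (inner ℝ Qx P)) := by
        apply Real.cos_lt_cos_of_nonneg_of_le_pi (Real.arccos_nonneg _)
          (by linarith [Real.pi_pos]) hPlt
      rwa [Real.cos_arccos (abs_le.mp hz1).1 (abs_le.mp hz1).2] at h1
    refine Set.mem_biUnion hPS ⟨hx1, ?_⟩
    have hip : (inner ℝ x P : ℝ) = ‖x‖ * (inner ℝ Qx P : ℝ) := by
      rw [hQxdef, real_inner_smul_left]
      field_simp
    rw [hip, mul_comm (Real.cos ω) ‖x‖]
    exact mul_le_mul_of_nonneg_left hgt.le hnx.le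
  have hBd_le : Bd ≤ (m : ENNReal) * (ENNReal.ofReal (Real.tan ω ^ n / (n+1)) * Bn) := by
    calc Bd = volume (closedBall (0 : EuclideanSpace ℝ (Fin (n+1))) 1) := by
          rw [Measure.addHaar_closedBall_eq_addHaar_ball]
      _ = volume (closedBall (0 : EuclideanSpace ℝ (Fin (n+1))) 1 \ {0}) := (measure_diff_null (measure_singleton 0)).symm
      _ ≤ volume (⋃ P ∈ S, {x : EuclideanSpace ℝ (Fin (n+1)) | ‖x‖ ≤ 1 ∧ Real.cos ω * ‖x‖ ≤ (inner ℝ x P : ℝ)}) :=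
          measure_mono hcover
      _ ≤ ∑ P ∈ S, volume {x : EuclideanSpace ℝ (Fin (n+1)) | ‖x‖ ≤ 1 ∧ Real.cos ω * ‖x‖ ≤ (inner ℝ x P : ℝ)} :=
          measure_biUnion_finset_le S _
      _ ≤ ∑ _P ∈ S, ENNReal.ofReal (Real.tan ω ^ n / (n+1)) * Bn :=
          Finset.sum_le_sum fun P hP =>
            sector_vol_upper n hn P (hnormP P hP) ω hω0 (by linarith)
      _ = (m : ENNReal) * (ENNReal.ofReal (Real.tan ω ^ n / (n+1)) * Bn) := by
          rw [Finset.sum_const, nsmul_eq_mul]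
  have hcov_real : κd ≤ (m : ℝ) * (Real.tan ω ^ n / (n+1)) * κn := by
    have hne : (m : ENNReal) * (ENNReal.ofReal (Real.tan ω ^ n / (n+1)) * Bn) ≠ ⊤ :=
      ENNReal.mul_ne_top (ENNReal.natCast_ne_top m)
        (ENNReal.mul_ne_top ENNReal.ofReal_ne_top hBn_ne)
    have htanpos : 0 < Real.tan ω := Real.tan_pos_of_pos_of_lt_pi_div_two hω0 hωpi
    have h := (ENNReal.toReal_le_toReal hBd_ne hne).mpr hBd_le
    rw [ENNReal.toReal_mul, ENNReal.toReal_mul, ENNReal.toReal_natCast,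
      ENNReal.toReal_ofReal (div_nonneg (pow_nonneg htanpos.le n) (by positivity))] at h
    rw [mul_assoc]
    exact h
  -- ### Packing bound ###
  have hdisj : (↑S : Set (EuclideanSpace ℝ (Fin (n+1)))).PairwiseDisjoint
      (fun P => {x : EuclideanSpace ℝ (Fin (n+1)) | ‖x‖ ≤ 1 ∧ Real.cos (ω/2) * ‖x‖ < (inner ℝ x P : ℝ)}) := by
    intro P hPS Q hQS hPQ
    rw [Function.onFun]
    rw [Set.disjoint_left]
    rintro x ⟨hx1, hx2⟩ ⟨hx1', hx2'⟩
    have hcosh : 0 < Real.cos (ω/2) := Real.cos_pos_of_mem_Ioo ⟨by linarith [Real.pi_pos], hθpi⟩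
    have hx0 : x ≠ 0 := by
      rintro rfl
      simp at hx2
    have hnx : 0 < ‖x‖ := norm_pos_iff.mpr hx0
    set u : EuclideanSpace ℝ (Fin (n+1)) := ‖x‖⁻¹ • x with hudef
    have hu : ‖u‖ = 1 := by
      rw [hudef, norm_smul, Real.norm_eq_abs, abs_of_pos (inv_pos.mpr hnx)]; field_simp
    have hPn : ‖P‖ = 1 := hnormP P hPS
    have hQn : ‖Q‖ = 1 := hnormP Q hQS
    have hiP : Real.cos (ω/2) < (inner ℝ u P : ℝ) := by
      rw [hudef, real_inner_smul_left]
      rw [lt_inv_mul_iff₀ hnx]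
      linarith [hx2]
    have hiQ : Real.cos (ω/2) < (inner ℝ u Q : ℝ) := by
      rw [hudef, real_inner_smul_left]
      rw [lt_inv_mul_iff₀ hnx]
      linarith [hx2']
    have hkey := inner_gt_of_close u P Q hu hPn hQn (Real.cos (ω/2)) hcosh.le hiP hiQ
    have hcω : Real.cos ω = 2 * Real.cos (ω/2) ^ 2 - 1 := by
      have := Real.cos_two_mul (ω/2)
      rw [show 2 * (ω/2) = ω by ring] at this
      exact this
    have hgt : Real.cos ω < (inner ℝ P Q : ℝ) := by rw [hcω]; exact hkey
    have hsep' := hsep P hPS Q hQS hPQ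
    have hz1 : |(inner ℝ P Q : ℝ)| ≤ 1 := by
      have := abs_real_inner_le_norm P Q; rwa [hPn, hQn, mul_one] at this
    have hle : (inner ℝ P Q : ℝ) ≤ Real.cos ω := by
      have h := Real.cos_le_cos_of_nonneg_of_le_pi hω0.le (Real.arccos_le_pi _) hsep'
      rwa [Real.cos_arccos (abs_le.mp hz1).1 (abs_le.mp hz1).2] at h
    linarith
  have hmeasD : ∀ P ∈ S, MeasurableSet
      {x : EuclideanSpace ℝ (Fin (n+1)) | ‖x‖ ≤ 1 ∧ Real.cos (ω/2) * ‖x‖ < (inner ℝ x P : ℝ)} := by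
    intro P _
    apply MeasurableSet.inter
    · exact measurableSet_le measurable_norm measurable_const
    · exact measurableSet_lt (measurable_norm.const_mul _)
        (Continuous.measurable (continuous_id.inner continuous_const))
  have hpack : (m : ENNReal) * (ENNReal.ofReal (Real.sin (ω/2) ^ n * Real.cos (ω/2) / (n+1)) * Bn)
      ≤ Bd := by
    calc (m : ENNReal) * (ENNReal.ofReal (Real.sin (ω/2) ^ n * Real.cos (ω/2) / (n+1)) * Bn)
        = ∑ _P ∈ S, ENNReal.ofReal (Real.sin (ω/2) ^ n * Real.cos (ω/2) / (n+1)) * Bn := by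
          rw [Finset.sum_const, nsmul_eq_mul]
      _ ≤ ∑ P ∈ S, volume {x : EuclideanSpace ℝ (Fin (n+1)) | ‖x‖ ≤ 1 ∧ Real.cos (ω/2) * ‖x‖ < (inner ℝ x P : ℝ)} :=
          Finset.sum_le_sum fun P hP =>
            sector_vol_lower n hn P (hnormP P hP) (ω/2) hθ0 hθpi
      _ = volume (⋃ P ∈ S, {x : EuclideanSpace ℝ (Fin (n+1)) | ‖x‖ ≤ 1 ∧ Real.cos (ω/2) * ‖x‖ < (inner ℝ x P : ℝ)}) :=
          (measure_biUnion_finset hdisj hmeasD).symm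
      _ ≤ volume (closedBall (0 : EuclideanSpace ℝ (Fin (n+1))) 1) := by
          apply measure_mono
          intro x hx
          simp only [Set.mem_iUnion, Set.mem_setOf_eq] at hx
          obtain ⟨P, _, h1, _⟩ := hx
          rwa [mem_closedBall_zero_iff]
      _ = Bd := by rw [Measure.addHaar_closedBall_eq_addHaar_ball]
  have hpack_real : (m : ℝ) * (Real.sin (ω/2) ^ n * Real.cos (ω/2) / (n+1)) * κn ≤ κd := by
    have hne : (m : ENNReal) * (ENNReal.ofReal (Real.sin (ω/2) ^ n * Real.cos (ω/2) / (n+1)) * Bn)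
        ≠ ⊤ :=
      ENNReal.mul_ne_top (ENNReal.natCast_ne_top m)
        (ENNReal.mul_ne_top ENNReal.ofReal_ne_top hBn_ne)
    have hsinpos : 0 < Real.sin (ω/2) := Real.sin_pos_of_pos_of_lt_pi hθ0 (by linarith [Real.pi_pos])
    have hcoshpos : 0 < Real.cos (ω/2) := Real.cos_pos_of_mem_Ioo ⟨by linarith [Real.pi_pos], hθpi⟩
    have h := (ENNReal.toReal_le_toReal hne hBd_ne).mpr hpack
    rw [ENNReal.toReal_mul, ENNReal.toReal_mul, ENNReal.toReal_natCast,
      ENNReal.toReal_ofReal (div_nonneg (mul_nonneg (pow_nonneg hsinpos.le n) hcoshpos.le)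
        (by positivity))] at h
    rw [mul_assoc]
    exact h
  clear_value m κd κn Bn Bd
  -- ### Final arithmetic ###
  have hexp : ω ^ (-(((n+1 : ℕ) : ℤ) - 1)) = (ω ^ n)⁻¹ := by
    have : (-(((n+1 : ℕ) : ℤ) - 1)) = -(n : ℤ) := by push_cast; ring
    rw [this, zpow_neg, zpow_natCast]
  rw [hκd_eq, hκn_eq, hexp]
  have hd1 : ((n+1 : ℕ) : ℝ) = (n : ℝ) + 1 := by push_cast; ring
  constructor
  · -- lower bound
    have step : κd ≤ (m : ℝ) * ((1+ε) * ω ^ n / (n+1)) * κn := by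
      refine le_trans hcov_real ?_
      gcongr <;> first | exact hκn_pos.le | exact htann | positivity
    have heq : 1 / (1 + ε) * (((n+1:ℕ) : ℝ) * κd / κn) * (ω ^ n)⁻¹
        = (((n:ℝ)+1) * κd) / ((1+ε) * κn * ω ^ n) := by
      rw [hd1]; field_simp
    rw [heq, div_le_iff₀ (by positivity)]
    have h := mul_le_mul_of_nonneg_left step (show (0:ℝ) ≤ (n:ℝ)+1 by positivity)
    calc ((n:ℝ)+1) * κd ≤ ((n:ℝ)+1) * ((m : ℝ) * ((1+ε) * ω ^ n / ((n:ℝ)+1)) * κn) := h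
      _ = (m : ℝ) * ((1+ε) * κn * ω ^ n) := by field_simp
  · -- upper bound
    have h8 : (2:ℝ) ^ (n+1) ≤ (8 : ℝ) ^ ((((n+1:ℕ):ℝ) - 1) / 2) := by
      have he1 : ((((n+1:ℕ)):ℝ) - 1)/2 = (n:ℝ)/2 := by push_cast; ring
      rw [he1]
      have h83 : (8:ℝ) = (2:ℝ) ^ (3:ℝ) := by
        rw [show (3:ℝ) = ((3:ℕ):ℝ) by norm_num, Real.rpow_natCast]; norm_num
      rw [h83, ← Real.rpow_natCast 2 (n+1), ← Real.rpow_mul (by norm_num)]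
      apply Real.rpow_le_rpow_left_iff (by norm_num : (1:ℝ) < 2) |>.mpr
      have : (2:ℝ) ≤ (n:ℝ) := by exact_mod_cast hn2
      push_cast
      linarith
    have step : (m : ℝ) * ((ω/2) ^ n / 2 / (n+1)) * κn ≤ κd := by
      refine le_trans ?_ hpack_real
      gcongr <;> first | exact hκn_pos.le | exact hsinn | positivity
    have hA_pos : (0:ℝ) < (ω/2) ^ n / 2 / ((n:ℝ)+1) * κn := by positivity
    have hstep2 : (m : ℝ) ≤ κd / ((ω/2) ^ n / 2 / ((n:ℝ)+1) * κn) := by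
      rw [le_div_iff₀ hA_pos]
      calc (m:ℝ) * ((ω/2) ^ n / 2 / ((n:ℝ)+1) * κn)
          = (m:ℝ) * ((ω/2) ^ n / 2 / ((n:ℝ)+1)) * κn := by ring
        _ ≤ κd := by
            refine le_trans (le_of_eq ?_) step
            push_cast
            ring
    have hdiv_eq : κd / ((ω/2) ^ n / 2 / ((n:ℝ)+1) * κn)
        = (2:ℝ)^(n+1) * (((n:ℝ)+1) * κd / κn) * (ω ^ n)⁻¹ := by
      rw [div_pow]
      field_simp
      ring
    rw [hdiv_eq] at hstep2
    refine le_trans hstep2 ?_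
    have hfac : (0:ℝ) ≤ (((n:ℝ)+1) * κd / κn) * (ω ^ n)⁻¹ := by positivity
    calc (2:ℝ)^(n+1) * (((n:ℝ)+1) * κd / κn) * (ω ^ n)⁻¹
        = 1 * ((2:ℝ)^(n+1)) * ((((n:ℝ)+1) * κd / κn) * (ω ^ n)⁻¹) := by ring
      _ ≤ (1+ε) * ((8 : ℝ) ^ ((((n+1:ℕ):ℝ) - 1) / 2)) * ((((n:ℝ)+1) * κd / κn) * (ω ^ n)⁻¹) := by
          gcongr
          linarith
      _ = (1 + ε) * (8 : ℝ) ^ ((((n+1:ℕ):ℝ) - 1) / 2) * (((n+1:ℕ):ℝ) * κd / κn) * (ω ^ n)⁻¹ := by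
          rw [hd1]; ring
end

section
/- Let n ≥ 1 be an integer and let v_1, …, v_n be unit vectors in ℝ³ in general position, meaning that every subset of {v_1, …, v_n} of cardinality at most 3 is linearly independent (so the corresponding great circles are pairwise distinct and no three of them pass through a common point). Then the complement in S² of the union of the n great circles, S² \ ⋃_{i=1}^n {x ∈ S² : ⟨x, v_i⟩ = 0}, has exactly n² − n + 2 connected components. -/
open Metric Real

namespace GC

noncomputable section

abbrev V3 := EuclideanSpace ℝ (Fin 3)

/-- `x` strictly realizes the sign vector `s` with respect to the normals `g`. -/
def realize {m : ℕ} (g : Fin m → V3) (s : Fin m → Bool) (x : V3) : Prop :=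
  ∀ i, if s i then (0:ℝ) < inner ℝ x (g i) else (inner ℝ x (g i) : ℝ) < 0

lemma realize_pos_iff {m : ℕ} {g : Fin m → V3} {s : Fin m → Bool} {x : V3}
    (h : realize g s x) (i : Fin m) : (0 < (inner ℝ x (g i) : ℝ)) ↔ s i = true := by
  have := h i
  cases hs : s i <;> rw [hs] at this <;>
    simp only [Bool.false_eq_true, if_false, if_true] at this
  · exact iff_of_false (not_lt.2 this.le) (by simp)
  · exact iff_of_true this rfl

lemma realize_ne_zero {m : ℕ} {g : Fin m → V3} {s : Fin m → Bool} {x : V3}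
    (h : realize g s x) (i : Fin m) : (inner ℝ x (g i) : ℝ) ≠ 0 := by
  have := h i
  cases hs : s i <;> rw [hs] at this <;>
    simp only [Bool.false_eq_true, if_false, if_true] at this
  · exact ne_of_lt this
  · exact ne_of_gt this

lemma realize_nonzero {m : ℕ} {g : Fin m → V3} {s : Fin m → Bool} {x : V3}
    (h : realize g s x) (i : Fin m) : x ≠ 0 := by
  intro h0
  exact realize_ne_zero h i (by rw [h0, inner_zero_left])

lemma realize_decide {m : ℕ} {g : Fin m → V3} {x : V3}
    (h : ∀ i, (inner ℝ x (g i) : ℝ) ≠ 0) :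
    realize g (fun i => decide (0 < (inner ℝ x (g i) : ℝ))) x := by
  intro i
  by_cases hp : 0 < (inner ℝ x (g i) : ℝ)
  · rw [if_pos (by simpa using hp)]
    exact hp
  · rw [if_neg (by simpa using hp)]
    exact lt_of_le_of_ne (not_lt.1 hp) (h i)

lemma realize_eq_decide {m : ℕ} {g : Fin m → V3} {s : Fin m → Bool} {x : V3}
    (h : realize g s x) : s = fun i => decide (0 < (inner ℝ x (g i) : ℝ)) := by
  funext i
  by_cases hp : 0 < (inner ℝ x (g i) : ℝ)
  · rw [(realize_pos_iff h i).1 hp, decide_eq_true hp]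
  · have hf : s i = false := by
      cases hs : s i
      · rfl
      · exact absurd ((realize_pos_iff h i).2 hs) hp
    rw [hf, decide_eq_false hp]

lemma realize_smul {m : ℕ} {g : Fin m → V3} {s : Fin m → Bool} {x : V3}
    (h : realize g s x) {c : ℝ} (hc : 0 < c) : realize g s (c • x) := by
  intro i
  have h1 := h i
  rw [real_inner_smul_left]
  cases hs : s i <;> rw [hs] at h1 <;>
    simp only [Bool.false_eq_true, if_false, if_true] at h1 ⊢
  · exact mul_neg_of_pos_of_neg hc h1
  · exact mul_pos hc h1

lemma realize_combo {m : ℕ} {g : Fin m → V3} {s : Fin m → Bool} {x y : V3}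
    (hx : realize g s x) (hy : realize g s y) {a b : ℝ}
    (ha : 0 ≤ a) (hb : 0 ≤ b) (hab : a + b = 1) :
    realize g s (a • x + b • y) := by
  intro i
  have h1 := hx i
  have h2 := hy i
  rw [inner_add_left, real_inner_smul_left, real_inner_smul_left]
  cases hs : s i <;> rw [hs] at h1 h2 <;>
    simp only [Bool.false_eq_true, if_false, if_true] at h1 h2 ⊢
  · rcases eq_or_lt_of_le ha with h | h
    · have hb1 : b = 1 := by linarith
      rw [← h, hb1]; simpa using h2
    · have : a * (inner ℝ x (g i) : ℝ) < 0 := mul_neg_of_pos_of_neg h h1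
      nlinarith [mul_nonpos_of_nonneg_of_nonpos hb h2.le]
  · rcases eq_or_lt_of_le ha with h | h
    · have hb1 : b = 1 := by linarith
      rw [← h, hb1]; simpa using h2
    · nlinarith [mul_nonneg hb h2.le, mul_pos h h1]

lemma realize_isOpen {m : ℕ} (g : Fin m → V3) (s : Fin m → Bool) :
    IsOpen {x : V3 | realize g s x} := by
  have : {x : V3 | realize g s x} =
      ⋂ i, (fun x : V3 => (inner ℝ x (g i) : ℝ)) ⁻¹'
        (if s i then Set.Ioi 0 else Set.Iio 0) := by
    ext x
    simp only [Set.mem_iInter, Set.mem_preimage, Set.mem_setOf_eq, realize]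
    refine forall_congr' fun i => ?_
    cases hs : s i <;>
      simp only [Bool.false_eq_true, if_false, if_true, Set.mem_Ioi, Set.mem_Iio]
  rw [this]
  refine isOpen_iInter_of_finite fun i => ?_
  have hc : Continuous fun x : V3 => (inner ℝ x (g i) : ℝ) :=
    (continuous_id.inner continuous_const)
  cases hs : s i <;>
    simp only [Bool.false_eq_true, if_false, if_true]
  · exact isOpen_Iio.preimage hc
  · exact isOpen_Ioi.preimage hc

lemma realize_convex {m : ℕ} (g : Fin m → V3) (s : Fin m → Bool) :
    Convex ℝ {x : V3 | realize g s x} := by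
  intro x hx y hy a b ha hb hab
  exact realize_combo hx hy ha hb hab


/-- Perturbation: from a point on the hyperplane `⟪·,u⟫ = 0` inside an open cell we can move to
both sides of the hyperplane staying in the cell. -/
lemma perturb {m : ℕ} {g : Fin m → V3} {t : Fin m → Bool} {x y u : V3}
    (hx : realize g t x) (hxu : (inner ℝ x u : ℝ) = 0) (hyu : (inner ℝ y u : ℝ) ≠ 0) :
    ∃ δ : ℝ, realize g t (x + δ • y) ∧ realize g t (x - δ • y) ∧
      0 < (inner ℝ (x + δ • y) u : ℝ) ∧ (inner ℝ (x - δ • y) u : ℝ) < 0 := by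
  obtain ⟨ε, hε, hball⟩ := Metric.isOpen_iff.1 (realize_isOpen g t) x hx
  set c : ℝ := inner ℝ y u with hc
  set δ₀ : ℝ := ε / (2 * (‖y‖ + 1)) with hδ₀
  have hδ₀pos : 0 < δ₀ := by
    apply div_pos hε
    positivity
  set δ : ℝ := if 0 < c then δ₀ else -δ₀ with hδ
  have hδne : δ ≠ 0 := by
    rw [hδ]; split
    · exact ne_of_gt hδ₀pos
    · exact neg_ne_zero.2 (ne_of_gt hδ₀pos)
  have habs : |δ| = δ₀ := by
    rw [hδ]; split
    · exact abs_of_pos hδ₀pos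
    · rw [abs_neg]; exact abs_of_pos hδ₀pos
  have hdist : ∀ η : ℝ, |η| = δ₀ → dist (x + η • y) x < ε := by
    intro η hη
    rw [dist_eq_norm, add_sub_cancel_left, norm_smul, Real.norm_eq_abs, hη]
    rw [hδ₀, div_mul_eq_mul_div, div_lt_iff₀ (by positivity)]
    nlinarith [norm_nonneg y, hε]
  have hmem : ∀ η : ℝ, |η| = δ₀ → realize g t (x + η • y) := by
    intro η hη
    exact hball (by simpa [Metric.mem_ball] using hdist η hη)
  have hδc : 0 < δ * c := by
    rcases hyu.lt_or_gt with h | h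
    · rw [hδ, if_neg (not_lt.2 h.le)]
      exact mul_pos_of_neg_of_neg (neg_neg_of_pos hδ₀pos) h
    · rw [hδ, if_pos h]
      exact mul_pos hδ₀pos h
  refine ⟨δ, hmem δ habs, ?_, ?_, ?_⟩
  · have := hmem (-δ) (by rw [abs_neg]; exact habs)
    simpa [sub_eq_add_neg, neg_smul] using this
  · rw [inner_add_left, hxu, real_inner_smul_left, zero_add]
    exact hδc
  · rw [inner_sub_left, hxu, real_inner_smul_left, zero_sub]
    simpa using hδc

/-- Intermediate value: a cell containing points on both sides of a hyperplane contains
a point on the hyperplane. -/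
lemma ivt {m : ℕ} {g : Fin m → V3} {t : Fin m → Bool} {x₁ x₂ u : V3}
    (h1 : realize g t x₁) (h2 : realize g t x₂)
    (hu1 : 0 < (inner ℝ x₁ u : ℝ)) (hu2 : (inner ℝ x₂ u : ℝ) < 0) :
    ∃ a b : ℝ, 0 ≤ a ∧ 0 ≤ b ∧ a + b = 1 ∧ realize g t (a • x₂ + b • x₁) ∧
      (inner ℝ (a • x₂ + b • x₁) u : ℝ) = 0 := by
  set f : ℝ → ℝ := fun c => inner ℝ ((1 - c) • x₂ + c • x₁) u with hf
  have hcont : ContinuousOn f (Set.Icc 0 1) := by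
    apply Continuous.continuousOn
    apply Continuous.inner _ continuous_const
    exact ((continuous_const.sub continuous_id).smul continuous_const).add
      (continuous_id.smul continuous_const)
  have hf0 : f 0 = inner ℝ x₂ u := by simp [hf]
  have hf1 : f 1 = inner ℝ x₁ u := by simp [hf]
  have h0mem : (0:ℝ) ∈ Set.Icc (f 0) (f 1) := by
    rw [hf0, hf1]; exact ⟨hu2.le, hu1.le⟩
  obtain ⟨c, hc, hfc⟩ := intermediate_value_Icc (by norm_num : (0:ℝ) ≤ 1) hcont h0mem
  exact ⟨1 - c, c, by linarith [hc.2], hc.1, by ring,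
    realize_combo h2 h1 (by linarith [hc.2]) hc.1 (by ring), hfc⟩

open Classical in
/-- Number of nonempty open cells of the arrangement `g` inside `H`. -/
def N {m : ℕ} (H : Submodule ℝ V3) (g : Fin m → V3) : ℕ :=
  (Finset.univ.filter fun s : Fin m → Bool => ∃ x ∈ H, realize g s x).card

open Classical in
lemma split {m : ℕ} (H : Submodule ℝ V3) (g : Fin (m+1) → V3)
    (hu : ∃ y ∈ H, (inner ℝ y (g (Fin.last m)) : ℝ) ≠ 0) :
    N H g = N H (g ∘ Fin.castSucc) +
      (Finset.univ.filter fun t : Fin m → Bool =>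
        ∃ x ∈ H, (inner ℝ x (g (Fin.last m)) : ℝ) = 0 ∧
          realize (g ∘ Fin.castSucc) t x).card := by
  classical
  obtain ⟨y, hyH, hyu⟩ := hu
  set u := g (Fin.last m) with hu_def
  set g' : Fin m → V3 := g ∘ Fin.castSucc with hg'
  have hsplit : ∀ (s : Fin (m+1) → Bool) (x : V3), realize g s x ↔
      (realize g' (s ∘ Fin.castSucc) x ∧
        (if s (Fin.last m) then (0:ℝ) < inner ℝ x u else (inner ℝ x u:ℝ) < 0)) := by
    intro s x
    constructor
    · intro h
      exact ⟨fun i => h (Fin.castSucc i), h (Fin.last m)⟩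
    · rintro ⟨h1, h2⟩ i
      refine Fin.lastCases ?_ ?_ i
      · exact h2
      · exact fun j => h1 j
  set P : (Fin (m+1) → Bool) → Prop := fun s => ∃ x ∈ H, realize g s x with hP
  set Bp : Finset (Fin m → Bool) := Finset.univ.filter fun t =>
      ∃ x ∈ H, realize g' t x ∧ (0:ℝ) < inner ℝ x u with hBp
  set Bn : Finset (Fin m → Bool) := Finset.univ.filter fun t =>
      ∃ x ∈ H, realize g' t x ∧ (inner ℝ x u:ℝ) < 0 with hBn
  set B : Finset (Fin m → Bool) := Finset.univ.filter fun t =>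
      ∃ x ∈ H, realize g' t x with hB
  set C : Finset (Fin m → Bool) := Finset.univ.filter fun t =>
      ∃ x ∈ H, (inner ℝ x u : ℝ) = 0 ∧ realize g' t x with hC
  -- Step 1 : partition the top count according to the last sign
  have step1 : N H g =
      ((Finset.univ.filter P).filter fun s => s (Fin.last m) = true).card +
      ((Finset.univ.filter P).filter fun s => s (Fin.last m) = false).card := by
    rw [N]
    rw [← Finset.card_filter_add_card_filter_not
      (s := Finset.univ.filter P) (p := fun s => s (Fin.last m) = true)]
    congr 1
    have : (Finset.filter (fun a => ¬a (Fin.last m) = true) (Finset.univ.filter P)) =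
        Finset.filter (fun s => s (Fin.last m) = false) (Finset.univ.filter P) :=
      Finset.filter_congr (by intro s _; simp [Bool.not_eq_true])
    rw [this]
  -- Step 2 : the positive part is in bijection with Bp
  have step2 : ((Finset.univ.filter P).filter fun s => s (Fin.last m) = true).card
      = Bp.card := by
    apply Finset.card_bij' (fun s _ => s ∘ Fin.castSucc) (fun t _ => Fin.snoc t true)
    · intro s hs
      simp only [Finset.mem_filter, Finset.mem_univ, true_and, hP] at hs
      obtain ⟨⟨x, hxH, hre⟩, hlast⟩ := hs
      rw [hsplit, hlast, if_pos rfl] at hre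
      simp only [hBp, Finset.mem_filter, Finset.mem_univ, true_and]
      exact ⟨x, hxH, hre.1, hre.2⟩
    · intro t ht
      simp only [hBp, Finset.mem_filter, Finset.mem_univ, true_and] at ht
      obtain ⟨x, hxH, hre, hpos⟩ := ht
      simp only [Finset.mem_filter, Finset.mem_univ, true_and, hP]
      constructor
      · refine ⟨x, hxH, ?_⟩
        rw [hsplit]
        constructor
        · have : (Fin.snoc t true : Fin (m+1) → Bool) ∘ Fin.castSucc = t := by
            funext j; simp [Fin.snoc_castSucc]
          rw [this]; exact hre
        · rw [Fin.snoc_last, if_pos rfl]; exact hpos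
      · exact Fin.snoc_last _ _
    · intro s hs
      simp only [Finset.mem_filter, Finset.mem_univ, true_and, hP] at hs
      funext i
      refine Fin.lastCases ?_ ?_ i
      · rw [Fin.snoc_last, hs.2]
      · intro j; rw [Fin.snoc_castSucc]; rfl
    · intro t ht
      funext j; simp [Fin.snoc_castSucc]
  -- Step 2' : the negative part is in bijection with Bn
  have step2' : ((Finset.univ.filter P).filter fun s => s (Fin.last m) = false).card
      = Bn.card := by
    apply Finset.card_bij' (fun s _ => s ∘ Fin.castSucc) (fun t _ => Fin.snoc t false)
    · intro s hs
      simp only [Finset.mem_filter, Finset.mem_univ, true_and, hP] at hs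
      obtain ⟨⟨x, hxH, hre⟩, hlast⟩ := hs
      rw [hsplit, hlast] at hre
      simp only [Bool.false_eq_true, if_false] at hre
      simp only [hBn, Finset.mem_filter, Finset.mem_univ, true_and]
      exact ⟨x, hxH, hre.1, hre.2⟩
    · intro t ht
      simp only [hBn, Finset.mem_filter, Finset.mem_univ, true_and] at ht
      obtain ⟨x, hxH, hre, hneg⟩ := ht
      simp only [Finset.mem_filter, Finset.mem_univ, true_and, hP]
      constructor
      · refine ⟨x, hxH, ?_⟩
        rw [hsplit]
        constructor
        · have : (Fin.snoc t false : Fin (m+1) → Bool) ∘ Fin.castSucc = t := by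
            funext j; simp [Fin.snoc_castSucc]
          rw [this]; exact hre
        · rw [Fin.snoc_last]
          simp only [Bool.false_eq_true, if_false]
          exact hneg
      · exact Fin.snoc_last _ _
    · intro s hs
      simp only [Finset.mem_filter, Finset.mem_univ, true_and, hP] at hs
      funext i
      refine Fin.lastCases ?_ ?_ i
      · rw [Fin.snoc_last, hs.2]
      · intro j; rw [Fin.snoc_castSucc]; rfl
    · intro t ht
      funext j; simp [Fin.snoc_castSucc]
  -- Step 3 : inclusion-exclusion
  have hunion : Bp ∪ Bn = B := by
    ext t
    simp only [hBp, hBn, hB, Finset.mem_union, Finset.mem_filter, Finset.mem_univ,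
      true_and]
    constructor
    · rintro (⟨x, hxH, hre, _⟩ | ⟨x, hxH, hre, _⟩) <;> exact ⟨x, hxH, hre⟩
    · rintro ⟨x, hxH, hre⟩
      rcases lt_trichotomy (inner ℝ x u : ℝ) 0 with h | h | h
      · exact Or.inr ⟨x, hxH, hre, h⟩
      · obtain ⟨δ, hr1, hr2, hp, hn⟩ := perturb hre h hyu
        exact Or.inl ⟨x + δ • y, H.add_mem hxH (H.smul_mem δ hyH), hr1, hp⟩
      · exact Or.inl ⟨x, hxH, hre, h⟩
  have hinter : Bp ∩ Bn = C := by
    ext t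
    simp only [hBp, hBn, hC, Finset.mem_inter, Finset.mem_filter, Finset.mem_univ,
      true_and]
    constructor
    · rintro ⟨⟨x₁, h1H, h1re, h1pos⟩, ⟨x₂, h2H, h2re, h2neg⟩⟩
      obtain ⟨a, b, ha, hb, hab, hre, hz⟩ := ivt h1re h2re h1pos h2neg
      exact ⟨a • x₂ + b • x₁, H.add_mem (H.smul_mem a h2H) (H.smul_mem b h1H), hz, hre⟩
    · rintro ⟨x, hxH, hz, hre⟩
      obtain ⟨δ, hr1, hr2, hp, hn⟩ := perturb hre hz hyu
      exact ⟨⟨x + δ • y, H.add_mem hxH (H.smul_mem δ hyH), hr1, hp⟩,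
        ⟨x - δ • y, H.sub_mem hxH (H.smul_mem δ hyH), hr2, hn⟩⟩
  have step3 : Bp.card + Bn.card = B.card + C.card := by
    rw [← hunion, ← hinter]
    exact (Finset.card_union_add_card_inter Bp Bn).symm
  rw [step1, step2, step2', step3]
  rfl
lemma decide_pos_smul {c f : ℝ} (hc : 0 < c) : decide (0 < c * f) = decide (0 < f) := by
  by_cases h : 0 < f
  · rw [decide_eq_true h, decide_eq_true (mul_pos hc h)]
  · rw [decide_eq_false h, decide_eq_false]
    exact not_lt.2 (mul_nonpos_of_nonneg_of_nonpos hc.le (not_lt.1 h))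

lemma decide_neg_smul {c f : ℝ} (hc : c < 0) (hf : f ≠ 0) :
    decide (0 < c * f) = !decide (0 < f) := by
  rcases hf.lt_or_gt with h | h
  · rw [decide_eq_false (not_lt.2 h.le), decide_eq_true (mul_pos_of_neg_of_neg hc h)]
    rfl
  · rw [decide_eq_true h,
      decide_eq_false (not_lt.2 (mul_nonpos_of_nonpos_of_nonneg hc.le h.le))]
    rfl

lemma decide_neg {f : ℝ} (hf : f ≠ 0) : decide (0 < -f) = !decide (0 < f) := by
  have h : -f = (-1) * f := by ring
  rw [h, decide_neg_smul (by norm_num) hf]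

lemma count_one (H : Submodule ℝ V3) (g : Fin 1 → V3)
    (hnz : ∃ y ∈ H, (inner ℝ y (g 0) : ℝ) ≠ 0) : N H g = 2 := by
  classical
  obtain ⟨y, hyH, hyu⟩ := hnz
  have hpos : ∃ z ∈ H, 0 < (inner ℝ z (g 0) : ℝ) := by
    rcases hyu.lt_or_gt with h | h
    · exact ⟨-y, H.neg_mem hyH, by rw [inner_neg_left]; simpa using h⟩
    · exact ⟨y, hyH, h⟩
  have hneg : ∃ z ∈ H, (inner ℝ z (g 0) : ℝ) < 0 := by
    rcases hyu.lt_or_gt with h | h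
    · exact ⟨y, hyH, h⟩
    · exact ⟨-y, H.neg_mem hyH, by rw [inner_neg_left]; simpa using h⟩
  rw [N]
  have huniv : (Finset.univ.filter fun s : Fin 1 → Bool => ∃ x ∈ H, realize g s x)
      = Finset.univ := by
    apply Finset.filter_true_of_mem
    intro s _
    cases hs : s 0
    · obtain ⟨z, hzH, hz⟩ := hneg
      refine ⟨z, hzH, fun i => ?_⟩
      have : i = 0 := Subsingleton.elim i 0
      rw [this, hs]
      simpa using hz
    · obtain ⟨z, hzH, hz⟩ := hpos
      refine ⟨z, hzH, fun i => ?_⟩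
      have : i = 0 := Subsingleton.elim i 0
      rw [this, hs]
      simpa using hz
  rw [huniv, Finset.card_univ]
  simp

lemma count_dim2 (H : Submodule ℝ V3) (hH : Module.finrank ℝ H = 2) :
    ∀ m : ℕ, 1 ≤ m → ∀ g : Fin m → V3,
    (∀ i, ∃ y ∈ H, (inner ℝ y (g i) : ℝ) ≠ 0) →
    (∀ i j, i ≠ j → ∀ x ∈ H, (inner ℝ x (g i) : ℝ) = 0 → (inner ℝ x (g j) : ℝ) = 0 → x = 0) →
    N H g = 2 * m := by
  intro m
  induction m with
  | zero => intro hm; omega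
  | succ m ih =>
    intro _ g hnz hpair
    classical
    by_cases hm0 : m = 0
    · subst hm0
      rw [count_one H g ⟨(hnz 0).choose, (hnz 0).choose_spec⟩]

    · have hm1 : 1 ≤ m := Nat.one_le_iff_ne_zero.2 hm0
      set u := g (Fin.last m) with hu_def
      set g' : Fin m → V3 := g ∘ Fin.castSucc with hg'
      rw [split H g (hnz (Fin.last m))]
      rw [ih hm1 g' (fun i => hnz _)
        (fun i j hij => hpair _ _ (fun h => hij (Fin.castSucc_injective m h)))]
      -- it remains to show that the restricted count is 2
      have hcard2 : (Finset.univ.filter fun t : Fin m → Bool =>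
          ∃ x ∈ H, (inner ℝ x u : ℝ) = 0 ∧ realize g' t x).card = 2 := by
        -- the line H ∩ u^⊥ is one-dimensional, spanned by y₀
        set ℓ : H →ₗ[ℝ] ℝ := ((innerSL ℝ u : V3 →L[ℝ] ℝ) : V3 →ₗ[ℝ] ℝ).comp H.subtype
          with hℓdef
        have hℓ : ∀ z : H, ℓ z = (inner ℝ u (z : V3) : ℝ) := fun z => rfl
        obtain ⟨y, hyH, hyu⟩ := hnz (Fin.last m)
        have hrange : Module.finrank ℝ (LinearMap.range ℓ) = 1 := by
          have hle : Module.finrank ℝ (LinearMap.range ℓ) ≤ 1 := by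
            have := Submodule.finrank_le (LinearMap.range ℓ)
            simpa using this
          have hnt : Nontrivial (LinearMap.range ℓ) := by
            refine ⟨⟨⟨ℓ ⟨y, hyH⟩, LinearMap.mem_range_self _ _⟩, 0, ?_⟩⟩
            intro hcontra
            apply hyu
            have : ℓ ⟨y, hyH⟩ = 0 := by
              simpa using congrArg Subtype.val hcontra
            rw [hℓ] at this
            rw [real_inner_comm]
            exact this
          have hpos : 0 < Module.finrank ℝ (LinearMap.range ℓ) :=
            Module.finrank_pos_iff.2 hnt
          omega
        have hker : Module.finrank ℝ (LinearMap.ker ℓ) = 1 := by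
          have := LinearMap.finrank_range_add_finrank_ker ℓ
          rw [hrange, hH] at this
          omega
        obtain ⟨v0, hv0ne, hv0span⟩ := finrank_eq_one_iff'.1 hker
        set y₀ : V3 := ((v0 : H) : V3) with hy₀def
        have hy₀H : y₀ ∈ H := (v0 : H).2
        have hy₀u : (inner ℝ y₀ u : ℝ) = 0 := by
          have := v0.2
          rw [LinearMap.mem_ker, hℓ] at this
          rw [real_inner_comm]
          exact this
        have hy₀ne : y₀ ≠ 0 := by
          intro h
          apply hv0ne
          apply Subtype.ext
          apply Subtype.ext
          exact h
        have hmul : ∀ z ∈ H, (inner ℝ z u : ℝ) = 0 → ∃ c : ℝ, z = c • y₀ := by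
          intro z hz hzu
          have hwk : (⟨z, hz⟩ : H) ∈ LinearMap.ker ℓ := by
            rw [LinearMap.mem_ker, hℓ]
            rw [real_inner_comm] at hzu
            exact hzu
          obtain ⟨c, hc⟩ := hv0span ⟨⟨z, hz⟩, hwk⟩
          refine ⟨c, ?_⟩
          have := congrArg (fun t : LinearMap.ker ℓ => ((t : H) : V3)) hc
          simpa using this.symm
        have hfy : ∀ i : Fin m, (inner ℝ y₀ (g' i) : ℝ) ≠ 0 := by
          intro i h
          exact hy₀ne (hpair (Fin.castSucc i) (Fin.last m)
            (Fin.ne_last_of_lt (Fin.castSucc_lt_last i)) y₀ hy₀H h hy₀u)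
        set a : Fin m → Bool := fun i => decide (0 < (inner ℝ y₀ (g' i) : ℝ)) with ha
        set b : Fin m → Bool := fun i => !(a i) with hb
        have hrea : realize g' a y₀ := realize_decide hfy
        have hreb : realize g' b (-y₀) := by
          have hbeq : b = fun i => decide (0 < (inner ℝ (-y₀) (g' i) : ℝ)) := by
            funext i
            rw [hb, ha]
            rw [inner_neg_left, decide_neg (hfy i)]
          rw [hbeq]
          exact realize_decide (fun i => by rw [inner_neg_left]; simpa using hfy i)
        have hab : a ≠ b := by
          intro h
          have := congrFun h ⟨0, hm1⟩
          rw [hb] at this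
          simp at this
        have hset : (Finset.univ.filter fun t : Fin m → Bool =>
            ∃ x ∈ H, (inner ℝ x u : ℝ) = 0 ∧ realize g' t x) = {a, b} := by
          ext t
          simp only [Finset.mem_filter, Finset.mem_univ, true_and, Finset.mem_insert,
            Finset.mem_singleton]
          constructor
          · rintro ⟨x, hxH, hxu, hre⟩
            have hxne : x ≠ 0 := realize_nonzero hre ⟨0, hm1⟩
            obtain ⟨c, hc⟩ := hmul x hxH hxu
            have hcne : c ≠ 0 := by
              intro h0
              rw [h0, zero_smul] at hc
              exact hxne hc
            have hteq := realize_eq_decide hre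
            rcases hcne.lt_or_gt with hcneg | hcpos
            · right
              rw [hteq, hb]
              funext i
              rw [ha]
              rw [hc, real_inner_smul_left, decide_neg_smul hcneg (hfy i)]
            · left
              rw [hteq, ha]
              funext i
              rw [hc, real_inner_smul_left, decide_pos_smul hcpos]
          · rintro (rfl | rfl)
            · exact ⟨y₀, hy₀H, hy₀u, hrea⟩
            · refine ⟨-y₀, H.neg_mem hy₀H, by rw [inner_neg_left, hy₀u, neg_zero], hreb⟩
        rw [hset]
        exact Finset.card_pair hab
      rw [hcard2]
      ring
lemma count_dim3 :
    ∀ n : ℕ, 1 ≤ n → ∀ v : Fin n → V3, (∀ i, v i ≠ 0) →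
    (∀ i j, i ≠ j → ∀ c : ℝ, v i ≠ c • v j) →
    (∀ i j k, i ≠ j → i ≠ k → j ≠ k → ∀ x : V3,
      (inner ℝ x (v i) : ℝ) = 0 → (inner ℝ x (v j) : ℝ) = 0 → (inner ℝ x (v k) : ℝ) = 0 →
      x = 0) →
    N ⊤ v = n ^ 2 - n + 2 := by
  intro n
  induction n with
  | zero => intro h; omega
  | succ n ih =>
    intro _ v hv0 hpair htriple
    classical
    by_cases hn0 : n = 0
    · subst hn0
      rw [count_one ⊤ v ⟨v 0, trivial, by
        rw [real_inner_self_eq_norm_sq]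
        simpa using hv0 0⟩]
      norm_num
    · have hn1 : 1 ≤ n := Nat.one_le_iff_ne_zero.2 hn0
      set u := v (Fin.last n) with hu_def
      set v' : Fin n → V3 := v ∘ Fin.castSucc with hv'
      have huu : (inner ℝ u u : ℝ) ≠ 0 := by
        rw [real_inner_self_eq_norm_sq]
        exact pow_ne_zero 2 (norm_ne_zero_iff.2 (hv0 (Fin.last n)))
      rw [split ⊤ v ⟨u, trivial, huu⟩]
      rw [ih hn1 v' (fun i => hv0 _)
        (fun i j hij => hpair _ _ (fun h => hij (Fin.castSucc_injective n h)))
        (fun i j k hij hik hjk => htriple _ _ _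
          (fun h => hij (Fin.castSucc_injective n h))
          (fun h => hik (Fin.castSucc_injective n h))
          (fun h => hjk (Fin.castSucc_injective n h)))]
      -- identify the restricted count with the 2-dimensional arrangement count
      set Hu : Submodule ℝ V3 := (Submodule.span ℝ {u})ᗮ with hHu
      have hmemHu : ∀ x : V3, x ∈ Hu ↔ (inner ℝ x u : ℝ) = 0 := by
        intro x
        rw [hHu, Submodule.mem_orthogonal_singleton_iff_inner_left]
      have hfilter_eq : (Finset.univ.filter fun t : Fin n → Bool =>
          ∃ x ∈ (⊤ : Submodule ℝ V3), (inner ℝ x (v (Fin.last n)) : ℝ) = 0 ∧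
            realize (v ∘ Fin.castSucc) t x) =
          (Finset.univ.filter fun t : Fin n → Bool => ∃ x ∈ Hu, realize v' t x) := by
        apply Finset.filter_congr
        intro t _
        constructor
        · rintro ⟨x, -, hxu, hre⟩
          exact ⟨x, (hmemHu x).2 hxu, hre⟩
        · rintro ⟨x, hxHu, hre⟩
          exact ⟨x, trivial, (hmemHu x).1 hxHu, hre⟩
      rw [hfilter_eq]
      have hdim : Module.finrank ℝ Hu = 2 := by
        have h1 : Module.finrank ℝ (Submodule.span ℝ {u}) = 1 :=
          finrank_span_singleton (hv0 (Fin.last n))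
        have h2 := Submodule.finrank_add_finrank_orthogonal (Submodule.span ℝ {u})
        rw [h1, finrank_euclideanSpace, Fintype.card_fin] at h2
        rw [hHu]
        omega
      have hnz : ∀ i : Fin n, ∃ y ∈ Hu, (inner ℝ y (v' i) : ℝ) ≠ 0 := by
        intro i
        by_contra hcon
        push_neg at hcon
        have hvi : v' i ∈ Huᗮ := by
          rw [Submodule.mem_orthogonal]
          intro y hy
          exact hcon y hy
        rw [hHu, Submodule.orthogonal_orthogonal] at hvi
        obtain ⟨c, hc⟩ := Submodule.mem_span_singleton.1 hvi
        exact hpair (Fin.castSucc i) (Fin.last n)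
          (Fin.ne_last_of_lt (Fin.castSucc_lt_last i)) c hc.symm
      have hpair2 : ∀ i j : Fin n, i ≠ j → ∀ x ∈ Hu,
          (inner ℝ x (v' i) : ℝ) = 0 → (inner ℝ x (v' j) : ℝ) = 0 → x = 0 := by
        intro i j hij x hxHu hxi hxj
        exact htriple (Fin.castSucc i) (Fin.castSucc j) (Fin.last n)
          (fun h => hij (Fin.castSucc_injective n h))
          (Fin.ne_last_of_lt (Fin.castSucc_lt_last i))
          (Fin.ne_last_of_lt (Fin.castSucc_lt_last j))
          x hxi hxj ((hmemHu x).1 hxHu)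
      have := count_dim2 Hu hdim n hn1 v' hnz hpair2
      rw [show (Finset.univ.filter fun t : Fin n → Bool =>
          ∃ x ∈ Hu, realize v' t x).card = N Hu v' from rfl, this]
      -- arithmetic
      have hle : n ≤ n ^ 2 := by nlinarith
      have hsq : (n + 1) ^ 2 = n ^ 2 + 2 * n + 1 := by ring
      omega
section Topology

variable {n : ℕ} (v : Fin n → V3)

/-- The complement of the union of the great circles. -/
def Kset : Set V3 :=
  sphere (0 : V3) 1 \ ⋃ i, {x : V3 | (inner ℝ x (v i) : ℝ) = 0}

lemma mem_Kset {x : V3} :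
    x ∈ Kset v ↔ x ∈ sphere (0:V3) 1 ∧ ∀ i, (inner ℝ x (v i) : ℝ) ≠ 0 := by
  simp [Kset]

lemma sphereCell_eq_image (hn : 1 ≤ n) (s : Fin n → Bool) :
    {x : V3 | x ∈ sphere (0:V3) 1 ∧ realize v s x} =
      (fun x : V3 => ‖x‖⁻¹ • x) '' {x : V3 | realize v s x} := by
  ext x
  constructor
  · rintro ⟨hx1, hx2⟩
    refine ⟨x, hx2, ?_⟩
    rw [mem_sphere_zero_iff_norm] at hx1
    show ‖x‖⁻¹ • x = x
    rw [hx1]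
    norm_num
  · rintro ⟨z, hz, rfl⟩
    have hzne : z ≠ 0 := realize_nonzero hz ⟨0, hn⟩
    have hnorm : ‖z‖⁻¹ • z ∈ sphere (0:V3) 1 := by
      rw [mem_sphere_zero_iff_norm]
      exact norm_smul_inv_norm (𝕜 := ℝ) hzne
    exact ⟨hnorm, realize_smul hz (inv_pos.2 (norm_pos_iff.2 hzne))⟩

lemma sphereCell_isPreconnected (hn : 1 ≤ n) (s : Fin n → Bool) {x₀ : V3}
    (hx₀ : realize v s x₀) :
    IsPreconnected {x : V3 | x ∈ sphere (0:V3) 1 ∧ realize v s x} := by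
  rw [sphereCell_eq_image v hn s]
  have hpc : IsPathConnected {x : V3 | realize v s x} :=
    (realize_convex v s).isPathConnected ⟨x₀, hx₀⟩
  refine (IsPathConnected.image' hpc ?_).isConnected.isPreconnected
  apply ContinuousOn.fun_smul
  · exact continuous_norm.continuousOn.inv₀ fun x hx =>
      norm_ne_zero_iff.2 (realize_nonzero hx ⟨0, hn⟩)
  · exact continuousOn_id

/-- Sign vector of a point in the complement. -/
def sgn (x : ↥(Kset v)) : Fin n → Bool :=
  fun i => decide (0 < (inner ℝ (x : V3) (v i) : ℝ))

lemma realize_sgn (x : ↥(Kset v)) : realize v (sgn v x) (x : V3) :=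
  realize_decide fun i => ((mem_Kset v).1 x.2).2 i

lemma sgn_const_of_preconnected {S : Set ↥(Kset v)} (hS : IsPreconnected S)
    {p q : ↥(Kset v)} (hp : p ∈ S) (hq : q ∈ S) : sgn v p = sgn v q := by
  funext i
  have hcont : ContinuousOn (fun z : ↥(Kset v) => (inner ℝ (z : V3) (v i) : ℝ)) S :=
    (continuous_subtype_val.inner continuous_const).continuousOn
  have key : ∀ a b : ↥(Kset v), a ∈ S → b ∈ S →
      (inner ℝ (a : V3) (v i) : ℝ) < 0 → 0 < (inner ℝ (b : V3) (v i) : ℝ) → False := by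
    intro a b ha hb hva hvb
    have h0 : (0:ℝ) ∈ Set.Icc (inner ℝ (a : V3) (v i) : ℝ) (inner ℝ (b : V3) (v i) : ℝ) :=
      ⟨hva.le, hvb.le⟩
    obtain ⟨z, hzS, hz0⟩ := hS.intermediate_value ha hb hcont h0
    exact ((mem_Kset v).1 z.2).2 i hz0
  have hpne := ((mem_Kset v).1 p.2).2 i
  have hqne := ((mem_Kset v).1 q.2).2 i
  unfold sgn
  rcases hpne.lt_or_gt with h1 | h1 <;> rcases hqne.lt_or_gt with h2 | h2
  · rw [decide_eq_false (not_lt.2 h1.le), decide_eq_false (not_lt.2 h2.le)]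
  · exact absurd (key p q hp hq h1 h2) (by simp)
  · exact absurd (key q p hq hp h2 h1) (by simp)
  · rw [decide_eq_true h1, decide_eq_true h2]

lemma same_component_of_sgn (hn : 1 ≤ n) {x y : ↥(Kset v)} (h : sgn v x = sgn v y) :
    y ∈ connectedComponent x := by
  set s := sgn v x with hs
  set Csub : Set ↥(Kset v) := {z : ↥(Kset v) | realize v s (z : V3)} with hCsub
  have hximg : Subtype.val '' Csub = {w : V3 | w ∈ sphere (0:V3) 1 ∧ realize v s w} := by
    ext w
    constructor
    · rintro ⟨z, hz, rfl⟩
      exact ⟨((mem_Kset v).1 z.2).1, hz⟩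
    · rintro ⟨hw1, hw2⟩
      have hwK : w ∈ Kset v := (mem_Kset v).2 ⟨hw1, fun i => realize_ne_zero hw2 i⟩
      exact ⟨⟨w, hwK⟩, hw2, rfl⟩
  have hpre : IsPreconnected Csub := by
    rw [← Topology.IsInducing.subtypeVal.isPreconnected_image, hximg]
    exact sphereCell_isPreconnected v hn s (realize_sgn v x)
  have hxC : x ∈ Csub := realize_sgn v x
  have hyC : y ∈ Csub := by
    have := realize_sgn v y
    rw [← h] at this
    exact this
  exact hpre.subset_connectedComponent hxC hyC

lemma sgn_eq_of_mem_component {x y : ↥(Kset v)} (h : y ∈ connectedComponent x) :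
    sgn v x = sgn v y :=
  sgn_const_of_preconnected v isPreconnected_connectedComponent
    mem_connectedComponent h

end Topology
lemma pair_of_hgen {n : ℕ} {v : Fin n → V3}
    (hgen : ∀ s : Finset (Fin n), s.card ≤ 3 →
      LinearIndependent ℝ (fun i : s => v i))
    {i j : Fin n} (hij : i ≠ j) (c : ℝ) : v i ≠ c • v j := by
  intro hc
  classical
  have hcard : ({i, j} : Finset (Fin n)).card ≤ 3 :=
    (Finset.card_insert_le _ _).trans (by simp)
  have li := hgen {i, j} hcard
  have hmemi : i ∈ ({i, j} : Finset (Fin n)) := by simp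
  have hmemj : j ∈ ({i, j} : Finset (Fin n)) := by simp
  have he : Function.Injective
      (![⟨i, hmemi⟩, ⟨j, hmemj⟩] : Fin 2 → ↥({i, j} : Finset (Fin n))) := by
    intro a b hab
    fin_cases a <;> fin_cases b <;> simp_all [Subtype.ext_iff]
  have li2 := li.comp _ he
  rw [linearIndependent_fin2] at li2
  refine li2.2 c ?_
  show c • v j = v i
  exact hc.symm

lemma triple_of_hgen {n : ℕ} {v : Fin n → V3}
    (hgen : ∀ s : Finset (Fin n), s.card ≤ 3 →
      LinearIndependent ℝ (fun i : s => v i))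
    {i j k : Fin n} (hij : i ≠ j) (hik : i ≠ k) (hjk : j ≠ k) {x : V3}
    (hxi : (inner ℝ x (v i) : ℝ) = 0) (hxj : (inner ℝ x (v j) : ℝ) = 0)
    (hxk : (inner ℝ x (v k) : ℝ) = 0) : x = 0 := by
  classical
  have hcard : ({i, j, k} : Finset (Fin n)).card ≤ 3 := by
    have h1 := Finset.card_insert_le i ({j, k} : Finset (Fin n))
    have h2 := Finset.card_insert_le j ({k} : Finset (Fin n))
    have h3 : ({k} : Finset (Fin n)).card = 1 := Finset.card_singleton k
    omega
  have li := hgen {i, j, k} hcard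
  have hmemi : i ∈ ({i, j, k} : Finset (Fin n)) := by simp
  have hmemj : j ∈ ({i, j, k} : Finset (Fin n)) := by simp
  have hmemk : k ∈ ({i, j, k} : Finset (Fin n)) := by simp
  have he : Function.Injective
      (![⟨i, hmemi⟩, ⟨j, hmemj⟩, ⟨k, hmemk⟩] :
        Fin 3 → ↥({i, j, k} : Finset (Fin n))) := by
    intro a b hab
    fin_cases a <;> fin_cases b <;> simp_all [Subtype.ext_iff]
  have li3 := li.comp _ he
  have hspan := li3.span_eq_top_of_card_eq_finrank
    (by rw [finrank_euclideanSpace])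
  have hxmem : x ∈ Submodule.span ℝ (Set.range ((fun p : ↥({i, j, k} : Finset (Fin n)) => v ↑p) ∘
      ![⟨i, hmemi⟩, ⟨j, hmemj⟩, ⟨k, hmemk⟩])) := by
    rw [hspan]; trivial
  have hle : Submodule.span ℝ (Set.range ((fun p : ↥({i, j, k} : Finset (Fin n)) => v ↑p) ∘
      ![⟨i, hmemi⟩, ⟨j, hmemj⟩, ⟨k, hmemk⟩])) ≤
      LinearMap.ker ((innerSL ℝ x : V3 →L[ℝ] ℝ) : V3 →ₗ[ℝ] ℝ) := by
    rw [Submodule.span_le]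
    rintro _ ⟨t, rfl⟩
    fin_cases t
    · simpa using hxi
    · simpa using hxj
    · simpa using hxk
  have hx0 : (inner ℝ x x : ℝ) = 0 := hle hxmem
  exact inner_self_eq_zero.1 hx0


end

end GC

open GC in
/-- `n` great circles in general position on `S²` divide the sphere into
exactly `n² - n + 2` regions: the complement of their union has `n² - n + 2` connected
components. -/
theorem great_circles_general_position_regions (n : ℕ) (hn : 1 ≤ n)
    (v : Fin n → EuclideanSpace ℝ (Fin 3)) (hv : ∀ i, ‖v i‖ = 1)
    (hgen : ∀ s : Finset (Fin n), s.card ≤ 3 →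
      LinearIndependent ℝ (fun i : s => v i)) :
    Nat.card (ConnectedComponents
      ↥(sphere (0 : EuclideanSpace ℝ (Fin 3)) 1 \
        ⋃ i, {x : EuclideanSpace ℝ (Fin 3) | (inner ℝ x (v i) : ℝ) = 0})) =
      n ^ 2 - n + 2 := by
  classical
  have hv0 : ∀ i, v i ≠ 0 := by
    intro i h
    have := hv i
    rw [h, norm_zero] at this
    norm_num at this
  have hcount := count_dim3 n hn v hv0
    (fun i j hij c => pair_of_hgen hgen hij c)
    (fun i j k hij hik hjk x hxi hxj hxk =>
      triple_of_hgen hgen hij hik hjk hxi hxj hxk)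
  show Nat.card (ConnectedComponents ↥(Kset v)) = n ^ 2 - n + 2
  set P : (Fin n → Bool) → Prop :=
    fun s => ∃ x ∈ (⊤ : Submodule ℝ V3), realize v s x with hP
  have hpt : ∀ s : {s // P s}, ∃ z : ↥(Kset v), realize v s.1 (z : V3) := by
    rintro ⟨s, hs⟩
    obtain ⟨x, -, hre⟩ := hs
    have hxne : x ≠ 0 := realize_nonzero hre ⟨0, hn⟩
    have hz : realize v s (‖x‖⁻¹ • x) :=
      realize_smul hre (inv_pos.2 (norm_pos_iff.2 hxne))
    refine ⟨⟨‖x‖⁻¹ • x, (mem_Kset v).2 ⟨?_, fun i => realize_ne_zero hz i⟩⟩, hz⟩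
    rw [mem_sphere_zero_iff_norm]
    exact norm_smul_inv_norm (𝕜 := ℝ) hxne
  choose pt hptre using hpt
  set φ : {s // P s} → ConnectedComponents ↥(Kset v) :=
    fun s => ConnectedComponents.mk (pt s) with hφ
  have hsgnpt : ∀ s : {s // P s}, sgn v (pt s) = s.1 :=
    fun s => (realize_eq_decide (hptre s)).symm
  have hbij : Function.Bijective φ := by
    constructor
    · rintro s₁ s₂ h
      rw [hφ] at h
      rw [ConnectedComponents.coe_eq_coe] at h
      have hmem : pt s₂ ∈ connectedComponent (pt s₁) := by
        rw [h]
        exact mem_connectedComponent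
      have := sgn_eq_of_mem_component v hmem
      apply Subtype.ext
      rw [← hsgnpt s₁, ← hsgnpt s₂, this]
    · intro c
      obtain ⟨z, rfl⟩ := ConnectedComponents.surjective_coe c
      have hzre : realize v (sgn v z) (z : V3) := realize_sgn v z
      have hPs : P (sgn v z) := ⟨(z : V3), trivial, hzre⟩
      refine ⟨⟨sgn v z, hPs⟩, ?_⟩
      show ConnectedComponents.mk (pt ⟨sgn v z, hPs⟩) = ConnectedComponents.mk z
      rw [ConnectedComponents.coe_eq_coe]
      apply connectedComponent_eq
      exact same_component_of_sgn v hn (hsgnpt ⟨sgn v z, hPs⟩)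
  have hcardeq := Nat.card_eq_of_bijective φ hbij
  rw [← hcardeq, Nat.card_eq_fintype_card, Fintype.card_subtype]
  rw [N] at hcount
  convert hcount using 2
end

section
/- Let d be an integer with 3 ≤ d ≤ 6, let h be a real number with 0 < h < π/2, and let v_1, …, v_d be unit vectors in ℝ^d. Suppose that the d congruent zones Z(v_1,h), …, Z(v_d,h) cover S^{d-1}, i.e. S^{d-1} = ⋃_{i=1}^d Z(v_i,h), and that every point of S^{d-1} belongs to the interior of at most d − 1 of these zones. Then the d zones are pairwise orthogonal, i.e. ⟨v_i, v_j⟩ = 0 for all i ≠ j. -/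
open Metric Real

/-- Conjecture 1, second part, for `3 ≤ d ≤ 6`. If `d` congruent zones
of half-width `h` cover `S^{d-1}` with `3 ≤ d ≤ 6`, and every point of `S^{d-1}` belongs
to the interior of at most `d - 1` of the zones, then the zones are pairwise orthogonal. -/
theorem d_zones_cover_pairwise_orthogonal (d : ℕ) (hd3 : 3 ≤ d) (hd6 : d ≤ 6)
    (h : ℝ) (hh0 : 0 < h) (hhπ : h < π / 2)
    (v : Fin d → EuclideanSpace ℝ (Fin d)) (hv : ∀ i, ‖v i‖ = 1)
    (hcover : sphere (0 : EuclideanSpace ℝ (Fin d)) 1 =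
      ⋃ i, {x ∈ sphere (0 : EuclideanSpace ℝ (Fin d)) 1 |
        |(inner ℝ x (v i) : ℝ)| ≤ Real.sin h})
    (hmult : ∀ x ∈ sphere (0 : EuclideanSpace ℝ (Fin d)) 1,
      {i : Fin d | |(inner ℝ x (v i) : ℝ)| < Real.sin h}.ncard ≤ d - 1) :
    ∀ i j, i ≠ j → (inner ℝ (v i) (v j) : ℝ) = 0 := by
  classical
  have hsin : 0 < Real.sin h :=
    Real.sin_pos_of_pos_of_lt_pi hh0 (by linarith [Real.pi_pos])
  -- from hmult: every unit vector is outside some zone's interior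
  have hmax : ∀ x ∈ sphere (0 : EuclideanSpace ℝ (Fin d)) 1, ∃ i, Real.sin h ≤ |(inner ℝ x (v i) : ℝ)| := by
    intro x hx
    by_contra hc
    push_neg at hc
    have hset : {i : Fin d | |(inner ℝ x (v i) : ℝ)| < Real.sin h} = Set.univ := by
      ext i; simpa using hc i
    have hm := hmult x hx
    rw [hset, Set.ncard_univ] at hm
    simp at hm
    omega
  -- from hcover: every unit vector is in some zone
  have hmin : ∀ x ∈ sphere (0 : EuclideanSpace ℝ (Fin d)) 1, ∃ i, |(inner ℝ x (v i) : ℝ)| ≤ Real.sin h := by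
    intro x hx
    have hx' : x ∈ ⋃ i, {x ∈ sphere (0 : EuclideanSpace ℝ (Fin d)) 1 | |(inner ℝ x (v i) : ℝ)| ≤ Real.sin h} := by
      rw [← hcover]; exact hx
    rw [Set.mem_iUnion] at hx'
    obtain ⟨i, hi⟩ := hx'
    exact ⟨i, hi.2⟩
  -- the v i span
  have hspan : ⊤ ≤ Submodule.span ℝ (Set.range v) := by
    by_contra hne
    have hbot : (Submodule.span ℝ (Set.range v))ᗮ ≠ ⊥ := fun hb =>
      hne (Submodule.orthogonal_eq_bot_iff.mp hb).ge
    obtain ⟨x, hxmem, hx0⟩ := Submodule.exists_mem_ne_zero_of_ne_bot hbot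
    have hxn : 0 < ‖x‖ := norm_pos_iff.mpr hx0
    set y : EuclideanSpace ℝ (Fin d) := ‖x‖⁻¹ • x with hy
    have hysph : y ∈ sphere (0 : EuclideanSpace ℝ (Fin d)) 1 := by
      simp [hy, mem_sphere_zero_iff_norm, norm_smul, abs_of_pos (inv_pos.mpr hxn),
        inv_mul_cancel₀ hxn.ne']
    have hinner : ∀ i, (inner ℝ y (v i) : ℝ) = 0 := by
      intro i
      have h0 : (inner ℝ (v i) x : ℝ) = 0 :=
        hxmem (v i) (Submodule.subset_span (Set.mem_range_self i))
      rw [hy, real_inner_smul_left, real_inner_comm, h0, mul_zero]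
    obtain ⟨i, hi⟩ := hmax y hysph
    rw [hinner i] at hi
    simp at hi
    exact absurd hi hsin.not_ge
  -- a basis with coe = v
  have hcard : Fintype.card (Fin d) = Module.finrank ℝ (EuclideanSpace ℝ (Fin d)) := by
    simp [finrank_euclideanSpace_fin]
  let B : Module.Basis (Fin d) ℝ (EuclideanSpace ℝ (Fin d)) := basisOfTopLeSpanOfCardEqFinrank v hspan hcard
  have hB : ⇑B = v := coe_basisOfTopLeSpanOfCardEqFinrank v hspan hcard
  -- dual basis vectors
  let w : Fin d → EuclideanSpace ℝ (Fin d) := fun j =>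
    (InnerProductSpace.toDual ℝ (EuclideanSpace ℝ (Fin d))).symm (LinearMap.toContinuousLinearMap (B.coord j))
  have hw : ∀ j (z : EuclideanSpace ℝ (Fin d)), (inner ℝ (w j) z : ℝ) = B.coord j z := by
    intro j z
    simp [w, InnerProductSpace.toDual_symm_apply]
  have hwv : ∀ j i, (inner ℝ (w j) (v i) : ℝ) = if i = j then 1 else 0 := by
    intro j i
    rw [hw j (v i), ← hB]
    simp [Module.Basis.coord_apply, Module.Basis.repr_self, Finsupp.single_apply]
  -- key: every signed sum of dual vectors has norm (sin h)⁻¹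
  have key : ∀ ε : Fin d → ℝ, (∀ l, ε l = 1 ∨ ε l = -1) →
      ‖∑ l, ε l • w l‖ = (Real.sin h)⁻¹ := by
    intro ε hε
    set y : EuclideanSpace ℝ (Fin d) := ∑ l, ε l • w l with hy
    have hyi : ∀ i, (inner ℝ y (v i) : ℝ) = ε i := by
      intro i
      rw [hy, sum_inner]
      have : ∀ l, (inner ℝ (ε l • w l) (v i) : ℝ) = if i = l then ε l else 0 := by
        intro l
        rw [real_inner_smul_left, hwv l i]
        by_cases hli : i = l <;> simp [hli]
      rw [Finset.sum_congr rfl fun l _ => this l]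
      simp
    have i0 : Fin d := ⟨0, by omega⟩
    have hy0 : y ≠ 0 := by
      intro h0
      have := hyi i0
      rw [h0] at this
      simp at this
      rcases hε i0 with he | he <;> rw [he] at this <;> norm_num at this
    have hyn : 0 < ‖y‖ := norm_pos_iff.mpr hy0
    set x : EuclideanSpace ℝ (Fin d) := ‖y‖⁻¹ • y with hx
    have hxsph : x ∈ sphere (0 : EuclideanSpace ℝ (Fin d)) 1 := by
      simp [hx, mem_sphere_zero_iff_norm, norm_smul, abs_of_pos (inv_pos.mpr hyn),
        inv_mul_cancel₀ hyn.ne']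
    have hxi : ∀ i, |(inner ℝ x (v i) : ℝ)| = ‖y‖⁻¹ := by
      intro i
      rw [hx, real_inner_smul_left, hyi i, abs_mul, abs_of_pos (inv_pos.mpr hyn)]
      rcases hε i with he | he <;> rw [he] <;> norm_num
    obtain ⟨i1, hi1⟩ := hmin x hxsph
    obtain ⟨i2, hi2⟩ := hmax x hxsph
    rw [hxi i1] at hi1
    rw [hxi i2] at hi2
    have : ‖y‖⁻¹ = Real.sin h := le_antisymm hi1 hi2
    rw [← this, inv_inv]
  -- the w's are pairwise orthogonal
  have worth : ∀ j k, j ≠ k → (inner ℝ (w j) (w k) : ℝ) = 0 := by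
    intro j k hjk
    set S : EuclideanSpace ℝ (Fin d) := ∑ l, w l with hS
    set r : ℝ := (Real.sin h)⁻¹ with hr
    have e1 : ‖S‖ = r := by
      have := key (fun _ => 1) (fun l => Or.inl rfl)
      simpa [hS] using this
    have hsum : ∀ p q : Fin d, p ≠ q →
        (∑ l, (if l = p then (-1 : ℝ) else 1) • w l) = S - (2 : ℝ) • w p := by
      intro p q hpq
      have hfun : ∀ l, (if l = p then (-1 : ℝ) else 1) • w l
          = w l - (if l = p then ((2 : ℝ) • w p) else 0) := by
        intro l
        by_cases hl : l = p
        · subst hl; simp; module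
        · simp [hl]
      rw [Finset.sum_congr rfl fun l _ => hfun l, Finset.sum_sub_distrib]
      simp [hS]
    have e2 : ‖S - (2 : ℝ) • w j‖ = r := by
      rw [← hsum j k hjk]
      exact key _ (fun l => by by_cases hl : l = j <;> simp [hl])
    have e3 : ‖S - (2 : ℝ) • w k‖ = r := by
      rw [← hsum k j (Ne.symm hjk)]
      exact key _ (fun l => by by_cases hl : l = k <;> simp [hl])
    have hsum2 : (∑ l, (if l = j then (-1 : ℝ) else if l = k then (-1 : ℝ) else 1) • w l)
        = S - (2 : ℝ) • w j - (2 : ℝ) • w k := by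
      have hfun : ∀ l, (if l = j then (-1 : ℝ) else if l = k then (-1 : ℝ) else 1) • w l
          = w l - (if l = j then ((2 : ℝ) • w j) else 0)
              - (if l = k then ((2 : ℝ) • w k) else 0) := by
        intro l
        by_cases hl : l = j
        · subst hl; simp [hjk]; module
        · by_cases hl2 : l = k
          · subst hl2; simp [hl]; module
          · simp [hl, hl2]
      rw [Finset.sum_congr rfl fun l _ => hfun l, Finset.sum_sub_distrib,
        Finset.sum_sub_distrib]
      simp [hS]
    have e4 : ‖S - (2 : ℝ) • w j - (2 : ℝ) • w k‖ = r := by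
      rw [← hsum2]
      refine key _ (fun l => ?_)
      by_cases hl : l = j
      · simp [hl]
      · by_cases hl2 : l = k <;> simp [hl, hl2]
    -- now expand the norms
    have q1 : ‖S - (2 : ℝ) • w j‖ ^ 2
        = ‖S‖ ^ 2 - 2 * (inner ℝ S ((2:ℝ) • w j) : ℝ) + ‖(2:ℝ) • w j‖ ^ 2 :=
      norm_sub_sq_real S ((2:ℝ) • w j)
    have q2 : ‖(S - (2 : ℝ) • w k) - (2 : ℝ) • w j‖ ^ 2
        = ‖S - (2:ℝ) • w k‖ ^ 2 - 2 * (inner ℝ (S - (2:ℝ) • w k) ((2:ℝ) • w j) : ℝ)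
          + ‖(2:ℝ) • w j‖ ^ 2 :=
      norm_sub_sq_real (S - (2:ℝ) • w k) ((2:ℝ) • w j)
    have he4' : ‖(S - (2 : ℝ) • w k) - (2 : ℝ) • w j‖ = r := by
      have : S - (2 : ℝ) • w k - (2 : ℝ) • w j = S - (2 : ℝ) • w j - (2 : ℝ) • w k := by
        abel
      rw [this]; exact e4
    rw [e1, e2] at q1
    rw [e3, he4'] at q2
    have hq1 : (inner ℝ S ((2:ℝ) • w j) : ℝ) = (‖(2:ℝ) • w j‖ ^ 2) / 2 := by linarith
    have hq2 : (inner ℝ (S - (2:ℝ) • w k) ((2:ℝ) • w j) : ℝ) = (‖(2:ℝ) • w j‖ ^ 2) / 2 := by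
      linarith
    have hsub : (inner ℝ (S - (2:ℝ) • w k) ((2:ℝ) • w j) : ℝ)
        = (inner ℝ S ((2:ℝ) • w j) : ℝ) - 2 * (inner ℝ (w k) ((2:ℝ) • w j) : ℝ) := by
      rw [inner_sub_left, real_inner_smul_left]
    have : (inner ℝ (w k) ((2:ℝ) • w j) : ℝ) = 0 := by
      rw [hsub, hq1] at hq2
      linarith
    rw [real_inner_smul_right] at this
    rw [real_inner_comm]
    linarith
  -- each v i is a multiple of w i
  have hwne : ∀ i, ‖w i‖ ≠ 0 := by
    intro i hz
    have h1 : (inner ℝ (w i) (v i) : ℝ) = 1 := by rw [hwv i i]; simp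
    have : w i = 0 := norm_eq_zero.mp hz
    rw [this] at h1
    simp at h1
  have hvw : ∀ i, v i = (‖w i‖ ^ 2)⁻¹ • w i := by
    intro i
    have hz : ∀ k, B.coord k (v i - (‖w i‖ ^ 2)⁻¹ • w i) = 0 := by
      intro k
      rw [← hw k]
      rw [inner_sub_right, real_inner_smul_right]
      rcases eq_or_ne k i with rfl | hki
      · rw [hwv k k, real_inner_self_eq_norm_sq]
        simp [inv_mul_cancel₀ (pow_ne_zero 2 (hwne k))]
      · rw [hwv k i, worth k i hki]
        simp [Ne.symm hki]
    have := B.forall_coord_eq_zero_iff.mp hz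
    rw [sub_eq_zero] at this
    exact this
  intro i j hij
  rw [hvw i, hvw j, real_inner_smul_left, real_inner_smul_right, worth i j hij]
  ring
end

section
/- For each n ∈ {4, 5} there exist a real number h with 0 < h < π/2 and unit vectors v_1, …, v_n ∈ ℝ³ such that the n congruent zones Z(v_1,h), …, Z(v_n,h) cover S², i.e. S² = ⋃_{i=1}^n Z(v_i,h), and no point of S² belongs to more than 3 of these zones. -/
set_option maxHeartbeats 1600000

open Metric Real

section ZoneAux

private lemma abs_le_of_sq_le' (d s : ℝ) (hs : 0 ≤ s) (h : d^2 ≤ s^2) : |d| ≤ s := by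
  nlinarith [sq_abs d, abs_nonneg d]

private lemma sq_lt_of_abs_gt' (d s : ℝ) (hs : 0 ≤ s) (h : s < |d|) : s^2 < d^2 := by
  nlinarith [sq_abs d, abs_nonneg d]

private lemma sq_le_of_abs_le' (d s : ℝ) (h : |d| ≤ s) : d^2 ≤ s^2 := by
  nlinarith [sq_abs d, abs_nonneg d]

noncomputable def vec3 (p q r : ℝ) : EuclideanSpace ℝ (Fin 3) :=
  (WithLp.equiv 2 (Fin 3 → ℝ)).symm ![p, q, r]

lemma vec3_norm (p q r : ℝ) (h : p^2+q^2+r^2 = 1) : ‖vec3 p q r‖ = 1 := by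
  rw [EuclideanSpace.norm_eq]
  have hc : ∀ i : Fin 3, ‖vec3 p q r i‖ ^ 2 = (![p,q,r] i)^2 := by
    intro i; rw [Real.norm_eq_abs, sq_abs]; rfl
  rw [Fin.sum_univ_three]
  simp only [hc]
  rw [show (![p,q,r] 0)^2 + (![p,q,r] 1)^2 + (![p,q,r] 2)^2 = 1 by
    simp [Matrix.cons_val_zero, Matrix.cons_val_one]; linarith [h]]
  exact Real.sqrt_one

lemma vec3_inner (x : EuclideanSpace ℝ (Fin 3)) (p q r : ℝ) :
    (inner ℝ x (vec3 p q r) : ℝ) = x 0 * p + x 1 * q + x 2 * r := by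
  rw [PiLp.inner_apply, Fin.sum_univ_three]
  simp [vec3, RCLike.inner_apply, conj_trivial]
  ring

lemma sphere_coords (x : EuclideanSpace ℝ (Fin 3))
    (hx : x ∈ sphere (0 : EuclideanSpace ℝ (Fin 3)) 1) :
    (x 0)^2 + (x 1)^2 + (x 2)^2 = 1 := by
  rw [mem_sphere_zero_iff_norm, EuclideanSpace.norm_eq, Fin.sum_univ_three] at hx
  have h0 : ‖x 0‖^2 + ‖x 1‖^2 + ‖x 2‖^2 = 1 := by
    have hnn : (0:ℝ) ≤ ‖x 0‖^2 + ‖x 1‖^2 + ‖x 2‖^2 := by positivity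
    nlinarith [Real.sq_sqrt hnn, hx]
  simpa [Real.norm_eq_abs, sq_abs] using h0

lemma ncard_le_three_fin4 (P : Fin 4 → Prop) (i : Fin 4) (hi : ¬ P i) :
    {k | P k}.ncard ≤ 3 := by
  classical
  have hsub : {k | P k} ⊆ ((Finset.univ.erase i : Finset (Fin 4)) : Set (Fin 4)) := by
    intro k hk
    have hPk : P k := hk
    simp only [Finset.coe_erase, Set.mem_diff, Finset.coe_univ, Set.mem_univ, true_and,
      Set.mem_singleton_iff]
    exact fun e => hi (e ▸ hPk)
  calc {k | P k}.ncard ≤ _ := Set.ncard_le_ncard hsub (Set.toFinite _)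
    _ = (Finset.univ.erase i : Finset (Fin 4)).card := Set.ncard_coe_finset _
    _ = 3 := by rw [Finset.card_erase_of_mem (Finset.mem_univ i)]; rfl

lemma ncard_le_three_fin5 (P : Fin 5 → Prop) (i j : Fin 5) (hij : i ≠ j)
    (hi : ¬ P i) (hj : ¬ P j) : {k | P k}.ncard ≤ 3 := by
  classical
  have hjmem : j ∈ Finset.univ.erase i := Finset.mem_erase.2 ⟨Ne.symm hij, Finset.mem_univ j⟩
  have hsub : {k | P k} ⊆ (((Finset.univ.erase i).erase j : Finset (Fin 5)) : Set (Fin 5)) := by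
    intro k hk
    have hPk : P k := hk
    simp only [Finset.coe_erase, Set.mem_diff, Finset.coe_univ, Set.mem_univ, true_and,
      Set.mem_singleton_iff]
    exact ⟨fun e => hi (e ▸ hPk), fun e => hj (e ▸ hPk)⟩
  calc {k | P k}.ncard ≤ _ := Set.ncard_le_ncard hsub (Set.toFinite _)
    _ = ((Finset.univ.erase i).erase j).card := Set.ncard_coe_finset _
    _ = 3 := by
        rw [Finset.card_erase_of_mem hjmem, Finset.card_erase_of_mem (Finset.mem_univ i)]
        rfl

/- core polynomial facts -/

private lemma aux4cov (a b c : ℝ) (h : a^2+b^2+c^2 = 1) (ha : 0 ≤ a) (hb : 0 ≤ b)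
    (h1 : 1/4 < a^2) (h3 : (289:ℝ)/4 < (15*b-8*a)^2) (h4 : 1/4 < c^2) : False := by
  have ha5 : 1/2 < a := by nlinarith
  have hb34 : b ≤ 3/4 := by nlinarith
  nlinarith [mul_nonneg (by linarith : (0:ℝ) ≤ a - 1/2) hb,
             mul_nonneg (by linarith : (0:ℝ) ≤ 3/4 - b) hb]

private lemma cov4 (a b c : ℝ) (h : a^2+b^2+c^2 = 1)
    (h1 : 1/4 < a^2) (h2 : (289:ℝ)/4 < (8*a+15*b)^2)
    (h3 : (289:ℝ)/4 < (15*b-8*a)^2) (h4 : 1/4 < c^2) : False := by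
  rcases le_or_gt 0 a with ha | ha <;> rcases le_or_gt 0 b with hb | hb
  · exact aux4cov a b c h ha hb h1 h3 h4
  · refine aux4cov a (-b) c (by linarith [neg_sq b]) ha (by linarith) h1 ?_ h4
    calc (289:ℝ)/4 < (8*a+15*b)^2 := h2
    _ = (15*(-b)-8*a)^2 := by ring
  · refine aux4cov (-a) b c (by linarith [neg_sq a]) (by linarith) hb
      (by linarith [neg_sq a]) ?_ h4
    calc (289:ℝ)/4 < (8*a+15*b)^2 := h2
    _ = (15*b-8*(-a))^2 := by ring
  · refine aux4cov (-a) (-b) c (by linarith [neg_sq a, neg_sq b]) (by linarith) (by linarith)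
      (by linarith [neg_sq a]) ?_ h4
    calc (289:ℝ)/4 < (15*b-8*a)^2 := h3
    _ = (15*(-b)-8*(-a))^2 := by ring

private lemma m4 (a b c : ℝ) (h : a^2+b^2+c^2 = 1)
    (h1 : a^2 ≤ 1/4) (h2 : (8*a+15*b)^2 ≤ (289:ℝ)/4)
    (h3 : (15*b-8*a)^2 ≤ (289:ℝ)/4) (h4 : c^2 ≤ 1/4) : False := by
  nlinarith [sq_nonneg a, sq_nonneg b]

private lemma aux5cov (a b c : ℝ) (h : a^2+b^2+c^2 = 1) (ha : 0 ≤ a) (hb : 0 ≤ b) (hc : 0 ≤ c)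
    (h1 : (121:ℝ)/625 < a^2) (h3 : (34969:ℝ)/625 < (15*b-8*a)^2)
    (h5 : (20449:ℝ)/625 < (12*c-5*a)^2) : False := by
  have ha44 : 11/25 < a := by nlinarith
  have ha1 : a ≤ 1 := by nlinarith [sq_nonneg b, sq_nonneg c]
  have k1 : 12*c - 5*a < 143/25 := by
    rcases le_or_gt (15*b - 8*a) 0 with hw | hw
    · have h8a : 187/25 < 8*a - 15*b := by nlinarith [h3]
      have hA : 187/200 < a := by linarith [mul_nonneg (by norm_num : (0:ℝ) ≤ 15) hb]
      have hc2 : c^2 < 1 - (187/200)^2 := by nlinarith [sq_nonneg b]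
      have : c < 36/100 := by nlinarith
      linarith
    · have h15b : 187/25 < 15*b - 8*a := by nlinarith [h3]
      have hB : 11/15 < b := by linarith
      have hc2 : c^2 < 1 - 121/625 - 121/225 := by nlinarith
      have : c < 52/100 := by nlinarith
      linarith
  have k2 : 5*a - 12*c < 143/25 := by
    have : 12*c ≥ 0 := by linarith
    linarith
  nlinarith [mul_pos (show (0:ℝ) < 143/25 - (12*c-5*a) by linarith)
                     (show (0:ℝ) < 143/25 + (12*c-5*a) by linarith)]

private lemma cov5 (a b c : ℝ) (h : a^2+b^2+c^2 = 1)
    (h1 : (121:ℝ)/625 < a^2) (h2 : (34969:ℝ)/625 < (8*a+15*b)^2)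
    (h3 : (34969:ℝ)/625 < (15*b-8*a)^2)
    (h4 : (20449:ℝ)/625 < (5*a+12*c)^2) (h5 : (20449:ℝ)/625 < (12*c-5*a)^2) : False := by
  rcases le_or_gt 0 a with ha | ha <;> rcases le_or_gt 0 b with hb | hb <;>
    rcases le_or_gt 0 c with hc | hc
  · exact aux5cov a b c h ha hb hc h1 h3 h5
  · refine aux5cov a b (-c) (by linarith [neg_sq c]) ha hb (by linarith) h1 h3 ?_
    calc (20449:ℝ)/625 < (5*a+12*c)^2 := h4
    _ = (12*(-c)-5*a)^2 := by ring
  · refine aux5cov a (-b) c (by linarith [neg_sq b]) ha (by linarith) hc h1 ?_ h5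
    calc (34969:ℝ)/625 < (8*a+15*b)^2 := h2
    _ = (15*(-b)-8*a)^2 := by ring
  · refine aux5cov a (-b) (-c) (by linarith [neg_sq b, neg_sq c]) ha (by linarith)
      (by linarith) h1 ?_ ?_
    · calc (34969:ℝ)/625 < (8*a+15*b)^2 := h2
      _ = (15*(-b)-8*a)^2 := by ring
    · calc (20449:ℝ)/625 < (5*a+12*c)^2 := h4
      _ = (12*(-c)-5*a)^2 := by ring
  · refine aux5cov (-a) b c (by linarith [neg_sq a]) (by linarith) hb hc
      (by linarith [neg_sq a]) ?_ ?_
    · calc (34969:ℝ)/625 < (8*a+15*b)^2 := h2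
      _ = (15*b-8*(-a))^2 := by ring
    · calc (20449:ℝ)/625 < (5*a+12*c)^2 := h4
      _ = (12*c-5*(-a))^2 := by ring
  · refine aux5cov (-a) b (-c) (by linarith [neg_sq a, neg_sq c]) (by linarith) hb
      (by linarith) (by linarith [neg_sq a]) ?_ ?_
    · calc (34969:ℝ)/625 < (8*a+15*b)^2 := h2
      _ = (15*b-8*(-a))^2 := by ring
    · calc (20449:ℝ)/625 < (12*c-5*a)^2 := h5
      _ = (12*(-c)-5*(-a))^2 := by ring
  · refine aux5cov (-a) (-b) c (by linarith [neg_sq a, neg_sq b]) (by linarith) (by linarith) hc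
      (by linarith [neg_sq a]) ?_ ?_
    · calc (34969:ℝ)/625 < (15*b-8*a)^2 := h3
      _ = (15*(-b)-8*(-a))^2 := by ring
    · calc (20449:ℝ)/625 < (5*a+12*c)^2 := h4
      _ = (12*c-5*(-a))^2 := by ring
  · refine aux5cov (-a) (-b) (-c) (by linarith [neg_sq a, neg_sq b, neg_sq c]) (by linarith)
      (by linarith) (by linarith) (by linarith [neg_sq a]) ?_ ?_
    · calc (34969:ℝ)/625 < (15*b-8*a)^2 := h3
      _ = (15*(-b)-8*(-a))^2 := by ring
    · calc (20449:ℝ)/625 < (12*c-5*a)^2 := h5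
      _ = (12*(-c)-5*(-a))^2 := by ring

private lemma q0123 (a b c : ℝ) (h : a^2+b^2+c^2 = 1)
    (h1 : a^2 ≤ (121:ℝ)/625) (h2 : (8*a+15*b)^2 ≤ (34969:ℝ)/625)
    (h3 : (15*b-8*a)^2 ≤ (34969:ℝ)/625) (h4 : (5*a+12*c)^2 ≤ (20449:ℝ)/625) : False := by
  have hb2 : b^2 ≤ 249/1000 := by linarith [h2, h3, sq_nonneg a]
  have hc2 : 5574/10000 ≤ c^2 := by linarith
  rcases le_or_gt 0 (a*c) with hac | hac
  · linarith [h4, hac, sq_nonneg a]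
  · have haa : -11/25 ≤ a ∧ a ≤ 11/25 := by constructor <;> nlinarith [h1]
    rcases le_or_gt 0 c with hc | hc
    · have hcl : 74/100 < c := by nlinarith
      nlinarith [mul_pos (show (0:ℝ) < 5*a+12*c - 668/100 by linarith [haa.1])
                         (show (0:ℝ) < 5*a+12*c + 668/100 by linarith [haa.1])]
    · have hcl : c < -74/100 := by nlinarith
      nlinarith [mul_pos (show (0:ℝ) < -(5*a+12*c) - 668/100 by linarith [haa.2])
                         (show (0:ℝ) < -(5*a+12*c) + 668/100 by linarith [haa.2])]

private lemma q0134 (a b c : ℝ) (h : a^2+b^2+c^2 = 1)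
    (h1 : a^2 ≤ (121:ℝ)/625) (h2 : (8*a+15*b)^2 ≤ (34969:ℝ)/625)
    (h4 : (5*a+12*c)^2 ≤ (20449:ℝ)/625) (h5 : (12*c-5*a)^2 ≤ (20449:ℝ)/625) : False := by
  have hc2 : c^2 ≤ 228/1000 := by linarith [h4, h5, sq_nonneg a]
  have hb2 : 5784/10000 ≤ b^2 := by linarith
  rcases le_or_gt 0 (a*b) with hab | hab
  · linarith [h2, hab, sq_nonneg a]
  · have haa : -11/25 ≤ a ∧ a ≤ 11/25 := by constructor <;> nlinarith [h1]
    rcases le_or_gt 0 b with hb | hb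
    · have hbl : 76/100 < b := by nlinarith
      nlinarith [mul_pos (show (0:ℝ) < 8*a+15*b - 75/10 by linarith [haa.1])
                         (show (0:ℝ) < 8*a+15*b + 75/10 by linarith [haa.1])]
    · have hbl : b < -76/100 := by nlinarith
      nlinarith [mul_pos (show (0:ℝ) < -(8*a+15*b) - 75/10 by linarith [haa.2])
                         (show (0:ℝ) < -(8*a+15*b) + 75/10 by linarith [haa.2])]

private lemma q1234 (a b c : ℝ) (h : a^2+b^2+c^2 = 1)
    (h2 : (8*a+15*b)^2 ≤ (34969:ℝ)/625) (h3 : (15*b-8*a)^2 ≤ (34969:ℝ)/625)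
    (h4 : (5*a+12*c)^2 ≤ (20449:ℝ)/625) (h5 : (12*c-5*a)^2 ≤ (20449:ℝ)/625) : False := by
  linarith [h2, h3, h4, h5, sq_nonneg a, sq_nonneg b, sq_nonneg c]

private lemma two_failures {P0 P1 P2 P3 P4 : Prop}
    (nq1 : ¬(P0 ∧ P1 ∧ P2 ∧ P3)) (nq2 : ¬(P0 ∧ P1 ∧ P2 ∧ P4))
    (nq3 : ¬(P0 ∧ P1 ∧ P3 ∧ P4)) (nq4 : ¬(P0 ∧ P2 ∧ P3 ∧ P4))
    (nq5 : ¬(P1 ∧ P2 ∧ P3 ∧ P4)) :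
    (¬P0 ∧ ¬P1) ∨ (¬P0 ∧ ¬P2) ∨ (¬P0 ∧ ¬P3) ∨ (¬P0 ∧ ¬P4) ∨
    (¬P1 ∧ ¬P2) ∨ (¬P1 ∧ ¬P3) ∨ (¬P1 ∧ ¬P4) ∨
    (¬P2 ∧ ¬P3) ∨ (¬P2 ∧ ¬P4) ∨ (¬P3 ∧ ¬P4) := by tauto

private lemma one_failure {P0 P1 P2 P3 : Prop} (nq : ¬(P0 ∧ P1 ∧ P2 ∧ P3)) :
    ¬P0 ∨ ¬P1 ∨ ¬P2 ∨ ¬P3 := by tauto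

end ZoneAux

/-- For `n = 4` and `n = 5` one can cover `S²` with `n` congruent zones
such that no point of `S²` belongs to more than `3` of the zones. -/
theorem cover_S2_four_or_five_zones_multiplicity_three :
    ∀ n ∈ ({4, 5} : Set ℕ),
      ∃ h : ℝ, 0 < h ∧ h < π / 2 ∧
        ∃ v : Fin n → EuclideanSpace ℝ (Fin 3), (∀ i, ‖v i‖ = 1) ∧
          (sphere (0 : EuclideanSpace ℝ (Fin 3)) 1 =
            ⋃ i, {x ∈ sphere (0 : EuclideanSpace ℝ (Fin 3)) 1 |
              |(inner ℝ x (v i) : ℝ)| ≤ Real.sin h}) ∧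
          ∀ x ∈ sphere (0 : EuclideanSpace ℝ (Fin 3)) 1,
            {i : Fin n | |(inner ℝ x (v i) : ℝ)| ≤ Real.sin h}.ncard ≤ 3 := by
  intro n hn
  have hn' : n = 4 ∨ n = 5 := by simpa using hn
  rcases hn' with rfl | rfl
  · -- n = 4
    refine ⟨π/6, by positivity, by linarith [Real.pi_pos], ?_⟩
    have hsin : Real.sin (π/6) = 1/2 := Real.sin_pi_div_six
    set v : Fin 4 → EuclideanSpace ℝ (Fin 3) :=
      ![vec3 1 0 0, vec3 (8/17) (15/17) 0, vec3 (-8/17) (15/17) 0, vec3 0 0 1] with hv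
    have e0 : ∀ x : EuclideanSpace ℝ (Fin 3), (inner ℝ x (v 0) : ℝ) = x 0 := by
      intro x; rw [show v 0 = vec3 1 0 0 from rfl, vec3_inner]; ring
    have e1 : ∀ x : EuclideanSpace ℝ (Fin 3),
        (inner ℝ x (v 1) : ℝ) = (8*(x 0)+15*(x 1))/17 := by
      intro x; rw [show v 1 = vec3 (8/17) (15/17) 0 from rfl, vec3_inner]; ring
    have e2 : ∀ x : EuclideanSpace ℝ (Fin 3),
        (inner ℝ x (v 2) : ℝ) = (15*(x 1)-8*(x 0))/17 := by
      intro x; rw [show v 2 = vec3 (-8/17) (15/17) 0 from rfl, vec3_inner]; ring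
    have e3 : ∀ x : EuclideanSpace ℝ (Fin 3), (inner ℝ x (v 3) : ℝ) = x 2 := by
      intro x; rw [show v 3 = vec3 0 0 1 from rfl, vec3_inner]; ring
    refine ⟨v, ?_, ?_, ?_⟩
    · intro i; fin_cases i <;> · apply vec3_norm; norm_num
    · ext y
      simp only [Set.mem_iUnion, Set.mem_setOf_eq, hsin]
      constructor
      · intro hy
        by_contra hcon
        push_neg at hcon
        have hsum := sphere_coords y hy
        have g0 := hcon 0 hy
        have g1 := hcon 1 hy
        have g2 := hcon 2 hy
        have g3 := hcon 3 hy
        rw [e0] at g0; rw [e1] at g1; rw [e2] at g2; rw [e3] at g3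
        have k0 : 1/4 < (y 0)^2 := by
          have := sq_lt_of_abs_gt' _ _ (by norm_num : (0:ℝ) ≤ 1/2) g0; nlinarith
        have k1 : (289:ℝ)/4 < (8*(y 0)+15*(y 1))^2 := by
          have := sq_lt_of_abs_gt' _ _ (by norm_num : (0:ℝ) ≤ 1/2) g1; nlinarith
        have k2 : (289:ℝ)/4 < (15*(y 1)-8*(y 0))^2 := by
          have := sq_lt_of_abs_gt' _ _ (by norm_num : (0:ℝ) ≤ 1/2) g2; nlinarith
        have k3 : 1/4 < (y 2)^2 := by
          have := sq_lt_of_abs_gt' _ _ (by norm_num : (0:ℝ) ≤ 1/2) g3; nlinarith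
        exact cov4 (y 0) (y 1) (y 2) hsum k0 k1 k2 k3
      · rintro ⟨i, hy, -⟩; exact hy
    · intro x hx
      have hsum := sphere_coords x hx
      have key : ¬(|(inner ℝ x (v 0) : ℝ)| ≤ Real.sin (π/6) ∧
          |(inner ℝ x (v 1) : ℝ)| ≤ Real.sin (π/6) ∧
          |(inner ℝ x (v 2) : ℝ)| ≤ Real.sin (π/6) ∧
          |(inner ℝ x (v 3) : ℝ)| ≤ Real.sin (π/6)) := by
        rintro ⟨p0, p1, p2, p3⟩
        rw [hsin, e0] at p0; rw [hsin, e1] at p1; rw [hsin, e2] at p2; rw [hsin, e3] at p3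
        have q0 : (x 0)^2 ≤ 1/4 := by have := sq_le_of_abs_le' _ _ p0; nlinarith
        have q1 : (8*(x 0)+15*(x 1))^2 ≤ (289:ℝ)/4 := by
          have := sq_le_of_abs_le' _ _ p1; nlinarith
        have q2 : (15*(x 1)-8*(x 0))^2 ≤ (289:ℝ)/4 := by
          have := sq_le_of_abs_le' _ _ p2; nlinarith
        have q3 : (x 2)^2 ≤ 1/4 := by have := sq_le_of_abs_le' _ _ p3; nlinarith
        exact m4 (x 0) (x 1) (x 2) hsum q0 q1 q2 q3
      have disj := one_failure key
      rcases disj with hbad | hbad | hbad | hbad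
      · exact ncard_le_three_fin4 _ 0 hbad
      · exact ncard_le_three_fin4 _ 1 hbad
      · exact ncard_le_three_fin4 _ 2 hbad
      · exact ncard_le_three_fin4 _ 3 hbad
  · -- n = 5
    refine ⟨Real.arcsin (11/25), Real.arcsin_pos.mpr (by norm_num),
      Real.arcsin_lt_pi_div_two.mpr (by norm_num), ?_⟩
    have hsin : Real.sin (Real.arcsin (11/25)) = 11/25 :=
      Real.sin_arcsin (by norm_num) (by norm_num)
    set v : Fin 5 → EuclideanSpace ℝ (Fin 3) :=
      ![vec3 1 0 0, vec3 (8/17) (15/17) 0, vec3 (-8/17) (15/17) 0,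
        vec3 (5/13) 0 (12/13), vec3 (-5/13) 0 (12/13)] with hv
    have e0 : ∀ x : EuclideanSpace ℝ (Fin 3), (inner ℝ x (v 0) : ℝ) = x 0 := by
      intro x; rw [show v 0 = vec3 1 0 0 from rfl, vec3_inner]; ring
    have e1 : ∀ x : EuclideanSpace ℝ (Fin 3),
        (inner ℝ x (v 1) : ℝ) = (8*(x 0)+15*(x 1))/17 := by
      intro x; rw [show v 1 = vec3 (8/17) (15/17) 0 from rfl, vec3_inner]; ring
    have e2 : ∀ x : EuclideanSpace ℝ (Fin 3),
        (inner ℝ x (v 2) : ℝ) = (15*(x 1)-8*(x 0))/17 := by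
      intro x; rw [show v 2 = vec3 (-8/17) (15/17) 0 from rfl, vec3_inner]; ring
    have e3 : ∀ x : EuclideanSpace ℝ (Fin 3),
        (inner ℝ x (v 3) : ℝ) = (5*(x 0)+12*(x 2))/13 := by
      intro x; rw [show v 3 = vec3 (5/13) 0 (12/13) from rfl, vec3_inner]; ring
    have e4 : ∀ x : EuclideanSpace ℝ (Fin 3),
        (inner ℝ x (v 4) : ℝ) = (12*(x 2)-5*(x 0))/13 := by
      intro x; rw [show v 4 = vec3 (-5/13) 0 (12/13) from rfl, vec3_inner]; ring
    refine ⟨v, ?_, ?_, ?_⟩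
    · intro i; fin_cases i <;> · apply vec3_norm; norm_num
    · ext y
      simp only [Set.mem_iUnion, Set.mem_setOf_eq, hsin]
      constructor
      · intro hy
        by_contra hcon
        push_neg at hcon
        have hsum := sphere_coords y hy
        have g0 := hcon 0 hy
        have g1 := hcon 1 hy
        have g2 := hcon 2 hy
        have g3 := hcon 3 hy
        have g4 := hcon 4 hy
        rw [e0] at g0; rw [e1] at g1; rw [e2] at g2; rw [e3] at g3; rw [e4] at g4
        have k0 : (121:ℝ)/625 < (y 0)^2 := by
          have := sq_lt_of_abs_gt' _ _ (by norm_num : (0:ℝ) ≤ 11/25) g0; nlinarith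
        have k1 : (34969:ℝ)/625 < (8*(y 0)+15*(y 1))^2 := by
          have := sq_lt_of_abs_gt' _ _ (by norm_num : (0:ℝ) ≤ 11/25) g1; nlinarith
        have k2 : (34969:ℝ)/625 < (15*(y 1)-8*(y 0))^2 := by
          have := sq_lt_of_abs_gt' _ _ (by norm_num : (0:ℝ) ≤ 11/25) g2; nlinarith
        have k3 : (20449:ℝ)/625 < (5*(y 0)+12*(y 2))^2 := by
          have := sq_lt_of_abs_gt' _ _ (by norm_num : (0:ℝ) ≤ 11/25) g3; nlinarith
        have k4 : (20449:ℝ)/625 < (12*(y 2)-5*(y 0))^2 := by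
          have := sq_lt_of_abs_gt' _ _ (by norm_num : (0:ℝ) ≤ 11/25) g4; nlinarith
        exact cov5 (y 0) (y 1) (y 2) hsum k0 k1 k2 k3 k4
      · rintro ⟨i, hy, -⟩; exact hy
    · intro x hx
      have hsum := sphere_coords x hx
      set a := x 0 with ha
      set b := x 1 with hb
      set c := x 2 with hc
      -- squared forms of zone membership
      have c0 : |(inner ℝ x (v 0) : ℝ)| ≤ Real.sin (Real.arcsin (11/25)) →
          a^2 ≤ (121:ℝ)/625 := by
        intro p; rw [hsin, e0] at p; have := sq_le_of_abs_le' _ _ p; nlinarith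
      have c1 : |(inner ℝ x (v 1) : ℝ)| ≤ Real.sin (Real.arcsin (11/25)) →
          (8*a+15*b)^2 ≤ (34969:ℝ)/625 := by
        intro p; rw [hsin, e1] at p; have := sq_le_of_abs_le' _ _ p; nlinarith
      have c2 : |(inner ℝ x (v 2) : ℝ)| ≤ Real.sin (Real.arcsin (11/25)) →
          (15*b-8*a)^2 ≤ (34969:ℝ)/625 := by
        intro p; rw [hsin, e2] at p; have := sq_le_of_abs_le' _ _ p; nlinarith
      have c3 : |(inner ℝ x (v 3) : ℝ)| ≤ Real.sin (Real.arcsin (11/25)) →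
          (5*a+12*c)^2 ≤ (20449:ℝ)/625 := by
        intro p; rw [hsin, e3] at p; have := sq_le_of_abs_le' _ _ p; nlinarith
      have c4 : |(inner ℝ x (v 4) : ℝ)| ≤ Real.sin (Real.arcsin (11/25)) →
          (12*c-5*a)^2 ≤ (20449:ℝ)/625 := by
        intro p; rw [hsin, e4] at p; have := sq_le_of_abs_le' _ _ p; nlinarith
      set P : Fin 5 → Prop :=
        fun i => |(inner ℝ x (v i) : ℝ)| ≤ Real.sin (Real.arcsin (11/25)) with hP
      have nq1 : ¬(P 0 ∧ P 1 ∧ P 2 ∧ P 3) := by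
        rintro ⟨p0, p1, p2, p3⟩
        exact q0123 a b c hsum (c0 p0) (c1 p1) (c2 p2) (c3 p3)
      have nq2 : ¬(P 0 ∧ P 1 ∧ P 2 ∧ P 4) := by
        rintro ⟨p0, p1, p2, p4⟩
        refine q0123 a b (-c) (by linarith [neg_sq c]) (c0 p0) (c1 p1) (c2 p2) ?_
        calc (5*a+12*(-c))^2 = (12*c-5*a)^2 := by ring
        _ ≤ (20449:ℝ)/625 := c4 p4
      have nq3 : ¬(P 0 ∧ P 1 ∧ P 3 ∧ P 4) := by
        rintro ⟨p0, p1, p3, p4⟩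
        exact q0134 a b c hsum (c0 p0) (c1 p1) (c3 p3) (c4 p4)
      have nq4 : ¬(P 0 ∧ P 2 ∧ P 3 ∧ P 4) := by
        rintro ⟨p0, p2, p3, p4⟩
        refine q0134 a (-b) c (by linarith [neg_sq b]) (c0 p0) ?_ (c3 p3) (c4 p4)
        calc (8*a+15*(-b))^2 = (15*b-8*a)^2 := by ring
        _ ≤ (34969:ℝ)/625 := c2 p2
      have nq5 : ¬(P 1 ∧ P 2 ∧ P 3 ∧ P 4) := by
        rintro ⟨p1, p2, p3, p4⟩
        exact q1234 a b c hsum (c1 p1) (c2 p2) (c3 p3) (c4 p4)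
      have pairs := two_failures nq1 nq2 nq3 nq4 nq5
      rcases pairs with ⟨u1, u2⟩ | ⟨u1, u2⟩ | ⟨u1, u2⟩ | ⟨u1, u2⟩ | ⟨u1, u2⟩ |
        ⟨u1, u2⟩ | ⟨u1, u2⟩ | ⟨u1, u2⟩ | ⟨u1, u2⟩ | ⟨u1, u2⟩
      · exact ncard_le_three_fin5 P 0 1 (by decide) u1 u2
      · exact ncard_le_three_fin5 P 0 2 (by decide) u1 u2
      · exact ncard_le_three_fin5 P 0 3 (by decide) u1 u2
      · exact ncard_le_three_fin5 P 0 4 (by decide) u1 u2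
      · exact ncard_le_three_fin5 P 1 2 (by decide) u1 u2
      · exact ncard_le_three_fin5 P 1 3 (by decide) u1 u2
      · exact ncard_le_three_fin5 P 1 4 (by decide) u1 u2
      · exact ncard_le_three_fin5 P 2 3 (by decide) u1 u2
      · exact ncard_le_three_fin5 P 2 4 (by decide) u1 u2
      · exact ncard_le_three_fin5 P 3 4 (by decide) u1 u2
end

section
/- Let n ≥ 3 be an integer, let h be a real number with 0 < h < π/2, and let v_1, …, v_n be unit vectors in ℝ³. Suppose that the n congruent zones Z(v_1,h), …, Z(v_n,h) cover S², i.e. S² = ⋃_{i=1}^n Z(v_i,h). Then there exists a point of S² that belongs to at least 3 of these zones. -/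
open Metric Real

local notation "⟪" x ", " y "⟫" => @inner ℝ _ _ x y

lemma zone_exists_cos_sin (x y : ℝ) (hxy : x ^ 2 + y ^ 2 = 1) :
    ∃ φ : ℝ, Real.cos φ = x ∧ Real.sin φ = y := by
  have hx1 : -1 ≤ x := by nlinarith
  have hx2 : x ≤ 1 := by nlinarith
  rcases le_or_gt 0 y with hy | hy
  · refine ⟨Real.arccos x, Real.cos_arccos hx1 hx2, ?_⟩
    rw [Real.sin_arccos, show 1 - x ^ 2 = y ^ 2 by linarith, Real.sqrt_sq hy]
  · refine ⟨-Real.arccos x, by rw [Real.cos_neg, Real.cos_arccos hx1 hx2], ?_⟩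
    rw [Real.sin_neg, Real.sin_arccos, show 1 - x ^ 2 = y ^ 2 by linarith,
      Real.sqrt_sq_eq_abs, abs_of_neg hy, neg_neg]

lemma zone_onb (u : EuclideanSpace ℝ (Fin 3)) (hu : ‖u‖ = 1) :
    ∃ e1 e2 : EuclideanSpace ℝ (Fin 3), ‖e1‖ = 1 ∧ ‖e2‖ = 1 ∧
      ⟪u, e1⟫ = 0 ∧ ⟪u, e2⟫ = 0 ∧ ⟪e1, e2⟫ = 0 ∧
      ∀ w : EuclideanSpace ℝ (Fin 3),
        ⟪u, w⟫ ^ 2 + ⟪e1, w⟫ ^ 2 + ⟪e2, w⟫ ^ 2 = ‖w‖ ^ 2 := by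
  have hcard : Module.finrank ℝ (EuclideanSpace ℝ (Fin 3)) = Fintype.card (Fin 3) := by
    simp [finrank_euclideanSpace]
  have horth : Orthonormal ℝ (({0} : Set (Fin 3)).restrict (fun _ => u)) := by
    constructor
    · intro i; exact hu
    · intro i j hij
      exfalso
      exact hij (Subtype.ext (by
        have hi := i.2; have hj := j.2
        simp only [Set.mem_singleton_iff] at hi hj
        rw [hi, hj]))
  obtain ⟨b, hb⟩ := horth.exists_orthonormalBasis_extension_of_card_eq hcard
  have hb0 : b 0 = u := hb 0 rfl
  have hnorm : ∀ i, ‖b i‖ = 1 := fun i => b.orthonormal.1 i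
  have hinner : ∀ i j, i ≠ j → ⟪b i, b j⟫ = (0 : ℝ) := fun i j hij => b.orthonormal.2 hij
  refine ⟨b 1, b 2, hnorm 1, hnorm 2, by rw [← hb0]; exact hinner 0 1 (by decide),
    by rw [← hb0]; exact hinner 0 2 (by decide), hinner 1 2 (by decide), ?_⟩
  intro w
  have hpars := b.sum_inner_mul_inner w w
  rw [Fin.sum_univ_three] at hpars
  have hww : ⟪w, w⟫ = ‖w‖ ^ 2 := real_inner_self_eq_norm_sq w
  have hc : ∀ i, ⟪w, b i⟫ = ⟪b i, w⟫ := fun i => real_inner_comm (b i) w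
  rw [hc 0, hc 1, hc 2, hww, hb0] at hpars
  nlinarith [hpars]

lemma zone_cap_ineq (h t K : ℝ) (hh0 : 0 < h) (hhπ : h < π / 2)
    (ht0 : 0 ≤ t) (ht1 : t < 1)
    (hstar : Real.sin h * t + Real.cos h * Real.sqrt (1 - t ^ 2) ≤ Real.sin h)
    (hK1 : K ≤ 1) (hKS : Real.sin h ≤ K) :
    K * t + Real.sqrt (1 - K ^ 2) * Real.sqrt (1 - t ^ 2) ≤ Real.sin h := by
  have hπ := Real.pi_pos
  have hS0 : 0 < Real.sin h := Real.sin_pos_of_pos_of_lt_pi hh0 (by linarith)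
  set θ := Real.arccos t with hθdef
  set β := Real.arccos K with hβdef
  have hθ0 : 0 < θ := Real.arccos_pos.2 ht1
  have hθhalf : θ ≤ π / 2 := Real.arccos_le_pi_div_two.2 ht0
  have hβ0 : 0 ≤ β := Real.arccos_nonneg K
  have hβπ : β ≤ π := Real.arccos_le_pi K
  have hcosθ : Real.cos θ = t := Real.cos_arccos (by linarith) ht1.le
  have hsinθ : Real.sin θ = Real.sqrt (1 - t ^ 2) := Real.sin_arccos t
  have hcosβ : Real.cos β = K := Real.cos_arccos (by linarith) hK1
  have hsinβ : Real.sin β = Real.sqrt (1 - K ^ 2) := Real.sin_arccos K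
  -- β ≤ π/2 - h
  have hβle : β ≤ π / 2 - h := by
    by_contra hc
    push_neg at hc
    have := Real.cos_lt_cos_of_nonneg_of_le_pi (by linarith : (0:ℝ) ≤ π / 2 - h) hβπ hc
    rw [hcosβ, Real.cos_pi_div_two_sub] at this
    linarith
  -- θ ≥ π - 2h
  have hθge : π - 2 * h ≤ θ := by
    have hsum : Real.sin (h + θ) ≤ Real.sin h := by
      rw [Real.sin_add, hcosθ, hsinθ]; exact hstar
    by_contra hc
    push_neg at hc
    rcases le_or_gt (h + θ) (π / 2) with hcase | hcase
    · have := Real.sin_lt_sin_of_lt_of_le_pi_div_two (by linarith : -(π/2) ≤ h)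
        hcase (by linarith : h < h + θ)
      linarith
    · have heq : Real.sin (h + θ) = Real.sin (π - (h + θ)) := (Real.sin_pi_sub _).symm
      have := Real.sin_lt_sin_of_lt_of_le_pi_div_two (by linarith : -(π/2) ≤ h)
        (by linarith : π - (h + θ) ≤ π / 2) (by linarith : h < π - (h + θ))
      rw [← heq] at this
      linarith
  -- conclude
  have hgoal : K * t + Real.sqrt (1 - K ^ 2) * Real.sqrt (1 - t ^ 2) = Real.cos (θ - β) := by
    rw [Real.cos_sub, hcosθ, hsinθ, hcosβ, hsinβ]; ring
  rw [hgoal]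
  have h1 : π / 2 - h ≤ θ - β := by linarith
  have h2 : θ - β ≤ π := by linarith
  have := Real.cos_le_cos_of_nonneg_of_le_pi (by linarith : (0:ℝ) ≤ π / 2 - h) h2 h1
  rwa [Real.cos_pi_div_two_sub] at this


set_option maxHeartbeats 2000000 in
/-- If `n ≥ 3` congruent zones of half-width `h` cover `S²`, then some
point of `S²` belongs to at least `3` of the zones. -/
theorem cover_S2_multiplicity_at_least_three (n : ℕ) (hn : 3 ≤ n)
    (h : ℝ) (hh0 : 0 < h) (hhπ : h < π / 2)
    (v : Fin n → EuclideanSpace ℝ (Fin 3)) (hv : ∀ i, ‖v i‖ = 1)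
    (hcover : sphere (0 : EuclideanSpace ℝ (Fin 3)) 1 =
      ⋃ i, {x ∈ sphere (0 : EuclideanSpace ℝ (Fin 3)) 1 |
        |(inner ℝ x (v i) : ℝ)| ≤ Real.sin h}) :
    ∃ p ∈ sphere (0 : EuclideanSpace ℝ (Fin 3)) 1,
      3 ≤ {i : Fin n | |(inner ℝ p (v i) : ℝ)| ≤ Real.sin h}.ncard := by
  by_contra hcon
  push_neg at hcon
  set S := Real.sin h with hSdef
  have hπ := Real.pi_pos
  have hS0 : 0 < S := Real.sin_pos_of_pos_of_lt_pi hh0 (by linarith)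
  have hCh : 0 < Real.cos h := Real.cos_pos_of_mem_Ioo ⟨by linarith, hhπ⟩
  -- multiplicity at most 2
  have hmult : ∀ x : EuclideanSpace ℝ (Fin 3), ‖x‖ = 1 → ∀ i j k : Fin n,
      i ≠ j → i ≠ k → j ≠ k →
      |⟪x, v i⟫| ≤ S → |⟪x, v j⟫| ≤ S → |⟪x, v k⟫| ≤ S → False := by
    intro x hx i j k hij hik hjk hi hj hk
    have hxm : x ∈ sphere (0 : EuclideanSpace ℝ (Fin 3)) 1 := by
      simpa [mem_sphere_zero_iff_norm] using hx
    have hlt := hcon x hxm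
    have hsub : ({i, j, k} : Set (Fin n)) ⊆ {m | |⟪x, v m⟫| ≤ S} := by
      intro y hy
      simp only [Set.mem_insert_iff, Set.mem_singleton_iff] at hy
      rcases hy with rfl | rfl | rfl <;> assumption
    have h3 : ({i, j, k} : Set (Fin n)).ncard = 3 := by
      rw [Set.ncard_insert_of_notMem (by simp [hij, hik]),
        Set.ncard_insert_of_notMem (by simp [hjk]), Set.ncard_singleton]
    have hle := Set.ncard_le_ncard hsub (Set.toFinite _)
    omega
  -- every unit vector lies in some zone
  have hzone : ∀ x : EuclideanSpace ℝ (Fin 3), ‖x‖ = 1 → ∃ m, |⟪x, v m⟫| ≤ S := by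
    intro x hx
    have hxm : x ∈ ⋃ i, {y ∈ sphere (0 : EuclideanSpace ℝ (Fin 3)) 1 |
        |(inner ℝ y (v i) : ℝ)| ≤ S} := by
      rw [← hcover]; simpa [mem_sphere_zero_iff_norm] using hx
    simp only [Set.mem_iUnion, Set.mem_setOf_eq] at hxm
    obtain ⟨m, _, hm⟩ := hxm
    exact ⟨m, hm⟩
  have hn0 : 0 < n := by omega
  set a : Fin n := ⟨0, hn0⟩ with hadef
  have hvaa : ⟪v a, v a⟫ = (1 : ℝ) := by
    rw [real_inner_self_eq_norm_sq, hv a]; norm_num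
  obtain ⟨e1, e2, he1, he2, hve1, hve2, he12, hpars⟩ := zone_onb (v a) (hv a)
  have hev1 : ⟪e1, v a⟫ = (0:ℝ) := by rw [real_inner_comm]; exact hve1
  have hev2 : ⟪e2, v a⟫ = (0:ℝ) := by rw [real_inner_comm]; exact hve2
  have he21 : ⟪e2, e1⟫ = (0:ℝ) := by rw [real_inner_comm]; exact he12
  have he11 : ⟪e1, e1⟫ = (1:ℝ) := by rw [real_inner_self_eq_norm_sq, he1]; norm_num
  have he22 : ⟪e2, e2⟫ = (1:ℝ) := by rw [real_inner_self_eq_norm_sq, he2]; norm_num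
  set X : ℝ → ℝ → EuclideanSpace ℝ (Fin 3) := fun β φ =>
    Real.cos β • v a + (Real.sin β * Real.cos φ) • e1 + (Real.sin β * Real.sin φ) • e2
    with hXdef
  have hXinner : ∀ β φ (w : EuclideanSpace ℝ (Fin 3)),
      ⟪X β φ, w⟫ = Real.cos β * ⟪v a, w⟫ + Real.sin β * Real.cos φ * ⟪e1, w⟫
        + Real.sin β * Real.sin φ * ⟪e2, w⟫ := by
    intro β φ w
    simp only [hXdef, inner_add_left, real_inner_smul_left]
  have hXa : ∀ β φ, ⟪X β φ, v a⟫ = Real.cos β := by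
    intro β φ; rw [hXinner, hvaa, hev1, hev2]; ring
  have hXnorm : ∀ β φ, ‖X β φ‖ = 1 := by
    intro β φ
    have h1 : ⟪v a, X β φ⟫ = Real.cos β := by
      rw [real_inner_comm]; exact hXa β φ
    have h2 : ⟪e1, X β φ⟫ = Real.sin β * Real.cos φ := by
      rw [real_inner_comm, hXinner, hve1, he11, he21]; ring
    have h3 : ⟪e2, X β φ⟫ = Real.sin β * Real.sin φ := by
      rw [real_inner_comm, hXinner, hve2, he12, he22]; ring
    have hp := hpars (X β φ)
    rw [h1, h2, h3] at hp
    have hsq : ‖X β φ‖ ^ 2 = 1 := by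
      rw [← hp]
      linear_combination Real.sin_sq_add_cos_sq β + Real.sin β ^ 2 * Real.sin_sq_add_cos_sq φ
    rw [← Real.sqrt_sq (norm_nonneg (X β φ)), hsq, Real.sqrt_one]
  set ε : ℝ := π / 2 - h with hεdef
  have hε0 : 0 < ε := by rw [hεdef]; linarith only [hhπ]
  have hεle : ε ≤ π / 2 := by rw [hεdef]; linarith only [hh0]
  have hcosε : Real.cos ε = S := by rw [hεdef, Real.cos_pi_div_two_sub]
  have hsinε : Real.sin ε = Real.cos h := by rw [hεdef, Real.sin_pi_div_two_sub]
  -- any zone containing a point far from the equator of zone `a` has pole not parallel to `v a`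
  have htag : ∀ x : EuclideanSpace ℝ (Fin 3), ‖x‖ = 1 → S < |⟪x, v a⟫| →
      ∃ m, |⟪v a, v m⟫| < 1 ∧ |⟪x, v m⟫| ≤ S := by
    intro x hx hgt
    obtain ⟨m, hm⟩ := hzone x hx
    refine ⟨m, ?_, hm⟩
    have hle : |⟪v a, v m⟫| ≤ 1 := by
      have := abs_real_inner_le_norm (v a) (v m)
      rwa [hv a, hv m, one_mul] at this
    rcases hle.lt_or_eq with hlt | heq
    · exact hlt
    · exfalso
      have hpm : v m = v a ∨ v m = -v a := by
        rcases (abs_eq (by norm_num : (0:ℝ) ≤ 1)).mp heq with h1 | h1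
        · left
          have hiff := inner_eq_norm_mul_iff_real (x := v a) (y := v m)
          rw [hv a, hv m, one_mul, one_smul, one_smul] at hiff
          exact (hiff.mp h1).symm
        · right
          have hiff := inner_eq_norm_mul_iff_real (x := v a) (y := -(v m))
          rw [hv a, norm_neg, hv m, one_mul, one_smul, one_smul, inner_neg_right] at hiff
          have h2 : v a = -(v m) := hiff.mp (by rw [h1]; ring)
          rw [h2]; simp
      rcases hpm with h1 | h1
      · rw [h1] at hm; linarith only [hm, hgt]
      · rw [h1, inner_neg_right, abs_neg] at hm; linarith only [hm, hgt]
  -- closedness helper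
  have hZclosed : ∀ (P : Prop) (m : Fin n),
      IsClosed {x : EuclideanSpace ℝ (Fin 3) | P ∧ |⟪x, v m⟫| ≤ S} := by
    intro P m
    by_cases hP : P
    · simp only [hP, true_and]
      exact isClosed_le ((continuous_id.inner continuous_const).abs) continuous_const
    · have : {x : EuclideanSpace ℝ (Fin 3) | P ∧ |⟪x, v m⟫| ≤ S} = ∅ := by
        ext x; simp [hP]
      rw [this]; exact isClosed_empty
  -- Step A: each point of the boundary circle of zone `a` lies in another zone
  have hA : ∀ φ : ℝ, ∃ m, |⟪v a, v m⟫| < 1 ∧ |⟪X ε φ, v m⟫| ≤ S := by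
    intro φ
    have hFclosed : IsClosed (⋃ m, {x : EuclideanSpace ℝ (Fin 3) |
        |⟪v a, v m⟫| < 1 ∧ |⟪x, v m⟫| ≤ S}) :=
      isClosed_iUnion_of_finite (fun m => hZclosed _ m)
    have hmemF : ∀ β, 0 ≤ β → β < ε → X β φ ∈ ⋃ m, {x : EuclideanSpace ℝ (Fin 3) |
        |⟪v a, v m⟫| < 1 ∧ |⟪x, v m⟫| ≤ S} := by
      intro β hβ0 hβε
      have hcos : S < Real.cos β := by
        rw [← hcosε]
        exact Real.cos_lt_cos_of_nonneg_of_le_pi hβ0 (hεle.trans (by linarith [hπ])) hβε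
      obtain ⟨m, hm1, hm2⟩ := htag (X β φ) (hXnorm β φ)
        (by rw [hXa β φ, abs_of_pos (lt_trans hS0 hcos)]; exact hcos)
      exact Set.mem_iUnion.2 ⟨m, hm1, hm2⟩
    have hXcont : Continuous (fun β => X β φ) := by
      simp only [hXdef]
      exact ((Real.continuous_cos.smul continuous_const).add
        ((Real.continuous_sin.mul continuous_const).smul continuous_const)).add
        ((Real.continuous_sin.mul continuous_const).smul continuous_const)
    have hseq : Filter.Tendsto (fun m : ℕ => X (ε - ε * (1 / (m + 1))) φ)
        Filter.atTop (nhds (X ε φ)) := by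
      have h1 : Filter.Tendsto (fun m : ℕ => ε - ε * (1 / (m + 1)))
          Filter.atTop (nhds ε) := by
        have h2 := tendsto_one_div_add_atTop_nhds_zero_nat.const_mul ε
        simpa using tendsto_const_nhds.sub h2
      exact (hXcont.tendsto ε).comp h1
    have hXmem := hFclosed.mem_of_tendsto hseq (Filter.Eventually.of_forall (fun m => by
      apply hmemF
      · have h1 : (0:ℝ) < (m:ℝ) + 1 := by positivity
        have h2 : (1:ℝ) / ((m:ℝ) + 1) ≤ 1 := by
          rw [div_le_one h1]; linarith only [Nat.cast_nonneg (α := ℝ) m]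
        have h3 := mul_le_mul_of_nonneg_left h2 hε0.le
        linarith only [h3]
      · have h1 : (0:ℝ) < (m:ℝ) + 1 := by positivity
        have h2 : (0:ℝ) < 1 / ((m:ℝ) + 1) := by positivity
        have h3 := mul_pos hε0 h2
        linarith only [h3]))
    simpa [Set.mem_iUnion] using hXmem
  obtain ⟨j, hcj, hj0⟩ := hA 0
  have hja : j ≠ a := by
    intro hja; rw [hja, hvaa] at hcj; norm_num at hcj
  have hXaS : ∀ φ, |⟪X ε φ, v a⟫| ≤ S := by
    intro φ; rw [hXa ε φ, hcosε, abs_of_pos hS0]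
  -- Step B: the whole boundary circle lies in zone `j`
  have hXφcont : Continuous (fun φ => X ε φ) := by
    simp only [hXdef]
    fun_prop
  have hB : ∀ φ : ℝ, |⟪X ε φ, v j⟫| ≤ S := by
    set T : Set ℝ := {φ | |⟪X ε φ, v j⟫| ≤ S} with hTdef
    have hTclosed : IsClosed T :=
      isClosed_le ((hXφcont.inner continuous_const).abs) continuous_const
    have hTcc : Tᶜ = (fun φ => X ε φ) ⁻¹' (⋃ m, {x : EuclideanSpace ℝ (Fin 3) |
        (|⟪v a, v m⟫| < 1 ∧ m ≠ j) ∧ |⟪x, v m⟫| ≤ S}) := by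
      ext φ
      simp only [Set.mem_compl_iff, hTdef, Set.mem_setOf_eq, Set.mem_preimage,
        Set.mem_iUnion, not_le]
      constructor
      · intro hφ
        obtain ⟨m, hm1, hm2⟩ := hA φ
        have hmj : m ≠ j := by rintro rfl; linarith only [hφ, hm2]
        exact ⟨m, ⟨⟨hm1, hmj⟩, hm2⟩⟩
      · rintro ⟨m, ⟨hm1, hmj⟩, hm2⟩
        have hma : m ≠ a := by
          rintro rfl; rw [hvaa] at hm1; norm_num at hm1
        by_contra hc
        push_neg at hc
        exact hmult (X ε φ) (hXnorm ε φ) a j m hja.symm hma.symm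
          (fun hh => hmj hh.symm) (hXaS φ) hc hm2
    have hTopen : IsOpen T := by
      have : IsClosed Tᶜ := by
        rw [hTcc]
        exact (isClosed_iUnion_of_finite (fun m => hZclosed _ m)).preimage hXφcont
      simpa using this.isOpen_compl
    rcases isClopen_iff.mp ⟨hTclosed, hTopen⟩ with hempty | huniv
    · exfalso
      have : (0:ℝ) ∈ T := hj0
      rw [hempty] at this
      exact this
    · intro φ
      have : φ ∈ T := by rw [huniv]; trivial
      exact this
  -- Step C: quantitative consequence
  have hpq : ⟪v a, v j⟫ ^ 2 + ⟪e1, v j⟫ ^ 2 + ⟪e2, v j⟫ ^ 2 = 1 := by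
    have := hpars (v j); rw [hv j] at this; simpa using this
  have hXj : ∀ φ, ⟪X ε φ, v j⟫
      = S * ⟪v a, v j⟫ + Real.cos h * (Real.cos φ * ⟪e1, v j⟫ + Real.sin φ * ⟪e2, v j⟫) := by
    intro φ; rw [hXinner, hcosε, hsinε]; ring
  have hstar : S * |⟪v a, v j⟫| + Real.cos h * Real.sqrt (1 - ⟪v a, v j⟫ ^ 2) ≤ S := by
    have hr0 : (0:ℝ) ≤ Real.sqrt (⟪e1, v j⟫ ^ 2 + ⟪e2, v j⟫ ^ 2) := Real.sqrt_nonneg _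
    have hr2 : Real.sqrt (⟪e1, v j⟫ ^ 2 + ⟪e2, v j⟫ ^ 2) ^ 2
        = ⟪e1, v j⟫ ^ 2 + ⟪e2, v j⟫ ^ 2 := Real.sq_sqrt (by positivity)
    have hsqrt : Real.sqrt (1 - ⟪v a, v j⟫ ^ 2)
        = Real.sqrt (⟪e1, v j⟫ ^ 2 + ⟪e2, v j⟫ ^ 2) := by
      congr 1; linarith
    rw [hsqrt]
    set r := Real.sqrt (⟪e1, v j⟫ ^ 2 + ⟪e2, v j⟫ ^ 2) with hrdef
    rcases eq_or_lt_of_le hr0 with hr | hr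
    · have hrr : r ^ 2 = 0 := by rw [← hr]; norm_num
      have hp2 : (⟪e1, v j⟫ : ℝ) ^ 2 = 0 := by
        have := sq_nonneg (⟪e2, v j⟫ : ℝ)
        have := sq_nonneg (⟪e1, v j⟫ : ℝ)
        linarith only [hrr, hr2, sq_nonneg (⟪e2, v j⟫ : ℝ), sq_nonneg (⟪e1, v j⟫ : ℝ)]
      have hq2 : (⟪e2, v j⟫ : ℝ) ^ 2 = 0 := by
        linarith only [hrr, hr2, sq_nonneg (⟪e2, v j⟫ : ℝ), sq_nonneg (⟪e1, v j⟫ : ℝ)]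
      have hp0 : (⟪e1, v j⟫ : ℝ) = 0 := pow_eq_zero_iff (by norm_num) |>.mp hp2
      have hq0 : (⟪e2, v j⟫ : ℝ) = 0 := pow_eq_zero_iff (by norm_num) |>.mp hq2
      have hB0 := hB 0
      rw [hXj 0, hp0, hq0] at hB0
      simp only [mul_zero, zero_mul, add_zero, zero_add, mul_zero] at hB0
      rw [abs_mul, abs_of_pos hS0] at hB0
      rw [← hr, mul_zero, add_zero]
      exact hB0
    · have hrne : r ≠ 0 := ne_of_gt hr
      obtain ⟨φ0, hφc, hφs⟩ := zone_exists_cos_sin (⟪e1, v j⟫ / r) (⟪e2, v j⟫ / r)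
        (by rw [div_pow, div_pow, ← add_div, ← hr2, div_self (pow_ne_zero 2 hrne)])
      have hval : Real.cos φ0 * ⟪e1, v j⟫ + Real.sin φ0 * ⟪e2, v j⟫ = r := by
        rw [hφc, hφs, div_mul_eq_mul_div, div_mul_eq_mul_div, ← add_div,
          show (⟪e1, v j⟫ : ℝ) * ⟪e1, v j⟫ + (⟪e2, v j⟫ : ℝ) * ⟪e2, v j⟫ = r ^ 2 by
            rw [hr2]; ring,
          pow_two, mul_div_assoc, div_self hrne, mul_one]
      have h1 := hB φ0
      rw [hXj φ0, hval] at h1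
      have h2 := hB (φ0 + π)
      rw [hXj (φ0 + π), Real.cos_add_pi, Real.sin_add_pi] at h2
      rw [show -Real.cos φ0 * ⟪e1, v j⟫ + -Real.sin φ0 * ⟪e2, v j⟫
          = -(Real.cos φ0 * ⟪e1, v j⟫ + Real.sin φ0 * ⟪e2, v j⟫) by ring, hval] at h2
      rcases le_or_gt 0 (⟪v a, v j⟫ : ℝ) with hc0 | hc0
      · rw [abs_of_nonneg hc0]
        have h3 := le_abs_self (S * ⟪v a, v j⟫ + Real.cos h * r)
        linarith only [h1, h3]
      · rw [abs_of_neg hc0]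
        have h3 := neg_le_abs (S * ⟪v a, v j⟫ + Real.cos h * -r)
        linarith only [h2, h3]
  -- Step D: zones `a` and `j` together cover the sphere
  have hD : ∀ y : EuclideanSpace ℝ (Fin 3), ‖y‖ = 1 → S ≤ |⟪y, v a⟫| → |⟪y, v j⟫| ≤ S := by
    intro y hy hyS
    have hK'le : |⟪y, v a⟫| ≤ (1:ℝ) := by
      have := abs_real_inner_le_norm y (v a)
      rwa [hy, hv a, one_mul] at this
    have hyva : ⟪v a, y⟫ = (⟪y, v a⟫ : ℝ) := real_inner_comm y (v a)
    have hyy : ⟪y, y⟫ = (1:ℝ) := by rw [real_inner_self_eq_norm_sq, hy]; norm_num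
    have hvja : ⟪v j, v a⟫ = (⟪v a, v j⟫ : ℝ) := real_inner_comm (v a) (v j)
    have hvjj : ⟪v j, v j⟫ = (1:ℝ) := by rw [real_inner_self_eq_norm_sq, hv j]; norm_num
    have hyvj : ⟪y, v j⟫ = ⟪y, v a⟫ * ⟪v a, v j⟫
        + ⟪y - ⟪y, v a⟫ • v a, v j - ⟪v a, v j⟫ • v a⟫ := by
      simp only [inner_sub_left, inner_sub_right, real_inner_smul_left, real_inner_smul_right,
        hvaa, hyva, hvja]
      ring
    have hwnorm : ‖y - ⟪y, v a⟫ • v a‖ = Real.sqrt (1 - ⟪y, v a⟫ ^ 2) := by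
      rw [← Real.sqrt_sq (norm_nonneg _)]
      congr 1
      rw [← real_inner_self_eq_norm_sq]
      simp only [inner_sub_left, inner_sub_right, real_inner_smul_left, real_inner_smul_right,
        hvaa, hyva, hyy]
      ring
    have hznorm : ‖v j - ⟪v a, v j⟫ • v a‖ = Real.sqrt (1 - ⟪v a, v j⟫ ^ 2) := by
      rw [← Real.sqrt_sq (norm_nonneg _)]
      congr 1
      rw [← real_inner_self_eq_norm_sq]
      simp only [inner_sub_left, inner_sub_right, real_inner_smul_left, real_inner_smul_right,
        hvaa, hvja, hvjj]
      have hvaj : ⟪v a, v j⟫ = (⟪v a, v j⟫ : ℝ) := rfl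
      ring
    have hbound : |⟪y, v j⟫| ≤ |⟪y, v a⟫| * |⟪v a, v j⟫|
        + Real.sqrt (1 - ⟪y, v a⟫ ^ 2) * Real.sqrt (1 - ⟪v a, v j⟫ ^ 2) := by
      rw [hyvj]
      refine le_trans (abs_add_le _ _) ?_
      rw [abs_mul]
      have hcs := abs_real_inner_le_norm (y - ⟪y, v a⟫ • v a) (v j - ⟪v a, v j⟫ • v a)
      rw [hwnorm, hznorm] at hcs
      linarith only [hcs]
    have happly := zone_cap_ineq h |⟪v a, v j⟫| |⟪y, v a⟫| hh0 hhπ (abs_nonneg _) hcj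
      (by rw [sq_abs]; exact hstar) hK'le hyS
    rw [sq_abs, sq_abs] at happly
    linarith only [happly, hbound]
  -- Step E: a third zone gives a triple point
  obtain ⟨k, hka, hkj⟩ : ∃ k : Fin n, k ≠ a ∧ k ≠ j := by
    have hja' : j ∈ Finset.univ.erase a := Finset.mem_erase.2 ⟨hja, Finset.mem_univ j⟩
    have h1 : (((Finset.univ : Finset (Fin n)).erase a).erase j).Nonempty := by
      rw [← Finset.card_pos, Finset.card_erase_of_mem hja',
        Finset.card_erase_of_mem (Finset.mem_univ a), Finset.card_univ, Fintype.card_fin]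
      omega
    obtain ⟨k, hk⟩ := h1
    rw [Finset.mem_erase, Finset.mem_erase] at hk
    exact ⟨k, hk.2.1, hk.1⟩
  obtain ⟨f1, f2, hf1, hf2, hkf1, hkf2, hf12, hparsk⟩ := zone_onb (v k) (hv k)
  have hfv1 : ⟪f1, v k⟫ = (0:ℝ) := by rw [real_inner_comm]; exact hkf1
  have hfv2 : ⟪f2, v k⟫ = (0:ℝ) := by rw [real_inner_comm]; exact hkf2
  have hf21 : ⟪f2, f1⟫ = (0:ℝ) := by rw [real_inner_comm]; exact hf12
  have hf11 : ⟪f1, f1⟫ = (1:ℝ) := by rw [real_inner_self_eq_norm_sq, hf1]; norm_num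
  have hf22 : ⟪f2, f2⟫ = (1:ℝ) := by rw [real_inner_self_eq_norm_sq, hf2]; norm_num
  set Y : ℝ → EuclideanSpace ℝ (Fin 3) := fun ψ => Real.cos ψ • f1 + Real.sin ψ • f2
    with hYdef
  have hYinner : ∀ ψ (w : EuclideanSpace ℝ (Fin 3)),
      ⟪Y ψ, w⟫ = Real.cos ψ * ⟪f1, w⟫ + Real.sin ψ * ⟪f2, w⟫ := by
    intro ψ w
    simp only [hYdef, inner_add_left, real_inner_smul_left]
  have hYnorm : ∀ ψ, ‖Y ψ‖ = 1 := by
    intro ψ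
    have h1 : ⟪v k, Y ψ⟫ = (0:ℝ) := by
      rw [real_inner_comm, hYinner, hfv1, hfv2]; ring
    have h2 : ⟪f1, Y ψ⟫ = Real.cos ψ := by
      rw [real_inner_comm, hYinner, hf11, hf21]; ring
    have h3 : ⟪f2, Y ψ⟫ = Real.sin ψ := by
      rw [real_inner_comm, hYinner, hf12, hf22]; ring
    have hp := hparsk (Y ψ)
    rw [h1, h2, h3] at hp
    have hsq : ‖Y ψ‖ ^ 2 = 1 := by
      rw [← hp]
      linear_combination Real.sin_sq_add_cos_sq ψ
    rw [← Real.sqrt_sq (norm_nonneg (Y ψ)), hsq, Real.sqrt_one]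
  have hYk : ∀ ψ, |⟪Y ψ, v k⟫| ≤ S := by
    intro ψ
    rw [hYinner, hfv1, hfv2]
    simp only [mul_zero, add_zero, abs_zero]
    linarith only [hS0]
  have hYcont : Continuous Y := by
    simp only [hYdef]
    exact (Real.continuous_cos.smul continuous_const).add
      (Real.continuous_sin.smul continuous_const)
  have hzero : ∀ u : EuclideanSpace ℝ (Fin 3), ∃ ψ,
      Real.cos ψ * ⟪f1, u⟫ + Real.sin ψ * ⟪f2, u⟫ = 0 := by
    intro u
    rcases eq_or_lt_of_le (Real.sqrt_nonneg (⟪f1, u⟫ ^ 2 + ⟪f2, u⟫ ^ 2)) with h0 | h0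
    · have hs := Real.sq_sqrt (show (0:ℝ) ≤ ⟪f1, u⟫ ^ 2 + ⟪f2, u⟫ ^ 2 by positivity)
      have hss : Real.sqrt (⟪f1, u⟫ ^ 2 + ⟪f2, u⟫ ^ 2) ^ 2 = 0 := by rw [← h0]; norm_num
      have hp2 : (⟪f1, u⟫ : ℝ) ^ 2 = 0 := by
        linarith only [hs, hss, sq_nonneg (⟪f1, u⟫ : ℝ), sq_nonneg (⟪f2, u⟫ : ℝ)]
      have hq2 : (⟪f2, u⟫ : ℝ) ^ 2 = 0 := by
        linarith only [hs, hss, sq_nonneg (⟪f1, u⟫ : ℝ), sq_nonneg (⟪f2, u⟫ : ℝ)]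
      have hp0 : (⟪f1, u⟫ : ℝ) = 0 := pow_eq_zero_iff (by norm_num) |>.mp hp2
      have hq0 : (⟪f2, u⟫ : ℝ) = 0 := pow_eq_zero_iff (by norm_num) |>.mp hq2
      exact ⟨0, by rw [hp0, hq0]; ring⟩
    · have hs := Real.sq_sqrt (show (0:ℝ) ≤ ⟪f1, u⟫ ^ 2 + ⟪f2, u⟫ ^ 2 by positivity)
      obtain ⟨ψ, hc, hsn⟩ := zone_exists_cos_sin
        (⟪f2, u⟫ / Real.sqrt (⟪f1, u⟫ ^ 2 + ⟪f2, u⟫ ^ 2))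
        (-⟪f1, u⟫ / Real.sqrt (⟪f1, u⟫ ^ 2 + ⟪f2, u⟫ ^ 2))
        (by
          rw [div_pow, div_pow, ← add_div,
            show (⟪f2, u⟫ : ℝ) ^ 2 + (-⟪f1, u⟫ : ℝ) ^ 2
                = Real.sqrt (⟪f1, u⟫ ^ 2 + ⟪f2, u⟫ ^ 2) ^ 2 by rw [hs]; ring,
            div_self (pow_ne_zero 2 (ne_of_gt h0))])
      refine ⟨ψ, ?_⟩
      rw [hc, hsn, div_mul_eq_mul_div, div_mul_eq_mul_div, ← add_div,
        show (⟪f2, u⟫ : ℝ) * ⟪f1, u⟫ + (-⟪f1, u⟫ : ℝ) * ⟪f2, u⟫ = 0 by ring, zero_div]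
  have hT1closed : IsClosed {ψ : ℝ | |⟪Y ψ, v a⟫| ≤ S} :=
    isClosed_le ((hYcont.inner continuous_const).abs) continuous_const
  have hT2closed : IsClosed {ψ : ℝ | |⟪Y ψ, v j⟫| ≤ S} :=
    isClosed_le ((hYcont.inner continuous_const).abs) continuous_const
  have hcoverT : (Set.univ : Set ℝ) ⊆ {ψ : ℝ | |⟪Y ψ, v a⟫| ≤ S} ∪ {ψ : ℝ | |⟪Y ψ, v j⟫| ≤ S} := by
    intro ψ _
    rcases le_or_gt |⟪Y ψ, v a⟫| S with hle | hgt
    · exact Or.inl hle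
    · exact Or.inr (hD (Y ψ) (hYnorm ψ) hgt.le)
  have hT1ne : (Set.univ ∩ {ψ : ℝ | |⟪Y ψ, v a⟫| ≤ S}).Nonempty := by
    obtain ⟨ψ, hψ⟩ := hzero (v a)
    refine ⟨ψ, Set.mem_univ _, ?_⟩
    rw [Set.mem_setOf_eq, hYinner, hψ, abs_zero]
    linarith only [hS0]
  have hT2ne : (Set.univ ∩ {ψ : ℝ | |⟪Y ψ, v j⟫| ≤ S}).Nonempty := by
    obtain ⟨ψ, hψ⟩ := hzero (v j)
    refine ⟨ψ, Set.mem_univ _, ?_⟩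
    rw [Set.mem_setOf_eq, hYinner, hψ, abs_zero]
    linarith only [hS0]
  obtain ⟨ψ, -, hψ1, hψ2⟩ := isPreconnected_closed_iff.mp isPreconnected_univ
    _ _ hT1closed hT2closed hcoverT hT1ne hT2ne
  exact hmult (Y ψ) (hYnorm ψ) a j k hja.symm hka.symm hkj.symm hψ1 hψ2 (hYk ψ)
end
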